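/- arXiv:1602.07751 — 2 statements merged into one kernel-verified Lean document; each statement's English description precedes it below -/
import Mathlib

section
/- Let K ∈ 𝒜_ℒ⁰ and F ∈ 𝒜. If F ∩ K = K then Q^fd_*(F|K) = 1. If F ∩ K ≠ K, then Q^fd_*(F|K) = (∫ σ(F∩K|H_i) π(dH_i)) / π(K) when π(K) > 0, and Q^fd_*(F|K) = inf{σ(F|H_i) : H_i ∈ ℒ, H_i ⊆ K} when π(K) = 0. -/
open Set

open scoped Classical

variable {Ω : Type*}

/-- A field of sets on `Ω`: contains `univ`, closed under complements and finite unions. -/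
def IsSetField (𝒜 : Set (Set Ω)) : Prop :=
  Set.univ ∈ 𝒜 ∧ (∀ A ∈ 𝒜, Aᶜ ∈ 𝒜) ∧ ∀ A ∈ 𝒜, ∀ B ∈ 𝒜, A ∪ B ∈ 𝒜

/-- A finitely additive probability on the field `𝒜`. -/
def IsFAP (𝒜 : Set (Set Ω)) (P : Set Ω → ℝ) : Prop :=
  (∀ A ∈ 𝒜, 0 ≤ P A ∧ P A ≤ 1) ∧ P Set.univ = 1 ∧
    ∀ A ∈ 𝒜, ∀ B ∈ 𝒜, Disjoint A B → P (A ∪ B) = P A + P B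

/-- A partition of `Ω` into nonempty pairwise disjoint pieces. -/
def IsPartition {ι : Type*} (H : ι → Set Ω) : Prop :=
  (∀ i, (H i).Nonempty) ∧ (Pairwise fun i j => Disjoint (H i) (H j)) ∧
    (⋃ i, H i) = Set.univ

/-- A field containing every member of the partition `H` and whose members are
unions of members of the partition. -/
def IsFieldOver {ι : Type*} (H : ι → Set Ω) (𝒜L : Set (Set Ω)) : Prop :=
  IsSetField 𝒜L ∧ (∀ i, H i ∈ 𝒜L) ∧ ∀ A ∈ 𝒜L, ∃ S : Set ι, A = ⋃ i ∈ S, H i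

/-- A field containing `𝒜L ∪ 𝒜E` whose members are unions of the atoms `H i ∩ E j`. -/
def IsJointField {ι κ : Type*} (H : ι → Set Ω) (E : κ → Set Ω)
    (𝒜L 𝒜E 𝒜 : Set (Set Ω)) : Prop :=
  IsSetField 𝒜 ∧ 𝒜L ⊆ 𝒜 ∧ 𝒜E ⊆ 𝒜 ∧
    ∀ A ∈ 𝒜, ∃ S : Set (ι × κ), A = ⋃ p ∈ S, H p.1 ∩ E p.2

/-- A strategy on `𝒜 × ℒ`: each `σ (·|H i)` is a finitely additive probability on `𝒜`
equal to `1` on events implied by `H i`. -/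
def IsStrategy {ι : Type*} (𝒜 : Set (Set Ω)) (H : ι → Set Ω) (σ : Set Ω → ι → ℝ) : Prop :=
  ∀ i, IsFAP 𝒜 (fun F => σ F i) ∧ ∀ F ∈ 𝒜, H i ⊆ F → σ F i = 1

/-- A full conditional probability on the field `𝒜` (conditions (C1), (C2), (C3)). -/
def IsFCP (𝒜 : Set (Set Ω)) (P : Set Ω → Set Ω → ℝ) : Prop :=
  (∀ E ∈ 𝒜, ∀ K ∈ 𝒜, K.Nonempty → P E K = P (E ∩ K) K) ∧
  (∀ K ∈ 𝒜, K.Nonempty → IsFAP 𝒜 fun E => P E K) ∧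
  ∀ E ∈ 𝒜, ∀ F ∈ 𝒜, ∀ K ∈ 𝒜, K.Nonempty → (E ∩ K).Nonempty →
    P (E ∩ F) K = P E K * P F (E ∩ K)

/-- `P` extends the prior `π` on `𝒜L` and the strategy `σ` on `𝒜 × ℒ`. -/
def ExtendsPriorStrategy {ι : Type*} (𝒜 𝒜L : Set (Set Ω)) (H : ι → Set Ω)
    (π : Set Ω → ℝ) (σ : Set Ω → ι → ℝ) (P : Set Ω → Set Ω → ℝ) : Prop :=
  (∀ B ∈ 𝒜L, P B Set.univ = π B) ∧ ∀ F ∈ 𝒜, ∀ i, P F (H i) = σ F i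

/-- The set `𝒫` of full conditional probabilities on `𝒜` extending `{π, σ}`. -/
def FCPSet {ι : Type*} (𝒜 𝒜L : Set (Set Ω)) (H : ι → Set Ω)
    (π : Set Ω → ℝ) (σ : Set Ω → ι → ℝ) : Set (Set Ω → Set Ω → ℝ) :=
  {P | IsFCP 𝒜 P ∧ ExtendsPriorStrategy 𝒜 𝒜L H π σ P}

/-- Lower envelope of a set of conditional probabilities at `F|K`. -/
noncomputable def lowEnv (Ps : Set (Set Ω → Set Ω → ℝ)) (F K : Set Ω) : ℝ :=
  sInf ((fun P => P F K) '' Ps)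

/-- Upper envelope of a set of conditional probabilities at `F|K`. -/
noncomputable def upEnv (Ps : Set (Set Ω → Set Ω → ℝ)) (F K : Set Ω) : ℝ :=
  sSup ((fun P => P F K) '' Ps)

/-- A finite partition of `Ω` contained in `𝒜L`. -/
def IsFinPart (𝒜L : Set (Set Ω)) (T : Finset (Set Ω)) : Prop :=
  (↑T : Set (Set Ω)) ⊆ 𝒜L ∧ (∀ A ∈ T, (A : Set Ω).Nonempty) ∧
    (∀ A ∈ T, ∀ B ∈ T, A ≠ B → Disjoint A B) ∧ ⋃₀ (↑T : Set (Set Ω)) = Set.univ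

/-- Lower Stieltjes integral of `X : ℒ → ℝ` with respect to `μ` on `𝒜L`. -/
noncomputable def lowerSInt {ι : Type*} (H : ι → Set Ω) (𝒜L : Set (Set Ω))
    (X : ι → ℝ) (μ : Set Ω → ℝ) : ℝ :=
  sSup {x | ∃ T : Finset (Set Ω), IsFinPart 𝒜L T ∧
    x = ∑ A ∈ T, sInf {y | ∃ i, H i ⊆ A ∧ y = X i} * μ A}

/-- Upper Stieltjes integral of `X : ℒ → ℝ` with respect to `μ` on `𝒜L`. -/
noncomputable def upperSInt {ι : Type*} (H : ι → Set Ω) (𝒜L : Set (Set Ω))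
    (X : ι → ℝ) (μ : Set Ω → ℝ) : ℝ :=
  sInf {x | ∃ T : Finset (Set Ω), IsFinPart 𝒜L T ∧
    x = ∑ A ∈ T, sSup {y | ∃ i, H i ⊆ A ∧ y = X i} * μ A}

/-- `𝒜L`-continuity of a bounded function `X : ℒ → ℝ`. -/
def ALContinuous {ι : Type*} (H : ι → Set Ω) (𝒜L : Set (Set Ω)) (X : ι → ℝ) : Prop :=
  (∃ M : ℝ, ∀ i, |X i| ≤ M) ∧ ∀ t : ℝ, ∀ ε > (0 : ℝ), ∃ A ∈ 𝒜L,
    (⋃ i ∈ {i | t + ε ≤ X i}, H i) ⊆ A ∧ A ⊆ ⋃ i ∈ {i | t ≤ X i}, H i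

/-- Countable additivity of `P` on the field `𝒜`. -/
def CountablyAdditiveOn (𝒜 : Set (Set Ω)) (P : Set Ω → ℝ) : Prop :=
  ∀ A : ℕ → Set Ω, (∀ n, A n ∈ 𝒜) → (Pairwise fun m n => Disjoint (A m) (A n)) →
    (⋃ n, A n) ∈ 𝒜 → HasSum (fun n => P (A n)) (P (⋃ n, A n))

/-- A (normalized) capacity on the field `𝒜`. -/
def IsCapacity (𝒜 : Set (Set Ω)) (φ : Set Ω → ℝ) : Prop :=
  φ ∅ = 0 ∧ φ Set.univ = 1 ∧ (∀ A ∈ 𝒜, 0 ≤ φ A ∧ φ A ≤ 1) ∧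
    ∀ A ∈ 𝒜, ∀ B ∈ 𝒜, A ⊆ B → φ A ≤ φ B

/-- Total monotonicity of a capacity `φ` on the field `𝒜`. -/
def TotallyMonotone (𝒜 : Set (Set Ω)) (φ : Set Ω → ℝ) : Prop :=
  ∀ n : ℕ, 2 ≤ n → ∀ A : Fin n → Set Ω, (∀ i, A i ∈ 𝒜) →
    ∑ s ∈ Finset.univ.powerset.filter (fun s : Finset (Fin n) => s.Nonempty),
      (-1 : ℝ) ^ (s.card - 1) * φ (⋂ i ∈ s, A i) ≤ φ (⋃ i, A i)

/-- Restriction of a conditional probability to the domain `𝒜 × ℬ⁰`, viewed as a point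
of the product space `ℝ^(𝒜 × ℬ⁰)`. -/
def restrictPairs (𝒜 ℬ : Set (Set Ω)) (Q : Set Ω → Set Ω → ℝ)
    (p : {p : Set Ω × Set Ω // p.1 ∈ 𝒜 ∧ p.2 ∈ ℬ ∧ p.2.Nonempty}) : ℝ :=
  Q p.val.1 p.val.2

/-- Restriction of a set function to the domain `𝒜`, viewed as a point of `ℝ^𝒜`. -/
def restrictDom (𝒜 : Set (Set Ω)) (μ : Set Ω → ℝ) (A : {A : Set Ω // A ∈ 𝒜}) : ℝ :=
  μ A.val

/-- The field of all unions of members of the partition `H`, i.e. `⟨ℒ⟩*`. -/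
def unionsOf {ι : Type*} (H : ι → Set Ω) : Set (Set Ω) :=
  {A | ∃ S : Set ι, A = ⋃ i ∈ S, H i}

/-- The set `𝒬^fd` of fully ℒ-disintegrable full conditional probabilities on `𝒜`
extending `{π, σ}`. -/
def QfdSet {ι : Type*} (𝒜 𝒜L : Set (Set Ω)) (H : ι → Set Ω)
    (π : Set Ω → ℝ) (σ : Set Ω → ι → ℝ) : Set (Set Ω → Set Ω → ℝ) :=
  {Q | IsFCP 𝒜 Q ∧ ExtendsPriorStrategy 𝒜 𝒜L H π σ Q ∧
    ∀ F ∈ 𝒜, ∀ K ∈ 𝒜L, K.Nonempty →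
      Q F K = lowerSInt H 𝒜L (fun i => σ F i) fun B => Q B K}

/-- The set `𝒬^fsc` of fully strongly ℒ-conglomerable full conditional probabilities
on `𝒜` extending `{π, σ}`. -/
def QfscSet {ι : Type*} (𝒜 𝒜L : Set (Set Ω)) (H : ι → Set Ω)
    (π : Set Ω → ℝ) (σ : Set Ω → ι → ℝ) : Set (Set Ω → Set Ω → ℝ) :=
  {Q | IsFCP 𝒜 Q ∧ ExtendsPriorStrategy 𝒜 𝒜L H π σ Q ∧
    ∀ F ∈ 𝒜, ∀ K ∈ 𝒜L, K.Nonempty → ∀ B ∈ 𝒜L, B.Nonempty → B ⊆ K →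
      Q B K * sInf {x | ∃ i, H i ⊆ B ∧ x = σ F i} ≤ Q (F ∩ B) K ∧
      Q (F ∩ B) K ≤ Q B K * sSup {x | ∃ i, H i ⊆ B ∧ x = σ F i}}

/-- The set `𝒫^sc` of strongly ℒ-conglomerable joint probabilities consistent with `{π, σ}`. -/
def PscSet {ι : Type*} (𝒜 𝒜L : Set (Set Ω)) (H : ι → Set Ω)
    (π : Set Ω → ℝ) (σ : Set Ω → ι → ℝ) : Set (Set Ω → ℝ) :=
  {μ | (∃ P ∈ FCPSet 𝒜 𝒜L H π σ, μ = fun F => P F Set.univ) ∧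
    ∀ F ∈ 𝒜, ∀ B ∈ 𝒜L, B.Nonempty →
      π B * sInf {x | ∃ i, H i ⊆ B ∧ x = σ F i} ≤ μ (F ∩ B) ∧
      μ (F ∩ B) ≤ π B * sSup {x | ∃ i, H i ⊆ B ∧ x = σ F i}}

/-- The set `𝒫^fd` of fully ℒ-disintegrable conditional probabilities on `𝒜 × 𝒜L⁰`
extending `{π, σ}`. -/
def PfdSet {ι : Type*} (𝒜 𝒜L : Set (Set Ω)) (H : ι → Set Ω)
    (π : Set Ω → ℝ) (σ : Set Ω → ι → ℝ) : Set (Set Ω → Set Ω → ℝ) :=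
  {P | (∀ E ∈ 𝒜, ∀ K ∈ 𝒜L, K.Nonempty → P E K = P (E ∩ K) K) ∧
    (∀ K ∈ 𝒜L, K.Nonempty → IsFAP 𝒜 fun E => P E K) ∧
    (∀ E ∈ 𝒜, ∀ F ∈ 𝒜, ∀ K ∈ 𝒜L, K.Nonempty → E ∩ K ∈ 𝒜L → (E ∩ K).Nonempty →
      P (E ∩ F) K = P E K * P F (E ∩ K)) ∧
    (∀ B ∈ 𝒜L, P B Set.univ = π B) ∧ (∀ F ∈ 𝒜, ∀ i, P F (H i) = σ F i) ∧
    ∀ F ∈ 𝒜, ∀ K ∈ 𝒜L, K.Nonempty →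
      P F K = lowerSInt H 𝒜L (fun i => σ F i) fun B => P B K}

/-- The Choquet integral `C∫ X dφ = ∫₀¹ φ₊((X ≥ t)) dt` of a `[0,1]`-valued `X : ℒ → ℝ`
with respect to a capacity `φ` on `𝒜L`, where `φ₊` is the inner extension of `φ`. -/
noncomputable def choquetInt {ι : Type*} (H : ι → Set Ω) (𝒜L : Set (Set Ω))
    (X : ι → ℝ) (φ : Set Ω → ℝ) : ℝ :=
  ∫ t in (0 : ℝ)..(1 : ℝ),
    sSup {y | ∃ B ∈ 𝒜L, B ⊆ (⋃ i ∈ {i | t ≤ X i}, H i) ∧ y = φ B}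

namespace S7

variable {Ω ι : Type*}

/-! ### Field basics -/

theorem field_univ {𝒜 : Set (Set Ω)} (h : IsSetField 𝒜) : Set.univ ∈ 𝒜 := h.1

theorem field_compl {𝒜 : Set (Set Ω)} (h : IsSetField 𝒜) {A : Set Ω} (hA : A ∈ 𝒜) :
    Aᶜ ∈ 𝒜 := h.2.1 A hA

theorem field_union {𝒜 : Set (Set Ω)} (h : IsSetField 𝒜) {A B : Set Ω} (hA : A ∈ 𝒜)
    (hB : B ∈ 𝒜) : A ∪ B ∈ 𝒜 := h.2.2 A hA B hB

theorem field_empty {𝒜 : Set (Set Ω)} (h : IsSetField 𝒜) : (∅ : Set Ω) ∈ 𝒜 := by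
  have := field_compl h h.1; simpa using this

theorem field_inter {𝒜 : Set (Set Ω)} (h : IsSetField 𝒜) {A B : Set Ω} (hA : A ∈ 𝒜)
    (hB : B ∈ 𝒜) : A ∩ B ∈ 𝒜 := by
  have := field_compl h (field_union h (field_compl h hA) (field_compl h hB))
  simpa [Set.compl_union] using this

theorem field_diff {𝒜 : Set (Set Ω)} (h : IsSetField 𝒜) {A B : Set Ω} (hA : A ∈ 𝒜)
    (hB : B ∈ 𝒜) : A \ B ∈ 𝒜 := by
  rw [Set.diff_eq]; exact field_inter h hA (field_compl h hB)

/-! ### FAP basics -/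

theorem fap_nonneg {𝒜 : Set (Set Ω)} {μ : Set Ω → ℝ} (h : IsFAP 𝒜 μ) {A : Set Ω}
    (hA : A ∈ 𝒜) : 0 ≤ μ A := (h.1 A hA).1

theorem fap_le_one {𝒜 : Set (Set Ω)} {μ : Set Ω → ℝ} (h : IsFAP 𝒜 μ) {A : Set Ω}
    (hA : A ∈ 𝒜) : μ A ≤ 1 := (h.1 A hA).2

theorem fap_univ {𝒜 : Set (Set Ω)} {μ : Set Ω → ℝ} (h : IsFAP 𝒜 μ) : μ Set.univ = 1 :=
  h.2.1

theorem fap_union {𝒜 : Set (Set Ω)} {μ : Set Ω → ℝ} (h : IsFAP 𝒜 μ) {A B : Set Ω}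
    (hA : A ∈ 𝒜) (hB : B ∈ 𝒜) (hd : Disjoint A B) : μ (A ∪ B) = μ A + μ B :=
  h.2.2 A hA B hB hd

theorem fap_empty {𝒜 : Set (Set Ω)} {μ : Set Ω → ℝ} (hf : IsSetField 𝒜) (h : IsFAP 𝒜 μ) :
    μ ∅ = 0 := by
  have := fap_union h (field_empty hf) (field_empty hf) (by simp)
  simp only [Set.union_empty] at this; linarith

theorem fap_add_diff {𝒜 : Set (Set Ω)} {μ : Set Ω → ℝ} (hf : IsSetField 𝒜) (h : IsFAP 𝒜 μ)
    {A B : Set Ω} (hA : A ∈ 𝒜) (hB : B ∈ 𝒜) (hAB : A ⊆ B) : μ B = μ A + μ (B \ A) := by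
  have hd : Disjoint A (B \ A) := Set.disjoint_sdiff_right.mono_left le_rfl
  have := fap_union h hA (field_diff hf hB hA) hd
  rwa [Set.union_diff_cancel hAB] at this

theorem fap_mono {𝒜 : Set (Set Ω)} {μ : Set Ω → ℝ} (hf : IsSetField 𝒜) (h : IsFAP 𝒜 μ)
    {A B : Set Ω} (hA : A ∈ 𝒜) (hB : B ∈ 𝒜) (hAB : A ⊆ B) : μ A ≤ μ B := by
  have h1 := fap_add_diff hf h hA hB hAB
  have h2 := fap_nonneg h (field_diff hf hB hA)
  linarith

theorem fap_subset_zero {𝒜 : Set (Set Ω)} {μ : Set Ω → ℝ} (hf : IsSetField 𝒜)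
    (h : IsFAP 𝒜 μ) {A B : Set Ω} (hA : A ∈ 𝒜) (hB : B ∈ 𝒜) (hAB : A ⊆ B) (hB0 : μ B = 0) :
    μ A = 0 :=
  le_antisymm (hB0 ▸ fap_mono hf h hA hB hAB) (fap_nonneg h hA)

theorem finset_sUnion_mem {𝒜 : Set (Set Ω)} (hf : IsSetField 𝒜) (T : Finset (Set Ω))
    (hT : ↑T ⊆ 𝒜) : ⋃₀ (↑T : Set (Set Ω)) ∈ 𝒜 := by
  classical
  induction T using Finset.induction_on with
  | empty => simpa using field_empty hf
  | @insert A T' hAT ih =>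
    rw [Finset.coe_insert, Set.sUnion_insert]
    exact field_union hf (hT (by simp)) (ih fun B hB => hT (by simp [hB]))

theorem fap_finset_sum {𝒜 : Set (Set Ω)} {μ : Set Ω → ℝ} (hf : IsSetField 𝒜) (h : IsFAP 𝒜 μ)
    (T : Finset (Set Ω)) (hT : ↑T ⊆ 𝒜)
    (hd : ∀ A ∈ T, ∀ B ∈ T, A ≠ B → Disjoint A B) :
    μ (⋃₀ (↑T : Set (Set Ω))) = ∑ A ∈ T, μ A := by
  classical
  induction T using Finset.induction_on with
  | empty => simpa using fap_empty hf h
  | @insert A T' hAT ih =>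
    rw [Finset.coe_insert, Set.sUnion_insert, Finset.sum_insert hAT]
    have hT'sub : ↑T' ⊆ 𝒜 := fun B hB => hT (by simp [hB])
    have hdisj : Disjoint A (⋃₀ (↑T' : Set (Set Ω))) := by
      rw [Set.disjoint_sUnion_right]
      intro B hB
      have hBT' : B ∈ T' := hB
      exact hd A (Finset.mem_insert_self _ _) B (Finset.mem_insert_of_mem hBT')
        (by rintro rfl; exact hAT hBT')
    rw [fap_union h (hT (by simp)) (finset_sUnion_mem hf T' hT'sub) hdisj,
      ih hT'sub (fun A hA B hB hAB => hd A (by simp [hA]) B (by simp [hB]) hAB)]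

/-! ### Partition and 𝒜L basics -/

theorem piece_exists {H : ι → Set Ω} (hH : IsPartition H) (ω : Ω) : ∃ i, ω ∈ H i := by
  have : ω ∈ ⋃ i, H i := hH.2.2 ▸ Set.mem_univ ω
  simpa using this

theorem piece_unique {H : ι → Set Ω} (hH : IsPartition H) {ω : Ω} {i j : ι}
    (hi : ω ∈ H i) (hj : ω ∈ H j) : i = j := by
  by_contra hne
  exact Set.disjoint_iff.mp (hH.2.1 hne) ⟨hi, hj⟩ 

theorem piece_subset_unique {H : ι → Set Ω} (hH : IsPartition H) {i j : ι}
    (hij : H i ⊆ H j) : i = j := by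
  obtain ⟨ω, hω⟩ := hH.1 i
  exact piece_unique hH hω (hij hω)

theorem subset_biUnion_index {H : ι → Set Ω} (hH : IsPartition H) {S : Set ι} {j : ι}
    (h : H j ⊆ ⋃ i ∈ S, H i) : j ∈ S := by
  obtain ⟨ω, hω⟩ := hH.1 j
  obtain ⟨i, hiS, hωi⟩ := by simpa using h hω
  rwa [piece_unique hH hω hωi]

/-- every nonempty member of `𝒜L` contains a piece through each of its points -/
theorem AL_mem_piece_subset {H : ι → Set Ω} {𝒜L : Set (Set Ω)} (hH : IsPartition H)
    (h𝒜L : IsFieldOver H 𝒜L) {B : Set Ω} (hB : B ∈ 𝒜L) {ω : Ω} (hω : ω ∈ B) :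
    ∃ i, ω ∈ H i ∧ H i ⊆ B := by
  obtain ⟨S, rfl⟩ := h𝒜L.2.2 B hB
  obtain ⟨i, hiS, hωi⟩ := by simpa using hω
  exact ⟨i, hωi, Set.subset_biUnion_of_mem hiS⟩ 

theorem AL_exists_piece {H : ι → Set Ω} {𝒜L : Set (Set Ω)} (hH : IsPartition H)
    (h𝒜L : IsFieldOver H 𝒜L) {B : Set Ω} (hB : B ∈ 𝒜L) (hne : B.Nonempty) :
    ∃ i, H i ⊆ B := by
  obtain ⟨ω, hω⟩ := hne
  obtain ⟨i, _, h2⟩ := AL_mem_piece_subset hH h𝒜L hB hω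
  exact ⟨i, h2⟩ 

theorem AL_subset_or_disjoint {H : ι → Set Ω} {𝒜L : Set (Set Ω)} (hH : IsPartition H)
    (h𝒜L : IsFieldOver H 𝒜L) {B : Set Ω} (hB : B ∈ 𝒜L) (i : ι) :
    H i ⊆ B ∨ B ∩ H i = ∅ := by
  by_cases h : B ∩ H i = ∅
  · exact Or.inr h
  · left
    obtain ⟨ω, hωB, hωi⟩ := Set.nonempty_iff_ne_empty.mpr h
    obtain ⟨j, hωj, hjB⟩ := AL_mem_piece_subset hH h𝒜L hB hωB
    rwa [piece_unique hH hωi hωj]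

/-- a member of `𝒜L` is covered by the pieces it contains -/
theorem AL_cover {H : ι → Set Ω} {𝒜L : Set (Set Ω)} (hH : IsPartition H)
    (h𝒜L : IsFieldOver H 𝒜L) {B : Set Ω} (hB : B ∈ 𝒜L) {C : Set Ω}
    (h : ∀ i, H i ⊆ B → H i ⊆ C) : B ⊆ C := by
  intro ω hω
  obtain ⟨i, hωi, hiB⟩ := AL_mem_piece_subset hH h𝒜L hB hω
  exact h i hiB hωi

/-! ### Strategy basics -/

section Strategy

variable {𝒜 : Set (Set Ω)} {H : ι → Set Ω} {σ : Set Ω → ι → ℝ}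

theorem strat_fap (hσ : IsStrategy 𝒜 H σ) (i : ι) : IsFAP 𝒜 (fun F => σ F i) := (hσ i).1

theorem strat_one (hσ : IsStrategy 𝒜 H σ) {F : Set Ω} (hF : F ∈ 𝒜) {i : ι}
    (h : H i ⊆ F) : σ F i = 1 := (hσ i).2 F hF h

theorem strat_nonneg (hσ : IsStrategy 𝒜 H σ) {F : Set Ω} (hF : F ∈ 𝒜) (i : ι) :
    0 ≤ σ F i := fap_nonneg (strat_fap hσ i) hF

theorem strat_le_one (hσ : IsStrategy 𝒜 H σ) {F : Set Ω} (hF : F ∈ 𝒜) (i : ι) :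
    σ F i ≤ 1 := fap_le_one (strat_fap hσ i) hF

theorem strat_zero (h𝒜 : IsSetField 𝒜) (hσ : IsStrategy 𝒜 H σ) {F : Set Ω} (hF : F ∈ 𝒜)
    {i : ι} (h : F ∩ H i = ∅) : σ F i = 0 := by
  have hFc : H i ⊆ Fᶜ := by
    intro x hx
    intro hxF
    exact absurd (Set.mem_inter hxF hx) (by simp [h])
  have h1 : σ Fᶜ i = 1 := strat_one hσ (field_compl h𝒜 hF) hFc
  have h2 : σ (F ∪ Fᶜ) i = σ F i + σ Fᶜ i :=
    fap_union (strat_fap hσ i) hF (field_compl h𝒜 hF) disjoint_compl_right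
  rw [Set.union_compl_self] at h2
  have h3 : σ Set.univ i = 1 := fap_univ (strat_fap hσ i)
  linarith

theorem strat_inter_eq (h𝒜 : IsSetField 𝒜) (hσ : IsStrategy 𝒜 H σ) {F K : Set Ω}
    (hF : F ∈ 𝒜) (hK : K ∈ 𝒜) {i : ι} (h : H i ⊆ K) : σ (F ∩ K) i = σ F i := by
  have hsplit : (F ∩ K) ∪ (F ∩ Kᶜ) = F := Set.inter_union_compl F K
  have hd : Disjoint (F ∩ K) (F ∩ Kᶜ) :=
    Disjoint.mono Set.inter_subset_right Set.inter_subset_right disjoint_compl_right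
  have hu := fap_union (strat_fap hσ i) (field_inter h𝒜 hF hK)
      (field_inter h𝒜 hF (field_compl h𝒜 hK)) hd
  rw [hsplit] at hu
  have hz : σ (F ∩ Kᶜ) i = 0 := strat_zero h𝒜 hσ (field_inter h𝒜 hF (field_compl h𝒜 hK))
    (by rw [Set.eq_empty_iff_forall_notMem]; rintro x ⟨⟨_, hxKc⟩, hxi⟩; exact hxKc (h hxi))
  linarith

/-- on `𝒜L` the strategy is the indicator of containing the piece -/
theorem strat_indicator {𝒜L : Set (Set Ω)} (hH : IsPartition H) (h𝒜 : IsSetField 𝒜)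
    (h𝒜L : IsFieldOver H 𝒜L) (hsub : 𝒜L ⊆ 𝒜) (hσ : IsStrategy 𝒜 H σ) {B : Set Ω}
    (hB : B ∈ 𝒜L) (i : ι) : σ B i = if H i ⊆ B then 1 else 0 := by
  split_ifs with h
  · exact strat_one hσ (hsub hB) h
  · rcases AL_subset_or_disjoint hH h𝒜L hB i with h1 | h1
    · exact absurd h1 h
    · exact strat_zero h𝒜 hσ (hsub hB) h1

end Strategy

/-! ### infOn / supOn -/

noncomputable def infOn (H : ι → Set Ω) (X : ι → ℝ) (A : Set Ω) : ℝ :=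
  sInf {y | ∃ i, H i ⊆ A ∧ y = X i}

noncomputable def supOn (H : ι → Set Ω) (X : ι → ℝ) (A : Set Ω) : ℝ :=
  sSup {y | ∃ i, H i ⊆ A ∧ y = X i}

section InfSup

variable {H : ι → Set Ω} {𝒜L : Set (Set Ω)} {X : ι → ℝ} {A : Set Ω}

theorem valSet_nonempty (hH : IsPartition H) (h𝒜L : IsFieldOver H 𝒜L) (hA : A ∈ 𝒜L)
    (hne : A.Nonempty) : {y | ∃ i, H i ⊆ A ∧ y = X i}.Nonempty := by
  obtain ⟨i, hi⟩ := AL_exists_piece hH h𝒜L hA hne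
  exact ⟨X i, i, hi, rfl⟩ 

theorem valSet_bddBelow (hX : ∀ i, 0 ≤ X i) : BddBelow {y | ∃ i, H i ⊆ A ∧ y = X i} :=
  ⟨0, by rintro y ⟨i, _, rfl⟩; exact hX i⟩ 

theorem valSet_bddAbove (hX : ∀ i, X i ≤ 1) : BddAbove {y | ∃ i, H i ⊆ A ∧ y = X i} :=
  ⟨1, by rintro y ⟨i, _, rfl⟩; exact hX i⟩ 

theorem infOn_le (hX : ∀ i, 0 ≤ X i) {i : ι} (hi : H i ⊆ A) : infOn H X A ≤ X i :=
  csInf_le (valSet_bddBelow hX) ⟨i, hi, rfl⟩ 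

theorem le_infOn (hH : IsPartition H) (h𝒜L : IsFieldOver H 𝒜L) (hA : A ∈ 𝒜L)
    (hne : A.Nonempty) {c : ℝ} (h : ∀ i, H i ⊆ A → c ≤ X i) : c ≤ infOn H X A :=
  le_csInf (valSet_nonempty hH h𝒜L hA hne) (by rintro y ⟨i, hi, rfl⟩; exact h i hi)

theorem le_supOn (hX : ∀ i, X i ≤ 1) {i : ι} (hi : H i ⊆ A) : X i ≤ supOn H X A :=
  le_csSup (valSet_bddAbove hX) ⟨i, hi, rfl⟩ 

theorem supOn_le (hH : IsPartition H) (h𝒜L : IsFieldOver H 𝒜L) (hA : A ∈ 𝒜L)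
    (hne : A.Nonempty) {c : ℝ} (h : ∀ i, H i ⊆ A → X i ≤ c) : supOn H X A ≤ c :=
  csSup_le (valSet_nonempty hH h𝒜L hA hne) (by rintro y ⟨i, hi, rfl⟩; exact h i hi)

theorem infOn_nonneg (hH : IsPartition H) (h𝒜L : IsFieldOver H 𝒜L) (hA : A ∈ 𝒜L)
    (hne : A.Nonempty) (hX : ∀ i, 0 ≤ X i) : 0 ≤ infOn H X A :=
  le_infOn hH h𝒜L hA hne fun i _ => hX i

theorem infOn_le_one (hH : IsPartition H) (h𝒜L : IsFieldOver H 𝒜L) (hA : A ∈ 𝒜L)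
    (hne : A.Nonempty) (hX0 : ∀ i, 0 ≤ X i) (hX1 : ∀ i, X i ≤ 1) : infOn H X A ≤ 1 := by
  obtain ⟨i, hi⟩ := AL_exists_piece hH h𝒜L hA hne
  exact (infOn_le hX0 hi).trans (hX1 i)

theorem supOn_nonneg (hH : IsPartition H) (h𝒜L : IsFieldOver H 𝒜L) (hA : A ∈ 𝒜L)
    (hne : A.Nonempty) (hX0 : ∀ i, 0 ≤ X i) (hX1 : ∀ i, X i ≤ 1) : 0 ≤ supOn H X A := by
  obtain ⟨i, hi⟩ := AL_exists_piece hH h𝒜L hA hne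
  exact (hX0 i).trans (le_supOn hX1 hi)

theorem infOn_le_supOn (hH : IsPartition H) (h𝒜L : IsFieldOver H 𝒜L) (hA : A ∈ 𝒜L)
    (hne : A.Nonempty) (hX0 : ∀ i, 0 ≤ X i) (hX1 : ∀ i, X i ≤ 1) :
    infOn H X A ≤ supOn H X A := by
  obtain ⟨i, hi⟩ := AL_exists_piece hH h𝒜L hA hne
  exact (infOn_le hX0 hi).trans (le_supOn hX1 hi)

theorem infOn_anti (hH : IsPartition H) (h𝒜L : IsFieldOver H 𝒜L) {A' : Set Ω}
    (hA' : A' ∈ 𝒜L) (hne : A'.Nonempty) (hsub : A' ⊆ A) (hX : ∀ i, 0 ≤ X i) :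
    infOn H X A ≤ infOn H X A' :=
  le_infOn hH h𝒜L hA' hne fun i hi => infOn_le hX (hi.trans hsub)

theorem supOn_mono (hH : IsPartition H) (h𝒜L : IsFieldOver H 𝒜L) {A' : Set Ω}
    (hA' : A' ∈ 𝒜L) (hne : A'.Nonempty) (hsub : A' ⊆ A) (hX : ∀ i, X i ≤ 1) :
    supOn H X A' ≤ supOn H X A :=
  supOn_le hH h𝒜L hA' hne fun i hi => le_supOn hX (hi.trans hsub)

theorem infOn_add_le {Y : ι → ℝ} (hH : IsPartition H) (h𝒜L : IsFieldOver H 𝒜L)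
    (hA : A ∈ 𝒜L) (hne : A.Nonempty) (hX : ∀ i, 0 ≤ X i) (hY0 : ∀ i, 0 ≤ Y i)
    (hY1 : ∀ i, Y i ≤ 1) :
    infOn H (fun i => X i + Y i) A ≤ infOn H X A + supOn H Y A := by
  have h : ∀ i, H i ⊆ A → infOn H (fun i => X i + Y i) A - supOn H Y A ≤ X i := by
    intro i hi
    have h1 : infOn H (fun i => X i + Y i) A ≤ X i + Y i :=
      csInf_le (⟨0, by rintro y ⟨j, _, rfl⟩; exact add_nonneg (hX j) (hY0 j)⟩ :
        BddBelow {y | ∃ i, H i ⊆ A ∧ y = X i + Y i}) ⟨i, hi, rfl⟩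
    have h2 : Y i ≤ supOn H Y A := le_supOn hY1 hi
    linarith
  have h3 : infOn H (fun i => X i + Y i) A - supOn H Y A ≤ infOn H X A :=
    le_infOn hH h𝒜L hA hne h
  linarith

theorem le_infOn_add {Y : ι → ℝ} (hH : IsPartition H) (h𝒜L : IsFieldOver H 𝒜L)
    (hA : A ∈ 𝒜L) (hne : A.Nonempty) (hX : ∀ i, 0 ≤ X i) (hY : ∀ i, 0 ≤ Y i) :
    infOn H X A + infOn H Y A ≤ infOn H (fun i => X i + Y i) A :=
  le_infOn hH h𝒜L hA hne fun i hi => add_le_add (infOn_le hX hi) (infOn_le hY hi)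

end InfSup

/-! ### Finite partitions, sums, refinement -/

noncomputable def lowSum (H : ι → Set Ω) (X : ι → ℝ) (μ : Set Ω → ℝ)
    (T : Finset (Set Ω)) : ℝ := ∑ A ∈ T, infOn H X A * μ A

noncomputable def upSum (H : ι → Set Ω) (X : ι → ℝ) (μ : Set Ω → ℝ)
    (T : Finset (Set Ω)) : ℝ := ∑ A ∈ T, supOn H X A * μ A

theorem lowerSInt_eq_sSup (H : ι → Set Ω) (𝒜L : Set (Set Ω)) (X : ι → ℝ)
    (μ : Set Ω → ℝ) :
    lowerSInt H 𝒜L X μ = sSup {x | ∃ T, IsFinPart 𝒜L T ∧ x = lowSum H X μ T} := rfl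

section FinPart

variable {H : ι → Set Ω} {𝒜L : Set (Set Ω)} {X : ι → ℝ} {μ : Set Ω → ℝ}
  {T T' : Finset (Set Ω)}

theorem finPart_mem_AL (hT : IsFinPart 𝒜L T) {A : Set Ω} (hA : A ∈ T) : A ∈ 𝒜L :=
  hT.1 hA

theorem finPart_nonempty (hT : IsFinPart 𝒜L T) {A : Set Ω} (hA : A ∈ T) : A.Nonempty :=
  hT.2.1 A hA

theorem finPart_exists_mem (hT : IsFinPart 𝒜L T) (ω : Ω) : ∃ A ∈ T, ω ∈ A := by
  have : ω ∈ ⋃₀ (↑T : Set (Set Ω)) := hT.2.2.2.symm ▸ Set.mem_univ ω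
  simpa using this

theorem isFinPart_univ [Nonempty Ω] (h𝒜L : IsSetField 𝒜L) :
    IsFinPart 𝒜L ({Set.univ} : Finset (Set Ω)) := by
  refine ⟨by simp [h𝒜L.1], by simp [Set.univ_nonempty], by simp, by simp⟩

theorem finPart_sum_eq_one (h𝒜L : IsSetField 𝒜L) (hμ : IsFAP 𝒜L μ)
    (hT : IsFinPart 𝒜L T) : ∑ A ∈ T, μ A = 1 := by
  rw [← fap_finset_sum h𝒜L hμ T hT.1 hT.2.2.1, hT.2.2.2, fap_univ hμ]

theorem isFinPart_filter (h𝒜L : IsSetField 𝒜L) (h1 : ↑T ⊆ 𝒜L)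
    (hd : ∀ A ∈ T, ∀ B ∈ T, A ≠ B → Disjoint A B) (hc : ⋃₀ (↑T : Set (Set Ω)) = Set.univ) :
    IsFinPart 𝒜L (T.filter (fun A => A.Nonempty)) := by
  classical
  refine ⟨fun A hA => h1 (by simpa using (Finset.mem_filter.mp hA).1),
    fun A hA => (Finset.mem_filter.mp hA).2,
    fun A hA B hB hne => hd A (Finset.mem_filter.mp hA).1 B (Finset.mem_filter.mp hB).1 hne,
    ?_⟩
  apply Set.eq_univ_of_forall
  intro ω
  have : ω ∈ ⋃₀ (↑T : Set (Set Ω)) := hc ▸ Set.mem_univ ω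
  obtain ⟨A, hA, hωA⟩ := this
  exact ⟨A, by simpa using ⟨hA, ⟨ω, hωA⟩⟩, hωA⟩

theorem compl_ne_self [Nonempty Ω] (B : Set Ω) : B ≠ Bᶜ := by
  intro h
  obtain ⟨ω⟩ := ‹Nonempty Ω›
  by_cases hω : ω ∈ B
  · exact (h ▸ hω : ω ∈ Bᶜ) hω
  · exact hω (h.symm ▸ (hω : ω ∈ Bᶜ))

theorem isFinPart_pair [Nonempty Ω] (h𝒜L : IsSetField 𝒜L) {B : Set Ω} (hB : B ∈ 𝒜L) :
    IsFinPart 𝒜L (({B, Bᶜ} : Finset (Set Ω)).filter (fun A => A.Nonempty)) := by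
  classical
  apply isFinPart_filter h𝒜L
  · intro A hA
    simp only [Finset.coe_insert, Finset.coe_singleton, Set.mem_insert_iff,
      Set.mem_singleton_iff] at hA
    rcases hA with rfl | rfl
    · exact hB
    · exact field_compl h𝒜L hB
  · intro A hA B' hB' hne
    simp only [Finset.mem_insert, Finset.mem_singleton] at hA hB'
    rcases hA with rfl | rfl <;> rcases hB' with rfl | rfl
    · exact absurd rfl hne
    · exact disjoint_compl_right
    · exact disjoint_compl_left
    · exact absurd rfl hne
  · rw [Finset.coe_insert, Finset.coe_singleton, Set.sUnion_insert, Set.sUnion_singleton,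
      Set.union_compl_self]

/-- sum over a filtered partition equals sum over the original family when `μ ∅ = 0` -/
theorem lowSum_filter (hμ0 : μ ∅ = 0) (T : Finset (Set Ω)) :
    lowSum H X μ (T.filter (fun A => A.Nonempty)) = lowSum H X μ T := by
  classical
  rw [lowSum, lowSum, Finset.sum_filter]
  apply Finset.sum_congr rfl
  intro A hA
  split_ifs with h
  · rfl
  · rw [Set.not_nonempty_iff_eq_empty] at h
    rw [h, hμ0, mul_zero]

/-! ### Parent map and refinement -/

def Refines (T' T : Finset (Set Ω)) : Prop := ∀ A' ∈ T', ∃ A ∈ T, A' ⊆ A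

noncomputable def parent (T : Finset (Set Ω)) (A' : Set Ω) : Set Ω :=
  if h : ∃ A ∈ T, A' ⊆ A then h.choose else ∅

theorem parent_spec {A' : Set Ω} (h : ∃ A ∈ T, A' ⊆ A) :
    parent T A' ∈ T ∧ A' ⊆ parent T A' := by
  rw [parent, dif_pos h]
  exact ⟨h.choose_spec.1, h.choose_spec.2⟩ 

theorem parent_eq (hT : IsFinPart 𝒜L T) {A A' : Set Ω} (hA : A ∈ T) (hsub : A' ⊆ A)
    (hne : A'.Nonempty) : parent T A' = A := by
  have hex : ∃ B ∈ T, A' ⊆ B := ⟨A, hA, hsub⟩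
  obtain ⟨h1, h2⟩ := parent_spec hex
  by_contra hne'
  obtain ⟨x, hx⟩ := hne
  exact Set.disjoint_iff.mp (hT.2.2.1 _ h1 _ hA hne') ⟨h2 hx, hsub hx⟩ 

theorem fiber_cover (hT : IsFinPart 𝒜L T) (hT' : IsFinPart 𝒜L T') (href : Refines T' T)
    {A : Set Ω} (hA : A ∈ T) :
    ⋃₀ (↑(T'.filter (fun A' => parent T A' = A)) : Set (Set Ω)) = A := by
  classical
  apply Set.Subset.antisymm
  · intro x hx
    obtain ⟨A', hA', hxA'⟩ := hx
    have hm := Finset.mem_filter.mp hA'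
    have := (parent_spec (href A' hm.1)).2
    rw [hm.2] at this
    exact this hxA'
  · intro x hx
    obtain ⟨A', hA', hxA'⟩ := finPart_exists_mem hT' x
    have hpar : parent T A' = A := by
      obtain ⟨hp1, hp2⟩ := parent_spec (href A' hA')
      by_contra hne'
      exact Set.disjoint_iff.mp (hT.2.2.1 _ hp1 _ hA hne') ⟨hp2 hxA', hx⟩
    exact ⟨A', by simpa using ⟨hA', hpar⟩, hxA'⟩ 

theorem fiber_sum (h𝒜L : IsSetField 𝒜L) (hμ : IsFAP 𝒜L μ) (hT : IsFinPart 𝒜L T)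
    (hT' : IsFinPart 𝒜L T') (href : Refines T' T) {A : Set Ω} (hA : A ∈ T) :
    ∑ A' ∈ T'.filter (fun A' => parent T A' = A), μ A' = μ A := by
  classical
  set Fib := T'.filter (fun A' => parent T A' = A) with hFib
  have hsub : ↑Fib ⊆ 𝒜L := by
    intro B hB
    have hB' : B ∈ Fib := hB
    exact hT'.1 (Finset.mem_coe.mpr (Finset.mem_filter.mp hB').1)
  have hd : ∀ B ∈ Fib, ∀ C ∈ Fib, B ≠ C → Disjoint B C := fun B hB C hC hne =>
    hT'.2.2.1 B (Finset.mem_filter.mp hB).1 C (Finset.mem_filter.mp hC).1 hne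
  rw [← fap_finset_sum h𝒜L hμ Fib hsub hd, fiber_cover hT hT' href hA]

theorem lowSum_mono_refine (hH : IsPartition H) (h𝒜Lf : IsSetField 𝒜L)
    (h𝒜L : IsFieldOver H 𝒜L) (hμ : IsFAP 𝒜L μ) (hX : ∀ i, 0 ≤ X i)
    (hT : IsFinPart 𝒜L T) (hT' : IsFinPart 𝒜L T') (href : Refines T' T) :
    lowSum H X μ T ≤ lowSum H X μ T' := by
  classical
  have hmaps : ∀ A' ∈ T', parent T A' ∈ T := fun A' hA' => (parent_spec (href A' hA')).1
  rw [lowSum, lowSum, ← Finset.sum_fiberwise_of_maps_to hmaps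
    (fun A' => infOn H X A' * μ A')]
  apply Finset.sum_le_sum
  intro A hA
  rw [← fiber_sum h𝒜Lf hμ hT hT' href hA, Finset.mul_sum]
  apply Finset.sum_le_sum
  intro A' hA'
  have hm := Finset.mem_filter.mp hA'
  have hsub : A' ⊆ A := hm.2 ▸ (parent_spec (href A' hm.1)).2
  exact mul_le_mul_of_nonneg_right
    (infOn_anti hH h𝒜L (hT'.1 hm.1) (finPart_nonempty hT' hm.1) hsub hX)
    (fap_nonneg hμ (hT'.1 hm.1))

theorem upSum_mono_refine (hH : IsPartition H) (h𝒜Lf : IsSetField 𝒜L)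
    (h𝒜L : IsFieldOver H 𝒜L) (hμ : IsFAP 𝒜L μ) (hX : ∀ i, X i ≤ 1)
    (hT : IsFinPart 𝒜L T) (hT' : IsFinPart 𝒜L T') (href : Refines T' T) :
    upSum H X μ T' ≤ upSum H X μ T := by
  classical
  have hmaps : ∀ A' ∈ T', parent T A' ∈ T := fun A' hA' => (parent_spec (href A' hA')).1
  rw [upSum, upSum, ← Finset.sum_fiberwise_of_maps_to hmaps
    (fun A' => supOn H X A' * μ A')]
  apply Finset.sum_le_sum
  intro A hA
  rw [← fiber_sum h𝒜Lf hμ hT hT' href hA, Finset.mul_sum]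
  apply Finset.sum_le_sum
  intro A' hA'
  have hm := Finset.mem_filter.mp hA'
  have hsub : A' ⊆ A := hm.2 ▸ (parent_spec (href A' hm.1)).2
  exact mul_le_mul_of_nonneg_right
    (supOn_mono hH h𝒜L (hT'.1 hm.1) (finPart_nonempty hT' hm.1) hsub hX)
    (fap_nonneg hμ (hT'.1 hm.1))

/-! ### Common refinement -/

noncomputable def commonRef (T1 T2 : Finset (Set Ω)) : Finset (Set Ω) :=
  ((T1 ×ˢ T2).image fun p => p.1 ∩ p.2).filter (fun A => A.Nonempty)

theorem commonRef_isFinPart (h𝒜L : IsSetField 𝒜L) {T1 T2 : Finset (Set Ω)}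
    (h1 : IsFinPart 𝒜L T1) (h2 : IsFinPart 𝒜L T2) : IsFinPart 𝒜L (commonRef T1 T2) := by
  classical
  refine ⟨?_, fun A hA => (Finset.mem_filter.mp hA).2, ?_, ?_⟩
  · intro A hA
    obtain ⟨⟨A1, A2⟩, hp, rfl⟩ := Finset.mem_image.mp (Finset.mem_filter.mp hA).1
    obtain ⟨hp1, hp2⟩ := Finset.mem_product.mp hp
    exact field_inter h𝒜L (h1.1 hp1) (h2.1 hp2)
  · intro A hA B hB hne
    obtain ⟨⟨A1, A2⟩, hpA, rfl⟩ := Finset.mem_image.mp (Finset.mem_filter.mp hA).1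
    obtain ⟨⟨B1, B2⟩, hpB, rfl⟩ := Finset.mem_image.mp (Finset.mem_filter.mp hB).1
    obtain ⟨hA1, hA2⟩ := Finset.mem_product.mp hpA
    obtain ⟨hB1, hB2⟩ := Finset.mem_product.mp hpB
    rw [Set.disjoint_iff_inter_eq_empty]
    by_contra hcon
    obtain ⟨x, ⟨hx1, hx2⟩, hx3, hx4⟩ := Set.nonempty_iff_ne_empty.mpr hcon
    have e1 : A1 = B1 := by
      by_contra h
      exact Set.disjoint_iff.mp (h1.2.2.1 _ hA1 _ hB1 h) ⟨hx1, hx3⟩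
    have e2 : A2 = B2 := by
      by_contra h
      exact Set.disjoint_iff.mp (h2.2.2.1 _ hA2 _ hB2 h) ⟨hx2, hx4⟩
    exact hne (by rw [e1, e2])
  · apply Set.eq_univ_of_forall
    intro ω
    obtain ⟨A1, hA1, hω1⟩ := finPart_exists_mem h1 ω
    obtain ⟨A2, hA2, hω2⟩ := finPart_exists_mem h2 ω
    refine ⟨A1 ∩ A2, Finset.mem_coe.mpr ?_, hω1, hω2⟩
    rw [commonRef, Finset.mem_filter]
    exact ⟨Finset.mem_image.mpr ⟨⟨A1, A2⟩, Finset.mem_product.mpr ⟨hA1, hA2⟩, rfl⟩,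
      ⟨ω, hω1, hω2⟩⟩ 

theorem commonRef_refines_left {T1 T2 : Finset (Set Ω)} :
    Refines (commonRef T1 T2) T1 := by
  classical
  intro A hA
  obtain ⟨⟨A1, A2⟩, hp, rfl⟩ := Finset.mem_image.mp (Finset.mem_filter.mp hA).1
  exact ⟨A1, (Finset.mem_product.mp hp).1, Set.inter_subset_left⟩ 

theorem commonRef_refines_right {T1 T2 : Finset (Set Ω)} :
    Refines (commonRef T1 T2) T2 := by
  classical
  intro A hA
  obtain ⟨⟨A1, A2⟩, hp, rfl⟩ := Finset.mem_image.mp (Finset.mem_filter.mp hA).1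
  exact ⟨A2, (Finset.mem_product.mp hp).2, Set.inter_subset_right⟩ 

end FinPart

/-! ### lowerSInt basics -/

section LSInt

variable [Nonempty Ω] {H : ι → Set Ω} {𝒜L : Set (Set Ω)} {X Y : ι → ℝ} {μ ν : Set Ω → ℝ}
  {T : Finset (Set Ω)}

theorem lowSum_nonneg (hH : IsPartition H) (h𝒜L : IsFieldOver H 𝒜L) (hμ : IsFAP 𝒜L μ)
    (hX0 : ∀ i, 0 ≤ X i) (hT : IsFinPart 𝒜L T) : 0 ≤ lowSum H X μ T :=
  Finset.sum_nonneg fun A hA => mul_nonneg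
    (infOn_nonneg hH h𝒜L (hT.1 hA) (finPart_nonempty hT hA) hX0)
    (fap_nonneg hμ (hT.1 hA))

theorem lowSum_le_bound (hH : IsPartition H) (h𝒜Lf : IsSetField 𝒜L)
    (h𝒜L : IsFieldOver H 𝒜L) (hμ : IsFAP 𝒜L μ) (hX0 : ∀ i, 0 ≤ X i) {c : ℝ}
    (hXc : ∀ i, X i ≤ c) (hT : IsFinPart 𝒜L T) : lowSum H X μ T ≤ c := by
  have key : ∀ A ∈ T, infOn H X A * μ A ≤ c * μ A := by
    intro A hA
    obtain ⟨i, hi⟩ := AL_exists_piece hH h𝒜L (hT.1 hA) (finPart_nonempty hT hA)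
    exact mul_le_mul_of_nonneg_right ((infOn_le hX0 hi).trans (hXc i))
      (fap_nonneg hμ (hT.1 hA))
  calc lowSum H X μ T ≤ ∑ A ∈ T, c * μ A := Finset.sum_le_sum key
    _ = c * ∑ A ∈ T, μ A := by rw [Finset.mul_sum]
    _ = c := by rw [finPart_sum_eq_one h𝒜Lf hμ hT, mul_one]

theorem lowSum_le_one (hH : IsPartition H) (h𝒜Lf : IsSetField 𝒜L)
    (h𝒜L : IsFieldOver H 𝒜L) (hμ : IsFAP 𝒜L μ) (hX0 : ∀ i, 0 ≤ X i) (hX1 : ∀ i, X i ≤ 1)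
    (hT : IsFinPart 𝒜L T) : lowSum H X μ T ≤ 1 :=
  lowSum_le_bound hH h𝒜Lf h𝒜L hμ hX0 hX1 hT

theorem lsSet_nonempty (h𝒜Lf : IsSetField 𝒜L) :
    {x | ∃ T, IsFinPart 𝒜L T ∧ x = lowSum H X μ T}.Nonempty :=
  ⟨_, _, isFinPart_univ h𝒜Lf, rfl⟩ 

theorem lowSum_le_lowerSInt (hH : IsPartition H) (h𝒜Lf : IsSetField 𝒜L)
    (h𝒜L : IsFieldOver H 𝒜L) (hμ : IsFAP 𝒜L μ) (hX0 : ∀ i, 0 ≤ X i) {c : ℝ}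
    (hXc : ∀ i, X i ≤ c) (hT : IsFinPart 𝒜L T) : lowSum H X μ T ≤ lowerSInt H 𝒜L X μ := by
  have hbdd : BddAbove {x | ∃ T, IsFinPart 𝒜L T ∧ x = lowSum H X μ T} := by
    refine ⟨c, ?_⟩
    rintro x ⟨T', hT', rfl⟩
    exact lowSum_le_bound hH h𝒜Lf h𝒜L hμ hX0 hXc hT'
  exact le_csSup hbdd ⟨T, hT, rfl⟩ 

theorem lowerSInt_le_of_forall (h𝒜Lf : IsSetField 𝒜L) {c : ℝ}
    (h : ∀ T, IsFinPart 𝒜L T → lowSum H X μ T ≤ c) : lowerSInt H 𝒜L X μ ≤ c :=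
  csSup_le (lsSet_nonempty h𝒜Lf) (by rintro x ⟨T, hT, rfl⟩; exact h T hT)

theorem lowerSInt_nonneg (hH : IsPartition H) (h𝒜Lf : IsSetField 𝒜L)
    (h𝒜L : IsFieldOver H 𝒜L) (hμ : IsFAP 𝒜L μ) (hX0 : ∀ i, 0 ≤ X i) (hX1 : ∀ i, X i ≤ 1) :
    0 ≤ lowerSInt H 𝒜L X μ :=
  le_trans (lowSum_nonneg hH h𝒜L hμ hX0 (isFinPart_univ h𝒜Lf))
    (lowSum_le_lowerSInt hH h𝒜Lf h𝒜L hμ hX0 hX1 (isFinPart_univ h𝒜Lf))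

theorem lowerSInt_le_one (hH : IsPartition H) (h𝒜Lf : IsSetField 𝒜L)
    (h𝒜L : IsFieldOver H 𝒜L) (hμ : IsFAP 𝒜L μ) (hX0 : ∀ i, 0 ≤ X i) (hX1 : ∀ i, X i ≤ 1) :
    lowerSInt H 𝒜L X μ ≤ 1 :=
  lowerSInt_le_of_forall h𝒜Lf fun T hT => lowSum_le_one hH h𝒜Lf h𝒜L hμ hX0 hX1 hT

theorem lowerSInt_congr_mu (h : ∀ B ∈ 𝒜L, μ B = ν B) :
    lowerSInt H 𝒜L X μ = lowerSInt H 𝒜L X ν := by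
  have key : ∀ T : Finset (Set Ω), IsFinPart 𝒜L T → lowSum H X μ T = lowSum H X ν T :=
    fun T hT => Finset.sum_congr rfl fun A hA => by rw [h A (hT.1 hA)]
  rw [lowerSInt_eq_sSup, lowerSInt_eq_sSup]
  congr 1
  ext x
  constructor
  · rintro ⟨T, hT, rfl⟩; exact ⟨T, hT, key T hT⟩
  · rintro ⟨T, hT, rfl⟩; exact ⟨T, hT, (key T hT).symm⟩ 

theorem lowerSInt_congr_X (h : ∀ i, X i = Y i) :
    lowerSInt H 𝒜L X μ = lowerSInt H 𝒜L Y μ := by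
  have : X = Y := funext h
  rw [this]

end LSInt

/-! ### The gap (Riemann) lemma -/

section Gap

variable [Nonempty Ω] {H : ι → Set Ω} {𝒜L : Set (Set Ω)} {X : ι → ℝ} {μ : Set Ω → ℝ}

theorem gap_lemma (hH : IsPartition H) (h𝒜Lf : IsSetField 𝒜L) (h𝒜L : IsFieldOver H 𝒜L)
    (hμ : IsFAP 𝒜L μ) (hcont : ALContinuous H 𝒜L X) (hX0 : ∀ i, 0 ≤ X i)
    (hX1 : ∀ i, X i ≤ 1) {δ : ℝ} (hδ : 0 < δ) :
    ∃ T, IsFinPart 𝒜L T ∧ upSum H X μ T ≤ lowSum H X μ T + δ := by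
  classical
  set δ' := δ / 3 with hδ'def
  have hδ' : (0:ℝ) < δ' := by positivity
  obtain ⟨N, hN⟩ := exists_nat_gt (1 / δ')
  have hN1 : 1 < (N : ℝ) * δ' := by
    rw [← div_lt_iff₀ hδ'] at *
    linarith
  choose C hCmem hClow hChigh using fun k : ℕ => hcont.2 ((k : ℝ) * δ') δ' hδ'
  set D : ℕ → Set Ω := fun k => Nat.rec Set.univ (fun m _ => C m) k with hD
  have hD0 : D 0 = Set.univ := rfl
  have hDs : ∀ k, D (k + 1) = C k := fun k => rfl
  have hDmem : ∀ k, D k ∈ 𝒜L := by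
    intro k
    cases k with
    | zero => exact h𝒜Lf.1
    | succ m => exact hCmem m
  -- pieces inside D k have value ≥ (k-1) δ'
  have hlow : ∀ k : ℕ, ∀ j : ι, H j ⊆ D k → ((k : ℝ) - 1) * δ' ≤ X j := by
    intro k j hj
    cases k with
    | zero => simpa using le_trans (by nlinarith) (hX0 j)
    | succ m =>
      have h1 : H j ⊆ ⋃ i ∈ {i | (m : ℝ) * δ' ≤ X i}, H i := (hDs m ▸ hj).trans (hChigh m)
      have := subset_biUnion_index hH h1
      have hm : (m : ℝ) * δ' ≤ X j := this
      push_cast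
      linarith
  -- pieces with value ≥ k δ' + δ' are inside D (k+1)
  have hhigh : ∀ k : ℕ, ∀ j : ι, (k : ℝ) * δ' + δ' ≤ X j → H j ⊆ D (k + 1) := by
    intro k j hjv
    rw [hDs]
    exact le_trans (Set.subset_biUnion_of_mem (show j ∈ {i | (k:ℝ) * δ' + δ' ≤ X i} from hjv))
      (hClow k)
  have hmono : ∀ k l : ℕ, k ≤ l → D l ⊆ D k := by
    have hstep : ∀ k : ℕ, D (k + 1) ⊆ D k := by
      intro k
      cases k with
      | zero => simp [hD0]
      | succ m =>
        intro x hx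
        rw [hDs] at hx ⊢
        have h1 : C (m + 1) ⊆ ⋃ i ∈ {i | (((m+1) : ℕ) : ℝ) * δ' ≤ X i}, H i := hChigh (m + 1)
        have h2 : (⋃ i ∈ {i | (((m+1) : ℕ) : ℝ) * δ' ≤ X i}, H i) ⊆ C m := by
          refine le_trans ?_ (hClow m)
          apply Set.biUnion_subset_biUnion_left
          intro i hi
          simp only [Set.mem_setOf_eq] at hi ⊢
          push_cast at hi
          linarith
        exact h2 (h1 hx)
    intro k l hkl
    induction l with
    | zero => rw [Nat.le_zero.mp hkl]
    | succ m ih =>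
      rcases Nat.lt_or_ge k (m + 1) with h | h
      · exact le_trans (hstep m) (ih (Nat.lt_succ_iff.mp h))
      · rw [Nat.le_antisymm hkl h]
  -- the top level is empty
  have hDtop : D (N + 1) = ∅ := by
    by_contra hne
    obtain ⟨j, hj⟩ := AL_exists_piece hH h𝒜L (hDmem (N + 1)) (Set.nonempty_iff_ne_empty.mpr hne)
    have h1 := hlow (N + 1) j hj
    have := hX1 j
    push_cast at h1
    nlinarith
  set B : ℕ → Set Ω := fun k => D k \ D (k + 1) with hB
  have hBmem : ∀ k, B k ∈ 𝒜L := fun k => field_diff h𝒜Lf (hDmem k) (hDmem (k + 1))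
  have hBdisj : ∀ k l, k ≠ l → Disjoint (B k) (B l) := by
    have key : ∀ k l, k < l → Disjoint (B k) (B l) := by
      intro k l hkl
      rw [Set.disjoint_left]
      intro x hxk hxl
      exact hxk.2 (hmono (k + 1) l hkl (hxl.1))
    intro k l hkl
    rcases Nat.lt_or_ge k l with h | h
    · exact key k l h
    · exact (key l k (Nat.lt_of_le_of_ne h (Ne.symm hkl))).symm
  have hBcover : ∀ x : Ω, ∃ k ≤ N, x ∈ B k := by
    intro x
    have hex : ∃ k, x ∉ D k := ⟨N + 1, by simp [hDtop]⟩
    have hk₀pos : Nat.find hex ≠ 0 := by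
      intro h
      have hspec := Nat.find_spec hex
      rw [h, hD0] at hspec
      exact hspec trivial
    obtain ⟨m, hm⟩ := Nat.exists_eq_succ_of_ne_zero hk₀pos
    have hxm : x ∈ D m := by
      by_contra hc
      have := Nat.find_min' hex hc
      omega
    have hxm1 : x ∉ D (m + 1) := by
      have hspec := Nat.find_spec hex
      rwa [hm] at hspec
    refine ⟨m, ?_, hxm, hxm1⟩
    by_contra hc
    push_neg at hc
    have h2 := hmono (N + 1) m (by omega) hxm
    rw [hDtop] at h2
    exact h2
  -- value bounds on pieces of B k
  have hBlow : ∀ k : ℕ, ∀ j : ι, H j ⊆ B k → ((k : ℝ) - 1) * δ' ≤ X j :=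
    fun k j hj => hlow k j (hj.trans Set.diff_subset)
  have hBhigh : ∀ k : ℕ, ∀ j : ι, H j ⊆ B k → X j ≤ ((k : ℝ) + 1) * δ' := by
    intro k j hj
    by_contra hc
    push_neg at hc
    have h1 : (k : ℝ) * δ' + δ' ≤ X j := by nlinarith
    have h2 : H j ⊆ D (k + 1) := hhigh k j h1
    obtain ⟨x, hx⟩ := hH.1 j
    exact (hj hx).2 (h2 hx)
  -- assemble the partition
  set T : Finset (Set Ω) :=
    ((Finset.range (N + 1)).image B).filter (fun A => A.Nonempty) with hT
  have hTpart : IsFinPart 𝒜L T := by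
    apply isFinPart_filter h𝒜Lf
    · intro A hA
      obtain ⟨k, _, rfl⟩ := Finset.mem_image.mp hA
      exact hBmem k
    · intro A hA A' hA' hne
      obtain ⟨k, _, rfl⟩ := Finset.mem_image.mp hA
      obtain ⟨l, _, rfl⟩ := Finset.mem_image.mp hA'
      exact hBdisj k l (fun h => hne (h ▸ rfl))
    · apply Set.eq_univ_of_forall
      intro x
      obtain ⟨k, hkN, hx⟩ := hBcover x
      exact ⟨B k, Finset.mem_coe.mpr (Finset.mem_image.mpr ⟨k, Finset.mem_range.mpr
        (by omega), rfl⟩), hx⟩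
  refine ⟨T, hTpart, ?_⟩
  -- oscillation bound on each cell
  have hosc : ∀ A ∈ T, supOn H X A ≤ infOn H X A + 2 * δ' := by
    intro A hA
    have hm := Finset.mem_filter.mp hA
    obtain ⟨k, _, rfl⟩ := Finset.mem_image.mp hm.1
    have hne : (B k).Nonempty := hm.2
    have h1 : supOn H X (B k) ≤ ((k : ℝ) + 1) * δ' :=
      supOn_le hH h𝒜L (hBmem k) hne (hBhigh k)
    have h2 : ((k : ℝ) - 1) * δ' ≤ infOn H X (B k) :=
      le_infOn hH h𝒜L (hBmem k) hne (hBlow k)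
    nlinarith
  have hsum1 : ∑ A ∈ T, μ A = 1 := finPart_sum_eq_one h𝒜Lf hμ hTpart
  have : upSum H X μ T ≤ ∑ A ∈ T, (infOn H X A + 2 * δ') * μ A := by
    apply Finset.sum_le_sum
    intro A hA
    exact mul_le_mul_of_nonneg_right (hosc A hA) (fap_nonneg hμ (hTpart.1 hA))
  calc upSum H X μ T ≤ ∑ A ∈ T, (infOn H X A + 2 * δ') * μ A := this
    _ = lowSum H X μ T + 2 * δ' * ∑ A ∈ T, μ A := by
        rw [lowSum, Finset.mul_sum, ← Finset.sum_add_distrib]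
        apply Finset.sum_congr rfl
        intro A _
        ring
    _ = lowSum H X μ T + 2 * δ' := by rw [hsum1, mul_one]
    _ ≤ lowSum H X μ T + δ := by rw [hδ'def]; linarith

end Gap

/-! ### Additivity of the lower Stieltjes integral for continuous integrands -/

section Add

variable [Nonempty Ω] {H : ι → Set Ω} {𝒜L : Set (Set Ω)} {X Y : ι → ℝ} {μ : Set Ω → ℝ}

theorem lowerSInt_add_le (hH : IsPartition H) (h𝒜Lf : IsSetField 𝒜L)
    (h𝒜L : IsFieldOver H 𝒜L) (hμ : IsFAP 𝒜L μ)
    (hX0 : ∀ i, 0 ≤ X i) (hX1 : ∀ i, X i ≤ 1) (hY0 : ∀ i, 0 ≤ Y i) (hY1 : ∀ i, Y i ≤ 1)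
    (hcontY : ALContinuous H 𝒜L Y) :
    lowerSInt H 𝒜L (fun i => X i + Y i) μ ≤ lowerSInt H 𝒜L X μ + lowerSInt H 𝒜L Y μ := by
  apply le_of_forall_pos_le_add
  intro ε hε
  obtain ⟨Tδ, hTδ, hgap⟩ := gap_lemma hH h𝒜Lf h𝒜L hμ hcontY hY0 hY1 hε
  apply lowerSInt_le_of_forall h𝒜Lf
  intro T hT
  set T' := commonRef T Tδ with hT'def
  have hT' : IsFinPart 𝒜L T' := commonRef_isFinPart h𝒜Lf hT hTδ
  have hXY0 : ∀ i, 0 ≤ X i + Y i := fun i => add_nonneg (hX0 i) (hY0 i)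
  have step1 : lowSum H (fun i => X i + Y i) μ T ≤ lowSum H (fun i => X i + Y i) μ T' :=
    lowSum_mono_refine hH h𝒜Lf h𝒜L hμ hXY0 hT hT' commonRef_refines_left
  have step2 : lowSum H (fun i => X i + Y i) μ T' ≤ lowSum H X μ T' + upSum H Y μ T' := by
    rw [lowSum, lowSum, upSum, ← Finset.sum_add_distrib]
    apply Finset.sum_le_sum
    intro A hA
    have h := infOn_add_le (Y := Y) hH h𝒜L (hT'.1 hA) (finPart_nonempty hT' hA) hX0 hY0 hY1
    calc infOn H (fun i => X i + Y i) A * μ A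
        ≤ (infOn H X A + supOn H Y A) * μ A :=
          mul_le_mul_of_nonneg_right h (fap_nonneg hμ (hT'.1 hA))
      _ = infOn H X A * μ A + supOn H Y A * μ A := by ring
  have step3 : upSum H Y μ T' ≤ upSum H Y μ Tδ :=
    upSum_mono_refine hH h𝒜Lf h𝒜L hμ hY1 hTδ hT' commonRef_refines_right
  have step4 : lowSum H X μ T' ≤ lowerSInt H 𝒜L X μ :=
    lowSum_le_lowerSInt hH h𝒜Lf h𝒜L hμ hX0 hX1 hT'
  have step5 : lowSum H Y μ Tδ ≤ lowerSInt H 𝒜L Y μ :=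
    lowSum_le_lowerSInt hH h𝒜Lf h𝒜L hμ hY0 hY1 hTδ
  linarith

theorem le_lowerSInt_add (hH : IsPartition H) (h𝒜Lf : IsSetField 𝒜L)
    (h𝒜L : IsFieldOver H 𝒜L) (hμ : IsFAP 𝒜L μ)
    (hX0 : ∀ i, 0 ≤ X i) (hX1 : ∀ i, X i ≤ 1) (hY0 : ∀ i, 0 ≤ Y i) (hY1 : ∀ i, Y i ≤ 1) :
    lowerSInt H 𝒜L X μ + lowerSInt H 𝒜L Y μ ≤ lowerSInt H 𝒜L (fun i => X i + Y i) μ := by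
  have key : ∀ T1, IsFinPart 𝒜L T1 → ∀ T2, IsFinPart 𝒜L T2 →
      lowSum H X μ T1 + lowSum H Y μ T2 ≤ lowerSInt H 𝒜L (fun i => X i + Y i) μ := by
    intro T1 hT1 T2 hT2
    set T' := commonRef T1 T2
    have hT' : IsFinPart 𝒜L T' := commonRef_isFinPart h𝒜Lf hT1 hT2
    have s1 : lowSum H X μ T1 ≤ lowSum H X μ T' :=
      lowSum_mono_refine hH h𝒜Lf h𝒜L hμ hX0 hT1 hT' commonRef_refines_left
    have s2 : lowSum H Y μ T2 ≤ lowSum H Y μ T' :=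
      lowSum_mono_refine hH h𝒜Lf h𝒜L hμ hY0 hT2 hT' commonRef_refines_right
    have s3 : lowSum H X μ T' + lowSum H Y μ T' ≤ lowSum H (fun i => X i + Y i) μ T' := by
      rw [lowSum, lowSum, lowSum, ← Finset.sum_add_distrib]
      apply Finset.sum_le_sum
      intro A hA
      have h := le_infOn_add (Y := Y) hH h𝒜L (hT'.1 hA) (finPart_nonempty hT' hA) hX0 hY0
      calc infOn H X A * μ A + infOn H Y A * μ A
          = (infOn H X A + infOn H Y A) * μ A := by ring
        _ ≤ infOn H (fun i => X i + Y i) A * μ A :=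
            mul_le_mul_of_nonneg_right h (fap_nonneg hμ (hT'.1 hA))
    have s4 : lowSum H (fun i => X i + Y i) μ T' ≤ lowerSInt H 𝒜L (fun i => X i + Y i) μ :=
      lowSum_le_lowerSInt hH h𝒜Lf h𝒜L hμ (fun i => add_nonneg (hX0 i) (hY0 i))
        (c := 2) (fun i => by linarith [hX1 i, hY1 i]) hT'
    linarith
  have main : lowerSInt H 𝒜L X μ ≤
      lowerSInt H 𝒜L (fun i => X i + Y i) μ - lowerSInt H 𝒜L Y μ := by
    rw [lowerSInt_eq_sSup H 𝒜L X μ]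
    apply csSup_le (lsSet_nonempty h𝒜Lf)
    rintro x ⟨T1, hT1, rfl⟩
    rw [le_sub_iff_add_le]
    have inner : lowerSInt H 𝒜L Y μ ≤
        lowerSInt H 𝒜L (fun i => X i + Y i) μ - lowSum H X μ T1 := by
      rw [lowerSInt_eq_sSup H 𝒜L Y μ]
      apply csSup_le (lsSet_nonempty h𝒜Lf)
      rintro y ⟨T2, hT2, rfl⟩
      rw [le_sub_iff_add_le, add_comm]
      exact key T1 hT1 T2 hT2
    linarith
  linarith

end Add

/-! ### Special integrals: indicators, atoms, delta measures -/

section Special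

variable [Nonempty Ω] {H : ι → Set Ω} {𝒜L : Set (Set Ω)} {X : ι → ℝ} {μ ν : Set Ω → ℝ}

theorem infOn_nonneg' (hX0 : ∀ i, 0 ≤ X i) (A : Set Ω) : 0 ≤ infOn H X A :=
  Real.sInf_nonneg (by rintro y ⟨i, _, rfl⟩; exact hX0 i)

/-- value of `infOn` for a constant-on-pieces situation -/
theorem infOn_const_eq (hH : IsPartition H) (h𝒜L : IsFieldOver H 𝒜L) {A : Set Ω}
    (hA : A ∈ 𝒜L) (hne : A.Nonempty) {c : ℝ} (h : ∀ i, H i ⊆ A → X i = c) :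
    infOn H X A = c := by
  obtain ⟨i, hi⟩ := AL_exists_piece hH h𝒜L hA hne
  refine le_antisymm ?_ (le_infOn hH h𝒜L hA hne fun j hj => (h j hj).ge)
  have : infOn H X A ≤ X i := csInf_le ⟨c, by rintro y ⟨j, hj, rfl⟩; exact (h j hj).ge⟩
    ⟨i, hi, rfl⟩
  rwa [h i hi] at this

/-- the two-cell partition `{B, Bᶜ}` computation -/
theorem lowSum_pair [Nonempty Ω] {B : Set Ω} (hμ0 : μ ∅ = 0) :
    lowSum H X μ (({B, Bᶜ} : Finset (Set Ω)).filter (fun A => A.Nonempty)) =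
      infOn H X B * μ B + infOn H X Bᶜ * μ Bᶜ := by
  classical
  rw [lowSum_filter hμ0, lowSum, Finset.sum_pair (compl_ne_self B)]

/-- L3: the lower integral of the indicator of `B ∈ 𝒜L` is `μ B`. -/
theorem lowerSInt_indicator (hH : IsPartition H) (h𝒜Lf : IsSetField 𝒜L)
    (h𝒜L : IsFieldOver H 𝒜L) (hμ : IsFAP 𝒜L μ) {B : Set Ω} (hB : B ∈ 𝒜L)
    (hX : ∀ i, X i = if H i ⊆ B then 1 else 0) : lowerSInt H 𝒜L X μ = μ B := by
  classical
  have hX0 : ∀ i, 0 ≤ X i := fun i => by rw [hX i]; split_ifs <;> norm_num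
  have hX1 : ∀ i, X i ≤ 1 := fun i => by rw [hX i]; split_ifs <;> norm_num
  refine le_antisymm ?_ ?_
  · -- upper bound
    apply lowerSInt_le_of_forall h𝒜Lf
    intro T hT
    have key : ∀ A ∈ T, infOn H X A * μ A ≤ if A ⊆ B then μ A else 0 := by
      intro A hA
      split_ifs with h
      · exact mul_le_of_le_one_left (fap_nonneg hμ (hT.1 hA))
          (infOn_le_one hH h𝒜L (hT.1 hA) (finPart_nonempty hT hA) hX0 hX1)
      · have hex : ∃ i, H i ⊆ A ∧ ¬H i ⊆ B := by
          by_contra hc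
          push_neg at hc
          exact h (AL_cover hH h𝒜L (hT.1 hA) hc)
        obtain ⟨i, hiA, hiB⟩ := hex
        have h1 : infOn H X A ≤ X i := infOn_le hX0 hiA
        have h2 : X i = 0 := by rw [hX i, if_neg hiB]
        have h3 : infOn H X A = 0 := le_antisymm (h2 ▸ h1) (infOn_nonneg' hX0 A)
        rw [h3, zero_mul]
    calc lowSum H X μ T ≤ ∑ A ∈ T, if A ⊆ B then μ A else 0 := Finset.sum_le_sum key
      _ = ∑ A ∈ T.filter (fun A => A ⊆ B), μ A := (Finset.sum_filter _ _).symm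
      _ = μ (⋃₀ ↑(T.filter (fun A => A ⊆ B))) := by
          rw [fap_finset_sum h𝒜Lf hμ _
            (fun A hA => hT.1 (Finset.mem_coe.mpr (Finset.mem_filter.mp
              (Finset.mem_coe.mp hA)).1))
            (fun A hA A' hA' hne => hT.2.2.1 A (Finset.mem_filter.mp hA).1 A'
              (Finset.mem_filter.mp hA').1 hne)]
      _ ≤ μ B := by
          apply fap_mono h𝒜Lf hμ _ hB
          · intro x hx
            obtain ⟨A, hA, hxA⟩ := hx
            exact (Finset.mem_filter.mp (Finset.mem_coe.mp hA)).2 hxA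
          · exact finset_sUnion_mem h𝒜Lf _ (fun A hA => hT.1 (Finset.mem_coe.mpr
              (Finset.mem_filter.mp (Finset.mem_coe.mp hA)).1))
  · -- lower bound via the pair partition
    have hpart := isFinPart_pair (𝒜L := 𝒜L) h𝒜Lf hB
    have := lowSum_le_lowerSInt hH h𝒜Lf h𝒜L hμ hX0 hX1 hpart
    rw [lowSum_pair (fap_empty h𝒜Lf hμ)] at this
    refine le_trans ?_ this
    have hterm2 : 0 ≤ infOn H X Bᶜ * μ Bᶜ :=
      mul_nonneg (infOn_nonneg' hX0 _) (fap_nonneg hμ (field_compl h𝒜Lf hB))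
    rcases Set.eq_empty_or_nonempty B with rfl | hBne
    · rw [fap_empty h𝒜Lf hμ]
      have : (0:ℝ) ≤ infOn H X ∅ * μ ∅ := by
        rw [fap_empty h𝒜Lf hμ, mul_zero]
      linarith
    · have h1 : infOn H X B = 1 := infOn_const_eq hH h𝒜L hB hBne
        (fun i hi => by rw [hX i, if_pos hi])
      rw [h1, one_mul]
      linarith

/-- L4: the lower integral of a function supported on the single piece `H i₀`. -/
theorem lowerSInt_atom (hH : IsPartition H) (h𝒜Lf : IsSetField 𝒜L)
    (h𝒜L : IsFieldOver H 𝒜L) (hμ : IsFAP 𝒜L μ) (h𝒜Lsub : ∀ i, H i ∈ 𝒜L) {i₀ : ι} {c : ℝ}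
    (hc0 : 0 ≤ c) (hc1 : c ≤ 1) (hXi : X i₀ = c) (hX0 : ∀ j, j ≠ i₀ → X j = 0) :
    lowerSInt H 𝒜L X μ = c * μ (H i₀) := by
  classical
  have hX0' : ∀ i, 0 ≤ X i := by
    intro i
    by_cases h : i = i₀
    · rw [h, hXi]; exact hc0
    · rw [hX0 i h]
  have hX1' : ∀ i, X i ≤ 1 := by
    intro i
    by_cases h : i = i₀
    · rw [h, hXi]; exact hc1
    · rw [hX0 i h]; norm_num
  refine le_antisymm ?_ ?_
  · apply lowerSInt_le_of_forall h𝒜Lf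
    intro T hT
    obtain ⟨ω₀, hω₀⟩ := hH.1 i₀
    obtain ⟨A₀, hA₀T, hωA₀⟩ := finPart_exists_mem hT ω₀
    have hi₀A₀ : H i₀ ⊆ A₀ := by
      rcases AL_subset_or_disjoint hH h𝒜L (hT.1 hA₀T) i₀ with h | h
      · exact h
      · exact absurd (Set.mem_inter hωA₀ hω₀) (by simp [h])
    have key : ∀ A ∈ T, infOn H X A * μ A ≤ if A = A₀ then c * μ (H i₀) else 0 := by
      intro A hA
      split_ifs with h
      · subst h
        by_cases hEq : A = H i₀
        · rw [hEq]
          have h2 : infOn H X (H i₀) ≤ X i₀ := infOn_le hX0' (subset_refl _)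
          rw [hXi] at h2
          exact mul_le_mul_of_nonneg_right h2 (fap_nonneg hμ (h𝒜Lsub i₀))
        · -- A properly contains H i₀ : some other piece inside ⇒ infOn = 0
          have hdne : (A \ H i₀).Nonempty := by
            rw [Set.diff_nonempty]
            intro hsub
            exact hEq (Set.Subset.antisymm hsub hi₀A₀)
          have hdmem : A \ H i₀ ∈ 𝒜L := field_diff h𝒜Lf (hT.1 hA) (h𝒜Lsub i₀)
          obtain ⟨j, hj⟩ := AL_exists_piece hH h𝒜L hdmem hdne
          have hjne : j ≠ i₀ := by
            rintro rfl
            obtain ⟨x, hx⟩ := hH.1 j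
            exact (hj hx).2 hx
          have h1 : infOn H X A ≤ X j := infOn_le hX0' (hj.trans Set.diff_subset)
          have h2 : infOn H X A = 0 := le_antisymm (by rw [hX0 j hjne] at h1; exact h1)
            (infOn_nonneg' hX0' A)
          rw [h2, zero_mul]
          exact mul_nonneg hc0 (fap_nonneg hμ (h𝒜Lsub i₀))
      · -- A ≠ A₀ : all pieces of A differ from i₀
        obtain ⟨j, hj⟩ := AL_exists_piece hH h𝒜L (hT.1 hA) (finPart_nonempty hT hA)
        have hjne : j ≠ i₀ := by
          rintro rfl
          obtain ⟨x, hx⟩ := hH.1 j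
          exact Set.disjoint_iff.mp (hT.2.2.1 A hA A₀ hA₀T h) ⟨hj hx, hi₀A₀ hx⟩
        have h1 : infOn H X A ≤ X j := infOn_le hX0' hj
        have h2 : infOn H X A = 0 := le_antisymm (by rw [hX0 j hjne] at h1; exact h1)
          (infOn_nonneg' hX0' A)
        rw [h2, zero_mul]
    calc lowSum H X μ T ≤ ∑ A ∈ T, if A = A₀ then c * μ (H i₀) else 0 :=
          Finset.sum_le_sum key
      _ = c * μ (H i₀) := by rw [Finset.sum_ite_eq' T A₀ (fun _ => c * μ (H i₀)),
          if_pos hA₀T]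
  · -- lower bound via pair partition {H i₀, (H i₀)ᶜ}
    have hpart := isFinPart_pair (𝒜L := 𝒜L) h𝒜Lf (h𝒜Lsub i₀)
    have hle := lowSum_le_lowerSInt hH h𝒜Lf h𝒜L hμ hX0' hX1' hpart
    rw [lowSum_pair (fap_empty h𝒜Lf hμ)] at hle
    refine le_trans ?_ hle
    have h1 : infOn H X (H i₀) = c := by
      apply infOn_const_eq hH h𝒜L (h𝒜Lsub i₀) (hH.1 i₀)
      intro j hj
      rw [piece_subset_unique hH hj, hXi]
    have hterm2 : 0 ≤ infOn H X (H i₀)ᶜ * μ (H i₀)ᶜ :=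
      mul_nonneg (infOn_nonneg' hX0' _) (fap_nonneg hμ (field_compl h𝒜Lf (h𝒜Lsub i₀)))
    rw [h1]
    linarith

/-- L2: the lower integral w.r.t. the delta measure at the piece `H i₀` is `X i₀`. -/
theorem lowerSInt_delta (hH : IsPartition H) (h𝒜Lf : IsSetField 𝒜L)
    (h𝒜L : IsFieldOver H 𝒜L) (h𝒜Lsub : ∀ i, H i ∈ 𝒜L) {i₀ : ι}
    (hX0 : ∀ i, 0 ≤ X i) (hX1 : ∀ i, X i ≤ 1)
    (hν : ∀ B ∈ 𝒜L, ν B = if H i₀ ⊆ B then 1 else 0) :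
    lowerSInt H 𝒜L X ν = X i₀ := by
  classical
  have hνfap : IsFAP 𝒜L ν := by
    refine ⟨fun A hA => by rw [hν A hA]; split_ifs <;> norm_num,
      by rw [hν _ h𝒜Lf.1]; simp, ?_⟩
    intro A hA B hB hd
    rw [hν _ (field_union h𝒜Lf hA hB), hν A hA, hν B hB]
    by_cases h1 : H i₀ ⊆ A
    · have h2 : ¬H i₀ ⊆ B := by
        intro h2
        obtain ⟨x, hx⟩ := hH.1 i₀
        exact Set.disjoint_iff.mp hd ⟨h1 hx, h2 hx⟩
      rw [if_pos (h1.trans Set.subset_union_left), if_pos h1, if_neg h2]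
      norm_num
    · by_cases h2 : H i₀ ⊆ B
      · rw [if_pos (h2.trans Set.subset_union_right), if_neg h1, if_pos h2]
        norm_num
      · rw [if_neg ?_, if_neg h1, if_neg h2]
        · norm_num
        · intro hu
          obtain ⟨x, hx⟩ := hH.1 i₀
          rcases hu hx with h | h
          · rcases AL_subset_or_disjoint hH h𝒜L hA i₀ with hh | hh
            · exact h1 hh
            · exact absurd (Set.mem_inter h hx) (by simp [hh])
          · rcases AL_subset_or_disjoint hH h𝒜L hB i₀ with hh | hh
            · exact h2 hh
            · exact absurd (Set.mem_inter h hx) (by simp [hh])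
  refine le_antisymm ?_ ?_
  · apply lowerSInt_le_of_forall h𝒜Lf
    intro T hT
    obtain ⟨ω₀, hω₀⟩ := hH.1 i₀
    obtain ⟨A₀, hA₀T, hωA₀⟩ := finPart_exists_mem hT ω₀
    have hi₀A₀ : H i₀ ⊆ A₀ := by
      rcases AL_subset_or_disjoint hH h𝒜L (hT.1 hA₀T) i₀ with h | h
      · exact h
      · exact absurd (Set.mem_inter hωA₀ hω₀) (by simp [h])
    have key : ∀ A ∈ T, infOn H X A * ν A ≤ if A = A₀ then X i₀ else 0 := by
      intro A hA
      split_ifs with h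
      · subst h
        have h1 : infOn H X A ≤ X i₀ := infOn_le hX0 hi₀A₀
        have h2 : ν A ≤ 1 := fap_le_one hνfap (hT.1 hA)
        have h3 : 0 ≤ ν A := fap_nonneg hνfap (hT.1 hA)
        nlinarith [infOn_nonneg' (H := H) hX0 A]
      · have hnsub : ¬H i₀ ⊆ A := by
          intro hsub
          exact Set.disjoint_iff.mp (hT.2.2.1 A hA A₀ hA₀T h) ⟨hsub hω₀, hi₀A₀ hω₀⟩
        rw [hν A (hT.1 hA), if_neg hnsub, mul_zero]
    calc lowSum H X ν T ≤ ∑ A ∈ T, if A = A₀ then X i₀ else 0 := Finset.sum_le_sum key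
      _ = X i₀ := by rw [Finset.sum_ite_eq' T A₀ (fun _ => X i₀), if_pos hA₀T]
  · have hpart := isFinPart_pair (𝒜L := 𝒜L) h𝒜Lf (h𝒜Lsub i₀)
    have hle := lowSum_le_lowerSInt hH h𝒜Lf h𝒜L hνfap hX0 hX1 hpart
    rw [lowSum_pair (fap_empty h𝒜Lf hνfap)] at hle
    refine le_trans ?_ hle
    have h1 : infOn H X (H i₀) = X i₀ := by
      apply infOn_const_eq hH h𝒜L (h𝒜Lsub i₀) (hH.1 i₀)
      intro j hj
      rw [piece_subset_unique hH hj]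
    have h2 : ν (H i₀) = 1 := by rw [hν _ (h𝒜Lsub i₀), if_pos (subset_refl _)]
    have h3 : ν (H i₀)ᶜ = 0 := by
      rw [hν _ (field_compl h𝒜Lf (h𝒜Lsub i₀)), if_neg]
      intro hsub
      obtain ⟨x, hx⟩ := hH.1 i₀
      exact hsub hx hx
    rw [h1, h2, h3, mul_zero, mul_one, add_zero]

end Special

/-! ### L1: conditional measures -/

section Cond

variable [Nonempty Ω] {H : ι → Set Ω} {𝒜L : Set (Set Ω)} {X Y : ι → ℝ} {μ ν : Set Ω → ℝ}

theorem infOn_congr {A : Set Ω} (h : ∀ i, H i ⊆ A → X i = Y i) :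
    infOn H X A = infOn H Y A := by
  rw [infOn, infOn]
  congr 1
  ext y
  constructor
  · rintro ⟨i, hi, rfl⟩; exact ⟨i, hi, h i hi⟩
  · rintro ⟨i, hi, rfl⟩; exact ⟨i, hi, (h i hi).symm⟩ 

theorem cond_fap (h𝒜Lf : IsSetField 𝒜L) (hμ : IsFAP 𝒜L μ) {K : Set Ω} (hK : K ∈ 𝒜L)
    (hKpos : 0 < μ K) (hν : ∀ B ∈ 𝒜L, ν B = μ (B ∩ K) / μ K) : IsFAP 𝒜L ν := by
  refine ⟨?_, ?_, ?_⟩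
  · intro A hA
    rw [hν A hA]
    constructor
    · exact div_nonneg (fap_nonneg hμ (field_inter h𝒜Lf hA hK)) hKpos.le
    · rw [div_le_one hKpos]
      exact fap_mono h𝒜Lf hμ (field_inter h𝒜Lf hA hK) hK Set.inter_subset_right
  · rw [hν _ h𝒜Lf.1, Set.univ_inter, div_self hKpos.ne']
  · intro A hA B hB hd
    rw [hν _ (field_union h𝒜Lf hA hB), hν A hA, hν B hB, Set.union_inter_distrib_right,
      fap_union hμ (field_inter h𝒜Lf hA hK) (field_inter h𝒜Lf hB hK)
        (hd.mono Set.inter_subset_left Set.inter_subset_left), add_div]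

theorem commonRef_pair_cases (h𝒜Lf : IsSetField 𝒜L) {T : Finset (Set Ω)} {K A' : Set Ω}
    (hA' : A' ∈ commonRef T (({K, Kᶜ} : Finset (Set Ω)).filter (fun A => A.Nonempty))) :
    A' ⊆ K ∨ A' ⊆ Kᶜ := by
  classical
  obtain ⟨B, hB, hsub⟩ := commonRef_refines_right A' hA'
  have := (Finset.mem_filter.mp hB).1
  rcases Finset.mem_insert.mp this with rfl | h
  · exact Or.inl hsub
  · rw [Finset.mem_singleton.mp h] at hsub
    exact Or.inr hsub

theorem lowerSInt_cond (hH : IsPartition H) (h𝒜Lf : IsSetField 𝒜L)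
    (h𝒜L : IsFieldOver H 𝒜L) (hμ : IsFAP 𝒜L μ) {K : Set Ω} (hK : K ∈ 𝒜L)
    (hKpos : 0 < μ K) (hX0 : ∀ i, 0 ≤ X i) (hX1 : ∀ i, X i ≤ 1)
    (hY0 : ∀ i, 0 ≤ Y i) (hY1 : ∀ i, Y i ≤ 1)
    (hXY : ∀ i, H i ⊆ K → Y i = X i) (hYz : ∀ i, H i ⊆ Kᶜ → Y i = 0)
    (hν : ∀ B ∈ 𝒜L, ν B = μ (B ∩ K) / μ K) :
    lowerSInt H 𝒜L X ν = lowerSInt H 𝒜L Y μ / μ K := by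
  classical
  have hνfap : IsFAP 𝒜L ν := cond_fap h𝒜Lf hμ hK hKpos hν
  set Tp := (({K, Kᶜ} : Finset (Set Ω)).filter (fun A => A.Nonempty)) with hTp
  have hTpp : IsFinPart 𝒜L Tp := isFinPart_pair h𝒜Lf hK
  -- termwise comparison on any refinement cell
  have hterm : ∀ T : Finset (Set Ω), IsFinPart 𝒜L T →
      ∀ A' ∈ commonRef T Tp,
        infOn H Y A' * μ A' = μ K * (infOn H X A' * ν A') := by
    intro T hT A' hA'
    have hT'' : IsFinPart 𝒜L (commonRef T Tp) := commonRef_isFinPart h𝒜Lf hT hTpp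
    have hA'mem : A' ∈ 𝒜L := hT''.1 hA'
    have hA'ne : A'.Nonempty := finPart_nonempty hT'' hA'
    rcases commonRef_pair_cases h𝒜Lf hA' with hsub | hsub
    · have h1 : infOn H Y A' = infOn H X A' :=
        infOn_congr fun i hi => hXY i (hi.trans hsub)
      have h2 : ν A' = μ A' / μ K := by
        rw [hν A' hA'mem, Set.inter_eq_self_of_subset_left hsub]
      rw [h1, h2]
      field_simp
    · have h1 : infOn H Y A' = 0 :=
        infOn_const_eq hH h𝒜L hA'mem hA'ne fun i hi => hYz i (hi.trans hsub)
      have hempty : A' ∩ K = ∅ := by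
        rw [Set.eq_empty_iff_forall_notMem]
        rintro x ⟨hx1, hx2⟩
        exact hsub hx1 hx2
      have h2 : ν A' = 0 := by
        rw [hν A' hA'mem, hempty, fap_empty h𝒜Lf hμ, zero_div]
      rw [h1, h2, zero_mul, mul_zero, mul_zero]
  refine le_antisymm ?_ ?_
  · apply lowerSInt_le_of_forall h𝒜Lf
    intro T hT
    set T'' := commonRef T Tp with hT''def
    have hT'' : IsFinPart 𝒜L T'' := commonRef_isFinPart h𝒜Lf hT hTpp
    have s1 : lowSum H X ν T ≤ lowSum H X ν T'' :=
      lowSum_mono_refine hH h𝒜Lf h𝒜L hνfap hX0 hT hT'' commonRef_refines_left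
    have s2 : μ K * lowSum H X ν T'' = lowSum H Y μ T'' := by
      rw [lowSum, lowSum, Finset.mul_sum]
      exact Finset.sum_congr rfl fun A' hA' => (hterm T hT A' hA').symm
    have s3 : lowSum H Y μ T'' ≤ lowerSInt H 𝒜L Y μ :=
      lowSum_le_lowerSInt hH h𝒜Lf h𝒜L hμ hY0 hY1 hT''
    rw [le_div_iff₀ hKpos]
    have := mul_le_mul_of_nonneg_left s1 hKpos.le
    linarith
  · rw [div_le_iff₀ hKpos]
    apply lowerSInt_le_of_forall h𝒜Lf
    intro T hT
    set T'' := commonRef T Tp with hT''def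
    have hT'' : IsFinPart 𝒜L T'' := commonRef_isFinPart h𝒜Lf hT hTpp
    have s1 : lowSum H Y μ T ≤ lowSum H Y μ T'' :=
      lowSum_mono_refine hH h𝒜Lf h𝒜L hμ hY0 hT hT'' commonRef_refines_left
    have s2 : μ K * lowSum H X ν T'' = lowSum H Y μ T'' := by
      rw [lowSum, lowSum, Finset.mul_sum]
      exact Finset.sum_congr rfl fun A' hA' => (hterm T hT A' hA').symm
    have s3 : lowSum H X ν T'' ≤ lowerSInt H 𝒜L X ν :=
      lowSum_le_lowerSInt hH h𝒜Lf h𝒜L hνfap hX0 hX1 hT''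
    have := mul_le_mul_of_nonneg_left s3 hKpos.le
    linarith

end Cond

/-! ### Full conditional probabilities from well-ordered chains of FAPs -/

section Chain

variable {τ : Type*} [Nonempty τ] {𝒜 : Set (Set Ω)} {rel : τ → τ → Prop}
  {P : τ → Set Ω → ℝ}

noncomputable def tier (rel : τ → τ → Prop) (hwf : WellFounded rel) [Nonempty τ]
    (P : τ → Set Ω → ℝ) (K : Set Ω) : τ :=
  if h : ∃ t, 0 < P t K then hwf.min {t | 0 < P t K} h else Classical.arbitrary τ

noncomputable def chainQ (rel : τ → τ → Prop) (hwf : WellFounded rel) [Nonempty τ]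
    (P : τ → Set Ω → ℝ) (F K : Set Ω) : ℝ :=
  P (tier rel hwf P K) (F ∩ K) / P (tier rel hwf P K) K

variable (hwf : WellFounded rel)
  (htot : ∀ a b : τ, a = b ∨ rel a b ∨ rel b a)
  (hfield : IsSetField 𝒜) (hP : ∀ t, IsFAP 𝒜 (P t))
  (hcover : ∀ K, K ∈ 𝒜 → K.Nonempty → ∃ t, 0 < P t K)

include hwf hfield hP hcover

theorem tier_pos {K : Set Ω} (hK : K ∈ 𝒜) (hKne : K.Nonempty) :
    0 < P (tier rel hwf P K) K := by
  rw [tier, dif_pos (hcover K hK hKne)]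
  exact hwf.min_mem {t | 0 < P t K} (hcover K hK hKne)

theorem tier_not_lt {K : Set Ω} (hK : K ∈ 𝒜) (hKne : K.Nonempty) {t : τ}
    (ht : 0 < P t K) : ¬rel t (tier rel hwf P K) := by
  rw [tier, dif_pos (hcover K hK hKne)]
  exact hwf.not_lt_min {t | 0 < P t K} ht

/-- characterization of the tier -/
theorem tier_eq {K : Set Ω} (hK : K ∈ 𝒜) (hKne : K.Nonempty) {t₀ : τ}
    (ht₀ : 0 < P t₀ K) (hmin : ∀ t, 0 < P t K → t = t₀ ∨ rel t₀ t) :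
    tier rel hwf P K = t₀ := by
  rcases hmin _ (tier_pos hwf hfield hP hcover hK hKne) with h | h
  · exact h
  · exact absurd h (tier_not_lt hwf hfield hP hcover hK hKne ht₀)

theorem chainQ_fap {K : Set Ω} (hK : K ∈ 𝒜) (hKne : K.Nonempty) :
    IsFAP 𝒜 (fun E => chainQ rel hwf P E K) := by
  have hpos := tier_pos hwf hfield hP hcover hK hKne
  set t := tier rel hwf P K
  refine ⟨?_, ?_, ?_⟩
  · intro A hA
    constructor
    · exact div_nonneg (fap_nonneg (hP t) (field_inter hfield hA hK)) hpos.le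
    · simp only [chainQ]
      rw [div_le_one hpos]
      exact fap_mono hfield (hP t) (field_inter hfield hA hK) hK Set.inter_subset_right
  · simp only [chainQ]
    rw [Set.univ_inter, div_self hpos.ne']
  · intro A hA B hB hd
    simp only [chainQ]
    rw [Set.union_inter_distrib_right,
      fap_union (hP t) (field_inter hfield hA hK) (field_inter hfield hB hK)
        (hd.mono Set.inter_subset_left Set.inter_subset_left), add_div]

include htot in
theorem chainQ_isFCP : IsFCP 𝒜 (chainQ rel hwf P) := by
  refine ⟨?_, ?_, ?_⟩
  · intro E _ K _ _
    simp only [chainQ]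
    rw [Set.inter_assoc, Set.inter_self]
  · intro K hK hKne
    exact chainQ_fap hwf hfield hP hcover hK hKne
  · intro E hE F hF K hK hKne hEKne
    have hEK : E ∩ K ∈ 𝒜 := field_inter hfield hE hK
    have hposK := tier_pos hwf hfield hP hcover hK hKne
    have hposEK := tier_pos hwf hfield hP hcover hEK hEKne
    set t := tier rel hwf P K with htdef
    set t' := tier rel hwf P (E ∩ K) with ht'def
    by_cases hcase : 0 < P t (E ∩ K)
    · -- the tiers coincide
      have hEq : t' = t := by
        rcases htot t' t with h | h | h
        · exact h
        · -- rel t' t impossible : t' has positive mass on K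
          have hpos' : 0 < P t' K := lt_of_lt_of_le hposEK
            (fap_mono hfield (hP t') hEK hK Set.inter_subset_right)
          exact absurd h (tier_not_lt hwf hfield hP hcover hK hKne hpos')
        · exact absurd h (tier_not_lt hwf hfield hP hcover hEK hEKne hcase)
      simp only [chainQ]
      rw [← htdef, ← ht'def, hEq]
      have harr1 : E ∩ F ∩ K = F ∩ (E ∩ K) := by
        ext x; constructor
        · rintro ⟨⟨h1, h2⟩, h3⟩; exact ⟨h2, h1, h3⟩
        · rintro ⟨h1, h2, h3⟩; exact ⟨⟨h2, h1⟩, h3⟩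
      rw [harr1]
      field_simp
    · -- P t (E ∩ K) = 0 : both sides vanish
      have hz : P t (E ∩ K) = 0 := le_antisymm (not_lt.mp hcase)
        (fap_nonneg (hP t) hEK)
      have hz2 : P t (E ∩ F ∩ K) = 0 := by
        apply fap_subset_zero hfield (hP t) (field_inter hfield
          (field_inter hfield hE hF) hK) hEK _ hz
        intro x ⟨⟨h1, _⟩, h3⟩
        exact ⟨h1, h3⟩
      simp only [chainQ]
      rw [← htdef, hz2, hz]
      simp

end Chain

/-! ### A well order with prescribed least element, and the chain index -/

section WO

def baseRel (ω₀ : Ω) : Ω → Ω → Prop :=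
  fun x y => (x = ω₀ ∧ y ≠ ω₀) ∨ (x ≠ ω₀ ∧ y ≠ ω₀ ∧ WellOrderingRel x y)

theorem baseRel_not_lt_min (ω₀ : Ω) (x : Ω) : ¬baseRel ω₀ x ω₀ := by
  rintro (⟨_, h⟩ | ⟨_, h, _⟩) <;> exact h rfl

theorem baseRel_acc_min (ω₀ : Ω) : Acc (baseRel ω₀) ω₀ :=
  ⟨_, fun y hy => absurd hy (baseRel_not_lt_min ω₀ y)⟩ 

theorem baseRel_wf (ω₀ : Ω) : WellFounded (baseRel ω₀) := by
  constructor
  have key : ∀ a : Ω, Acc WellOrderingRel a → Acc (baseRel ω₀) a := by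
    intro a hacc
    induction hacc with
    | intro x hx ih =>
      constructor
      intro y hy
      rcases hy with ⟨hy1, _⟩ | ⟨_, _, hy3⟩
      · exact hy1 ▸ baseRel_acc_min ω₀
      · exact ih y hy3
  exact fun a => key a (IsWellFounded.wf.apply a)

theorem baseRel_total (ω₀ : Ω) (a b : Ω) : a = b ∨ baseRel ω₀ a b ∨ baseRel ω₀ b a := by
  by_cases hab : a = b
  · exact Or.inl hab
  by_cases ha : a = ω₀
  · exact Or.inr (Or.inl (Or.inl ⟨ha, fun hb => hab (ha.trans hb.symm)⟩))
  by_cases hb : b = ω₀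
  · exact Or.inr (Or.inr (Or.inl ⟨hb, ha⟩))
  rcases trichotomous_of WellOrderingRel a b with h | h | h
  · exact Or.inr (Or.inl (Or.inr ⟨ha, hb, h⟩))
  · exact Or.inl h
  · exact Or.inr (Or.inr (Or.inr ⟨hb, ha, h⟩))

theorem baseRel_least (ω₀ : Ω) {ω : Ω} (h : ω ≠ ω₀) : baseRel ω₀ ω₀ ω := Or.inl ⟨rfl, h⟩ 

end WO

def ChainIdx (Ω : Type*) := Option (Ω × Bool)

instance : Nonempty (ChainIdx Ω) := ⟨none⟩ 

def chainRel (r : Ω → Ω → Prop) : ChainIdx Ω → ChainIdx Ω → Prop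
  | none, some _ => True
  | some p, some q => r p.1 q.1 ∨ (p.1 = q.1 ∧ p.2 = false ∧ q.2 = true)
  | _, none => False

theorem chainRel_wf {r : Ω → Ω → Prop} (hwf : WellFounded r) :
    WellFounded (chainRel r) := by
  have hnone : Acc (chainRel r) none := by
    constructor
    intro y hy
    cases y with
    | none => exact hy.elim
    | some p => exact hy.elim
  have key : ∀ ω : Ω, Acc r ω →
      Acc (chainRel r) (some (ω, false)) ∧ Acc (chainRel r) (some (ω, true)) := by
    intro ω hacc
    induction hacc with
    | intro x hx ih =>
      have hf : Acc (chainRel r) (some (x, false)) := by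
        constructor
        rintro (_ | ⟨y, b'⟩) hy
        · exact hnone
        · rcases hy with h | ⟨_, _, h3⟩
          · cases b'
            · exact (ih y h).1
            · exact (ih y h).2
          · exact absurd h3 (by simp)
      have ht : Acc (chainRel r) (some (x, true)) := by
        constructor
        rintro (_ | ⟨y, b'⟩) hy
        · exact hnone
        · rcases hy with h | ⟨h1, h2, _⟩
          · cases b'
            · exact (ih y h).1
            · exact (ih y h).2
          · simp only at h1 h2
            rw [h1, h2]
            exact hf
      exact ⟨hf, ht⟩
  constructor
  rintro (_ | ⟨ω, b⟩)
  · exact hnone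
  · cases b
    · exact (key ω (hwf.apply ω)).1
    · exact (key ω (hwf.apply ω)).2

theorem chainRel_total {r : Ω → Ω → Prop} (htot : ∀ a b, a = b ∨ r a b ∨ r b a) :
    ∀ a b : ChainIdx Ω, a = b ∨ chainRel r a b ∨ chainRel r b a := by
  rintro (_ | ⟨x, bx⟩) (_ | ⟨y, by'⟩)
  · exact Or.inl rfl
  · exact Or.inr (Or.inl trivial)
  · exact Or.inr (Or.inr trivial)
  · rcases htot x y with rfl | h | h
    · cases bx <;> cases by'
      · exact Or.inl rfl
      · exact Or.inr (Or.inl (Or.inr ⟨rfl, rfl, rfl⟩))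
      · exact Or.inr (Or.inr (Or.inr ⟨rfl, rfl, rfl⟩))
      · exact Or.inl rfl
    · exact Or.inr (Or.inl (Or.inl h))
    · exact Or.inr (Or.inr (Or.inl h))

/-! ### The strategic measure -/

noncomputable def stratM (H : ι → Set Ω) (𝒜L : Set (Set Ω)) (σ : Set Ω → ι → ℝ)
    (π : Set Ω → ℝ) : Set Ω → ℝ := fun G => lowerSInt H 𝒜L (fun i => σ G i) π

section StratM

variable [Nonempty Ω] {H : ι → Set Ω} {𝒜L 𝒜 : Set (Set Ω)} {π : Set Ω → ℝ}
  {σ : Set Ω → ι → ℝ}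
  (hH : IsPartition H) (h𝒜L : IsFieldOver H 𝒜L) (h𝒜f : IsSetField 𝒜)
  (hsub : 𝒜L ⊆ 𝒜) (hπ : IsFAP 𝒜L π) (hσ : IsStrategy 𝒜 H σ)
  (hcont : ∀ F ∈ 𝒜, ALContinuous H 𝒜L (fun i => σ F i))

include hH h𝒜L h𝒜f hsub hπ hσ

theorem stratM_eq_pi {B : Set Ω} (hB : B ∈ 𝒜L) : stratM H 𝒜L σ π B = π B :=
  lowerSInt_indicator hH h𝒜L.1 h𝒜L hπ hB
    (fun i => strat_indicator hH h𝒜f h𝒜L hsub hσ hB i)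

theorem stratM_nonneg {F : Set Ω} (hF : F ∈ 𝒜) : 0 ≤ stratM H 𝒜L σ π F :=
  lowerSInt_nonneg hH h𝒜L.1 h𝒜L hπ (strat_nonneg hσ hF) (strat_le_one hσ hF)

theorem stratM_le_one {F : Set Ω} (hF : F ∈ 𝒜) : stratM H 𝒜L σ π F ≤ 1 :=
  lowerSInt_le_one hH h𝒜L.1 h𝒜L hπ (strat_nonneg hσ hF) (strat_le_one hσ hF)

include hcont in
theorem stratM_fap : IsFAP 𝒜 (stratM H 𝒜L σ π) := by
  refine ⟨fun F hF => ⟨stratM_nonneg hH h𝒜L h𝒜f hsub hπ hσ hF,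
    stratM_le_one hH h𝒜L h𝒜f hsub hπ hσ hF⟩, ?_, ?_⟩
  · rw [stratM_eq_pi hH h𝒜L h𝒜f hsub hπ hσ h𝒜L.1.1, fap_univ hπ]
  · intro A hA B hB hd
    have hAB : A ∪ B ∈ 𝒜 := field_union h𝒜f hA hB
    have hpw : ∀ i, σ (A ∪ B) i = σ A i + σ B i :=
      fun i => fap_union (strat_fap hσ i) hA hB hd
    have h1 : stratM H 𝒜L σ π (A ∪ B) =
        lowerSInt H 𝒜L (fun i => σ A i + σ B i) π := by
      rw [stratM]
      exact lowerSInt_congr_X hpw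
    rw [h1]
    exact le_antisymm
      (lowerSInt_add_le hH h𝒜L.1 h𝒜L hπ (strat_nonneg hσ hA) (strat_le_one hσ hA)
        (strat_nonneg hσ hB) (strat_le_one hσ hB) (hcont B hB))
      (le_lowerSInt_add hH h𝒜L.1 h𝒜L hπ (strat_nonneg hσ hA) (strat_le_one hσ hA)
        (strat_nonneg hσ hB) (strat_le_one hσ hB))

theorem stratM_atom {F : Set Ω} (hF : F ∈ 𝒜) (i : ι) :
    stratM H 𝒜L σ π (F ∩ H i) = σ F i * π (H i) := by
  have hHi𝒜 : H i ∈ 𝒜 := hsub (h𝒜L.2.1 i)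
  apply lowerSInt_atom hH h𝒜L.1 h𝒜L hπ h𝒜L.2.1 (strat_nonneg hσ hF i)
    (strat_le_one hσ hF i)
  · exact strat_inter_eq h𝒜f hσ hF hHi𝒜 (subset_refl _)
  · intro j hj
    apply strat_zero h𝒜f hσ (field_inter h𝒜f hF hHi𝒜)
    rw [Set.eq_empty_iff_forall_notMem]
    rintro x ⟨⟨_, hx2⟩, hx3⟩
    exact Set.disjoint_iff.mp (hH.2.1 hj) ⟨hx3, hx2⟩ 

end StratM

/-! ### The canonical fully disintegrable extension -/

section Construction

variable [Nonempty Ω] {H : ι → Set Ω} {𝒜L 𝒜 : Set (Set Ω)} {π : Set Ω → ℝ}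
  {σ : Set Ω → ι → ℝ}

noncomputable def pieceIdx (hH : IsPartition H) (ω : Ω) : ι := (piece_exists hH ω).choose

theorem pieceIdx_spec (hH : IsPartition H) (ω : Ω) : ω ∈ H (pieceIdx hH ω) :=
  (piece_exists hH ω).choose_spec

noncomputable def chainP (𝒜L : Set (Set Ω)) (π : Set Ω → ℝ) (σ : Set Ω → ι → ℝ)
    (hH : IsPartition H) : ChainIdx Ω → Set Ω → ℝ
  | none => stratM H 𝒜L σ π
  | some (ω, false) => fun G => σ G (pieceIdx hH ω)
  | some (ω, true) => fun G => if ω ∈ G then 1 else 0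

noncomputable def QQ (𝒜L : Set (Set Ω)) (π : Set Ω → ℝ) (σ : Set Ω → ι → ℝ)
    (hH : IsPartition H) (ω₀ : Ω) : Set Ω → Set Ω → ℝ :=
  chainQ (chainRel (baseRel ω₀)) (chainRel_wf (baseRel_wf ω₀)) (chainP 𝒜L π σ hH)

theorem delta_fap (h𝒜f : IsSetField 𝒜) (ω : Ω) :
    IsFAP 𝒜 (fun G => if ω ∈ G then 1 else 0) := by
  refine ⟨fun A _ => by by_cases h : ω ∈ A <;> simp [h], by simp, ?_⟩
  intro A hA B hB hd
  by_cases hA' : ω ∈ A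
  · have hB' : ω ∉ B := fun hB' => Set.disjoint_iff.mp hd ⟨hA', hB'⟩
    simp [Set.mem_union, hA', hB']
  · by_cases hB' : ω ∈ B <;> simp [Set.mem_union, hA', hB']

variable (hH : IsPartition H) (h𝒜L : IsFieldOver H 𝒜L) (h𝒜f : IsSetField 𝒜)
  (hsub : 𝒜L ⊆ 𝒜) (hπ : IsFAP 𝒜L π) (hσ : IsStrategy 𝒜 H σ)
  (hcont : ∀ F ∈ 𝒜, ALContinuous H 𝒜L (fun i => σ F i))

include hH h𝒜L h𝒜f hsub hπ hσ hcont

theorem chainP_fap : ∀ t, IsFAP 𝒜 (chainP 𝒜L π σ hH t) := by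
  rintro (_ | ⟨ω, b⟩)
  · exact stratM_fap hH h𝒜L h𝒜f hsub hπ hσ hcont
  · cases b
    · exact strat_fap hσ (pieceIdx hH ω)
    · exact delta_fap h𝒜f ω

theorem chainP_cover : ∀ K, K ∈ 𝒜 → K.Nonempty → ∃ t, 0 < chainP 𝒜L π σ hH t K := by
  intro K _ ⟨ω, hω⟩
  exact ⟨some (ω, true), by simp [chainP, hω]⟩ 

/-- when the strategic measure is positive the tier is the root -/
theorem QQ_pos_eval {K : Set Ω} (hK : K ∈ 𝒜) (hKne : K.Nonempty)
    (hpos : 0 < stratM H 𝒜L σ π K) (ω₀ : Ω) (F : Set Ω) :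
    QQ 𝒜L π σ hH ω₀ F K =
      stratM H 𝒜L σ π (F ∩ K) / stratM H 𝒜L σ π K := by
  have htier : tier (chainRel (baseRel ω₀)) (chainRel_wf (baseRel_wf ω₀))
      (chainP 𝒜L π σ hH) K = none := by
    refine tier_eq (chainRel_wf (baseRel_wf ω₀)) h𝒜f
      (chainP_fap hH h𝒜L h𝒜f hsub hπ hσ hcont)
      (chainP_cover hH h𝒜L h𝒜f hsub hπ hσ hcont) hK hKne (t₀ := none) hpos ?_
    rintro (_ | ⟨ω, b⟩) _
    · exact Or.inl rfl
    · exact Or.inr trivial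
  rw [QQ, chainQ, htier]
  rfl

theorem piece_subset_of_mem {K : Set Ω} (hK : K ∈ 𝒜L) {ω : Ω} (hω : ω ∈ K) :
    H (pieceIdx hH ω) ⊆ K := by
  rcases AL_subset_or_disjoint hH h𝒜L hK (pieceIdx hH ω) with h | h
  · exact h
  · exact absurd (Set.mem_inter hω (pieceIdx_spec hH ω)) (by simp [h])

/-- in the null case the tier is a strategy tier concentrated on a piece inside `K` -/
theorem QQ_null_eval {K : Set Ω} (hK : K ∈ 𝒜L) (hKne : K.Nonempty) (hπK : π K = 0)
    (ω₀ : Ω) :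
    ∃ i, H i ⊆ K ∧ ∀ F ∈ 𝒜, QQ 𝒜L π σ hH ω₀ F K = σ F i := by
  have hK𝒜 : K ∈ 𝒜 := hsub hK
  have hfap := chainP_fap hH h𝒜L h𝒜f hsub hπ hσ hcont
  have hcov := chainP_cover hH h𝒜L h𝒜f hsub hπ hσ hcont
  have hM0 : stratM H 𝒜L σ π K = 0 := by
    rw [stratM_eq_pi hH h𝒜L h𝒜f hsub hπ hσ hK, hπK]
  have hpos : 0 < chainP 𝒜L π σ hH (tier (chainRel (baseRel ω₀))
      (chainRel_wf (baseRel_wf ω₀)) (chainP 𝒜L π σ hH) K) K :=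
    tier_pos (chainRel_wf (baseRel_wf ω₀)) h𝒜f hfap hcov hK𝒜 hKne
  match htt : tier (chainRel (baseRel ω₀)) (chainRel_wf (baseRel_wf ω₀))
      (chainP 𝒜L π σ hH) K with
  | none =>
    rw [htt] at hpos
    rw [show chainP 𝒜L π σ hH none K = stratM H 𝒜L σ π K from rfl, hM0] at hpos
    exact absurd hpos (lt_irrefl 0)
  | some (ω, true) =>
    -- impossible: the strategy tier of the same point comes earlier
    exfalso
    rw [htt] at hpos
    have hωK : ω ∈ K := by
      by_contra hc
      rw [show chainP 𝒜L π σ hH (some (ω, true)) K = (if ω ∈ K then 1 else 0) from rfl,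
        if_neg hc] at hpos
      exact absurd hpos (lt_irrefl 0)
    have hiK : H (pieceIdx hH ω) ⊆ K := piece_subset_of_mem hH h𝒜L h𝒜f hsub hπ hσ hcont hK hωK
    have hpos' : 0 < chainP 𝒜L π σ hH (some (ω, false)) K := by
      rw [show chainP 𝒜L π σ hH (some (ω, false)) K = σ K (pieceIdx hH ω) from rfl,
        strat_one hσ hK𝒜 hiK]
      norm_num
    have hrel : chainRel (baseRel ω₀) (some (ω, false)) (some (ω, true)) :=
      Or.inr ⟨rfl, rfl, rfl⟩
    have hnl := tier_not_lt (chainRel_wf (baseRel_wf ω₀)) h𝒜f hfap hcov hK𝒜 hKne hpos'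
    rw [htt] at hnl
    exact hnl hrel
  | some (ω, false) =>
    rw [htt] at hpos
    have hσpos : 0 < σ K (pieceIdx hH ω) := hpos
    have hiK : H (pieceIdx hH ω) ⊆ K := by
      rcases AL_subset_or_disjoint hH h𝒜L hK (pieceIdx hH ω) with h | h
      · exact h
      · rw [strat_zero h𝒜f hσ hK𝒜 h] at hσpos
        exact absurd hσpos (lt_irrefl 0)
    refine ⟨pieceIdx hH ω, hiK, ?_⟩
    intro F hF
    have h1 : σ K (pieceIdx hH ω) = 1 := strat_one hσ hK𝒜 hiK
    have h2 : σ (F ∩ K) (pieceIdx hH ω) = σ F (pieceIdx hH ω) :=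
      strat_inter_eq h𝒜f hσ hF hK𝒜 hiK
    rw [QQ, chainQ, htt,
      show chainP 𝒜L π σ hH (some (ω, false)) (F ∩ K) = σ (F ∩ K) (pieceIdx hH ω) from rfl,
      show chainP 𝒜L π σ hH (some (ω, false)) K = σ K (pieceIdx hH ω) from rfl, h1, h2,
      div_one]

/-- if additionally `ω₀ ∈ K`, the selected piece is the piece of `ω₀` -/
theorem QQ_null_eval_least {K : Set Ω} (hK : K ∈ 𝒜L) (hKne : K.Nonempty) (hπK : π K = 0)
    {ω₀ : Ω} (hω₀ : ω₀ ∈ K) (F : Set Ω) (hF : F ∈ 𝒜) :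
    QQ 𝒜L π σ hH ω₀ F K = σ F (pieceIdx hH ω₀) := by
  have hK𝒜 : K ∈ 𝒜 := hsub hK
  have hfap := chainP_fap hH h𝒜L h𝒜f hsub hπ hσ hcont
  have hcov := chainP_cover hH h𝒜L h𝒜f hsub hπ hσ hcont
  have hiK : H (pieceIdx hH ω₀) ⊆ K := piece_subset_of_mem hH h𝒜L h𝒜f hsub hπ hσ hcont hK hω₀
  have h1 : σ K (pieceIdx hH ω₀) = 1 := strat_one hσ hK𝒜 hiK
  have htier : tier (chainRel (baseRel ω₀)) (chainRel_wf (baseRel_wf ω₀))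
      (chainP 𝒜L π σ hH) K = some (ω₀, false) := by
    refine tier_eq (chainRel_wf (baseRel_wf ω₀)) h𝒜f hfap hcov hK𝒜 hKne
      (t₀ := some (ω₀, false)) ?_ ?_
    · rw [show chainP 𝒜L π σ hH (some (ω₀, false)) K = σ K (pieceIdx hH ω₀) from rfl, h1]
      norm_num
    · rintro (_ | ⟨ω, b⟩) ht
      · -- root has zero mass
        exfalso
        rw [show chainP 𝒜L π σ hH none K = stratM H 𝒜L σ π K from rfl,
          stratM_eq_pi hH h𝒜L h𝒜f hsub hπ hσ hK, hπK] at ht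
        exact absurd ht (lt_irrefl 0)
      · by_cases hωeq : ω = ω₀
        · subst hωeq
          cases b
          · exact Or.inl rfl
          · exact Or.inr (Or.inr ⟨rfl, rfl, rfl⟩)
        · exact Or.inr (Or.inl (baseRel_least ω₀ hωeq))
  rw [QQ, chainQ, htier,
    show chainP 𝒜L π σ hH (some (ω₀, false)) (F ∩ K) = σ (F ∩ K) (pieceIdx hH ω₀) from rfl,
    show chainP 𝒜L π σ hH (some (ω₀, false)) K = σ K (pieceIdx hH ω₀) from rfl, h1,
    strat_inter_eq h𝒜f hσ hF hK𝒜 hiK, div_one]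

end Construction

/-! ### Membership of the construction in `QfdSet`, and envelope values -/

section Envelope

variable [Nonempty Ω] {H : ι → Set Ω} {𝒜L 𝒜 : Set (Set Ω)} {π : Set Ω → ℝ}
  {σ : Set Ω → ι → ℝ}
  (hH : IsPartition H) (h𝒜L : IsFieldOver H 𝒜L) (h𝒜f : IsSetField 𝒜)
  (hsub : 𝒜L ⊆ 𝒜) (hπ : IsFAP 𝒜L π) (hσ : IsStrategy 𝒜 H σ)
  (hcont : ∀ F ∈ 𝒜, ALContinuous H 𝒜L (fun i => σ F i))

theorem fap_restrict {μ : Set Ω → ℝ} (hsub' : 𝒜L ⊆ 𝒜) (h : IsFAP 𝒜 μ) : IsFAP 𝒜L μ :=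
  ⟨fun A hA => h.1 A (hsub' hA), h.2.1,
    fun A hA B hB hd => h.2.2 A (hsub' hA) B (hsub' hB) hd⟩ 

include hH h𝒜L h𝒜f hsub hπ hσ hcont

theorem QQ_mem (ω₀ : Ω) : QQ 𝒜L π σ hH ω₀ ∈ QfdSet 𝒜 𝒜L H π σ := by
  have hfap := chainP_fap hH h𝒜L h𝒜f hsub hπ hσ hcont
  have hcov := chainP_cover hH h𝒜L h𝒜f hsub hπ hσ hcont
  refine ⟨chainQ_isFCP (chainRel_wf (baseRel_wf ω₀))
    (chainRel_total (baseRel_total ω₀)) h𝒜f hfap hcov, ⟨?_, ?_⟩, ?_⟩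
  · -- extends the prior
    intro B hB
    have huniv : (Set.univ : Set Ω) ∈ 𝒜L := h𝒜L.1.1
    have hpos : 0 < stratM H 𝒜L σ π Set.univ := by
      rw [stratM_eq_pi hH h𝒜L h𝒜f hsub hπ hσ huniv, fap_univ hπ]
      norm_num
    rw [QQ_pos_eval hH h𝒜L h𝒜f hsub hπ hσ hcont h𝒜f.1 Set.univ_nonempty hpos ω₀ B,
      Set.inter_univ, stratM_eq_pi hH h𝒜L h𝒜f hsub hπ hσ huniv, fap_univ hπ, div_one,
      stratM_eq_pi hH h𝒜L h𝒜f hsub hπ hσ hB]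
  · -- extends the strategy
    intro F hF i
    have hHiL : H i ∈ 𝒜L := h𝒜L.2.1 i
    have hne : (H i).Nonempty := hH.1 i
    rcases (fap_nonneg hπ hHiL).eq_or_lt with h0 | hpos
    · obtain ⟨j, hjsub, hval⟩ := QQ_null_eval hH h𝒜L h𝒜f hsub hπ hσ hcont hHiL hne
        h0.symm ω₀
      rw [hval F hF, piece_subset_unique hH hjsub]
    · have hpos' : 0 < stratM H 𝒜L σ π (H i) := by
        rwa [stratM_eq_pi hH h𝒜L h𝒜f hsub hπ hσ hHiL]
      rw [QQ_pos_eval hH h𝒜L h𝒜f hsub hπ hσ hcont (hsub hHiL) hne hpos' ω₀ F,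
        stratM_atom hH h𝒜L h𝒜f hsub hπ hσ hF i,
        stratM_eq_pi hH h𝒜L h𝒜f hsub hπ hσ hHiL]
      field_simp
  · -- full disintegrability
    intro F hF K hK hKne
    rcases (fap_nonneg hπ hK).eq_or_lt with h0 | hpos
    · obtain ⟨i, hiK, hval⟩ := QQ_null_eval hH h𝒜L h𝒜f hsub hπ hσ hcont hK hKne h0.symm ω₀
      rw [hval F hF]
      refine (lowerSInt_delta hH h𝒜L.1 h𝒜L h𝒜L.2.1 (i₀ := i) (strat_nonneg hσ hF)
        (strat_le_one hσ hF) ?_).symm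
      intro B hB
      rw [hval B (hsub hB)]
      exact strat_indicator hH h𝒜f h𝒜L hsub hσ hB i
    · have hMK : stratM H 𝒜L σ π K = π K := stratM_eq_pi hH h𝒜L h𝒜f hsub hπ hσ hK
      have hpos' : 0 < stratM H 𝒜L σ π K := by rwa [hMK]
      have hK𝒜 : K ∈ 𝒜 := hsub hK
      have hFK𝒜 : F ∩ K ∈ 𝒜 := field_inter h𝒜f hF hK𝒜
      have hν : ∀ B ∈ 𝒜L, QQ 𝒜L π σ hH ω₀ B K = π (B ∩ K) / π K := by
        intro B hB
        rw [QQ_pos_eval hH h𝒜L h𝒜f hsub hπ hσ hcont hK𝒜 hKne hpos' ω₀ B,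
          stratM_eq_pi hH h𝒜L h𝒜f hsub hπ hσ (field_inter h𝒜L.1 hB hK), hMK]
      have hXY : ∀ i, H i ⊆ K → σ (F ∩ K) i = σ F i :=
        fun i hi => strat_inter_eq h𝒜f hσ hF hK𝒜 hi
      have hYz : ∀ i, H i ⊆ Kᶜ → σ (F ∩ K) i = 0 := by
        intro i hi
        apply strat_zero h𝒜f hσ hFK𝒜
        rw [Set.eq_empty_iff_forall_notMem]
        rintro x ⟨⟨_, hx2⟩, hx3⟩
        exact hi hx3 hx2
      rw [QQ_pos_eval hH h𝒜L h𝒜f hsub hπ hσ hcont hK𝒜 hKne hpos' ω₀ F,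
        lowerSInt_cond hH h𝒜L.1 h𝒜L hπ hK hpos (strat_nonneg hσ hF) (strat_le_one hσ hF)
          (strat_nonneg hσ hFK𝒜) (strat_le_one hσ hFK𝒜) hXY hYz hν, hMK]
      rfl

theorem fcp_cond_self {Q : Set Ω → Set Ω → ℝ} (hfcp : IsFCP 𝒜 Q) {K : Set Ω}
    (hK : K ∈ 𝒜) (hKne : K.Nonempty) : Q K K = 1 := by
  have h1 := hfcp.1 Set.univ h𝒜f.1 K hK hKne
  rw [Set.univ_inter] at h1
  rw [← h1, fap_univ (hfcp.2.1 K hK hKne)]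

theorem fcp_compl_self {Q : Set Ω → Set Ω → ℝ} (hfcp : IsFCP 𝒜 Q) {K : Set Ω}
    (hK : K ∈ 𝒜) (hKne : K.Nonempty) : Q Kᶜ K = 1 - 1 := by
  have h1 := hfcp.1 Kᶜ (field_compl h𝒜f hK) K hK hKne
  rw [Set.compl_inter_self] at h1
  rw [h1, fap_empty h𝒜f (hfcp.2.1 K hK hKne)]
  norm_num

theorem mem_value_one {Q : Set Ω → Set Ω → ℝ} (hQ : Q ∈ QfdSet 𝒜 𝒜L H π σ)
    {F K : Set Ω} (hF : F ∈ 𝒜) (hK : K ∈ 𝒜L) (hKne : K.Nonempty) (hFK : F ∩ K = K) :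
    Q F K = 1 := by
  obtain ⟨hfcp, _, _⟩ := hQ
  have h1 := hfcp.1 F hF K (hsub hK) hKne
  rw [hFK] at h1
  rw [h1]
  exact fcp_cond_self hH h𝒜L h𝒜f hsub hπ hσ hcont hfcp (hsub hK) hKne

theorem mem_value_pos {Q : Set Ω → Set Ω → ℝ} (hQ : Q ∈ QfdSet 𝒜 𝒜L H π σ)
    {F K : Set Ω} (hF : F ∈ 𝒜) (hK : K ∈ 𝒜L) (hKne : K.Nonempty) (hπK : 0 < π K) :
    Q F K = lowerSInt H 𝒜L (fun i => σ (F ∩ K) i) π / π K := by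
  obtain ⟨hfcp, ⟨hext1, _⟩, hdis⟩ := hQ
  have hK𝒜 : K ∈ 𝒜 := hsub hK
  have hFK𝒜 : F ∩ K ∈ 𝒜 := field_inter h𝒜f hF hK𝒜
  have hQB : ∀ B ∈ 𝒜L, Q B K = π (B ∩ K) / π K := by
    intro B hB
    have hC3 := hfcp.2.2 K hK𝒜 B (hsub hB) Set.univ h𝒜f.1 Set.univ_nonempty
      (by rwa [Set.inter_univ])
    rw [Set.inter_univ, hext1 K hK, hext1 (K ∩ B) (field_inter h𝒜L.1 hK hB)] at hC3
    rw [Set.inter_comm B K, hC3]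
    field_simp
  have hXY : ∀ i, H i ⊆ K → σ (F ∩ K) i = σ F i :=
    fun i hi => strat_inter_eq h𝒜f hσ hF hK𝒜 hi
  have hYz : ∀ i, H i ⊆ Kᶜ → σ (F ∩ K) i = 0 := by
    intro i hi
    apply strat_zero h𝒜f hσ hFK𝒜
    rw [Set.eq_empty_iff_forall_notMem]
    rintro x ⟨⟨_, hx2⟩, hx3⟩
    exact hi hx3 hx2
  rw [hdis F hF K hK hKne,
    lowerSInt_congr_mu (ν := fun B => π (B ∩ K) / π K) hQB,
    lowerSInt_cond hH h𝒜L.1 h𝒜L hπ hK hπK (strat_nonneg hσ hF) (strat_le_one hσ hF)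
      (strat_nonneg hσ hFK𝒜) (strat_le_one hσ hFK𝒜) hXY hYz (fun B _ => rfl)]

theorem mem_value_null_ge {Q : Set Ω → Set Ω → ℝ} (hQ : Q ∈ QfdSet 𝒜 𝒜L H π σ)
    {F K : Set Ω} (hF : F ∈ 𝒜) (hK : K ∈ 𝒜L) (hKne : K.Nonempty) :
    sInf {x | ∃ i, H i ⊆ K ∧ x = σ F i} ≤ Q F K := by
  classical
  obtain ⟨hfcp, _, hdis⟩ := hQ
  have hK𝒜 : K ∈ 𝒜 := hsub hK
  have hQfapL : IsFAP 𝒜L (fun B => Q B K) :=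
    fap_restrict hsub (hfcp.2.1 K hK𝒜 hKne)
  have hQK1 : Q K K = 1 := fcp_cond_self hH h𝒜L h𝒜f hsub hπ hσ hcont hfcp hK𝒜 hKne
  have hQKc : Q Kᶜ K = 1 - 1 := fcp_compl_self hH h𝒜L h𝒜f hsub hπ hσ hcont hfcp hK𝒜 hKne
  have hpart := isFinPart_pair (𝒜L := 𝒜L) h𝒜L.1 hK
  have hle := lowSum_le_lowerSInt hH h𝒜L.1 h𝒜L hQfapL (strat_nonneg hσ hF)
    (strat_le_one hσ hF) hpart
  rw [lowSum_pair (fap_empty h𝒜L.1 hQfapL)] at hle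
  rw [hdis F hF K hK hKne]
  refine le_trans ?_ hle
  rw [hQK1, hQKc]
  have : infOn H (fun i => σ F i) K = sInf {x | ∃ i, H i ⊆ K ∧ x = σ F i} := rfl
  rw [← this]
  ring_nf
  nlinarith [infOn_nonneg' (H := H) (strat_nonneg hσ hF) K]

end Envelope

end S7
/-- closed form of `Q^fd_*(F|K)` for conditioning events `K ∈ 𝒜L⁰`. -/
theorem statement7 {Ω ι κ : Type*} [Nonempty Ω] (H : ι → Set Ω) (E : κ → Set Ω)
    (𝒜L 𝒜E 𝒜 : Set (Set Ω))
    (hH : IsPartition H) (hE : IsPartition E)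
    (h𝒜L : IsFieldOver H 𝒜L) (h𝒜E : IsFieldOver E 𝒜E)
    (h𝒜 : IsJointField H E 𝒜L 𝒜E 𝒜)
    (π : Set Ω → ℝ) (hπ : IsFAP 𝒜L π)
    (σ : Set Ω → ι → ℝ) (hσ : IsStrategy 𝒜 H σ)
    (hcont : ∀ F ∈ 𝒜, ALContinuous H 𝒜L fun i => σ F i)
    (F K : Set Ω) (hF : F ∈ 𝒜) (hK : K ∈ 𝒜L) (hKne : K.Nonempty) :
    (F ∩ K = K → lowEnv (QfdSet 𝒜 𝒜L H π σ) F K = 1) ∧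
    (F ∩ K ≠ K →
      (0 < π K → lowEnv (QfdSet 𝒜 𝒜L H π σ) F K =
        lowerSInt H 𝒜L (fun i => σ (F ∩ K) i) π / π K) ∧
      (π K = 0 → lowEnv (QfdSet 𝒜 𝒜L H π σ) F K =
        sInf {x | ∃ i, H i ⊆ K ∧ x = σ F i})) := by
  classical
  have h𝒜f : IsSetField 𝒜 := h𝒜.1
  have hsub : 𝒜L ⊆ 𝒜 := h𝒜.2.1
  have hmem : ∀ ω₀ : Ω, S7.QQ 𝒜L π σ hH ω₀ ∈ QfdSet 𝒜 𝒜L H π σ :=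
    fun ω₀ => S7.QQ_mem hH h𝒜L h𝒜f hsub hπ hσ hcont ω₀
  obtain ⟨ωd⟩ := ‹Nonempty Ω›
  have hne_img : ((fun P => P F K) '' QfdSet 𝒜 𝒜L H π σ).Nonempty :=
    ⟨_, Set.mem_image_of_mem _ (hmem ωd)⟩
  have hbdd : BddBelow ((fun P => P F K) '' QfdSet 𝒜 𝒜L H π σ) := by
    refine ⟨0, ?_⟩
    rintro y ⟨Q, hQ, rfl⟩
    exact ((hQ.1.2.1 K (hsub hK) hKne).1 F hF).1
  constructor
  · intro hFK
    have himg : (fun P => P F K) '' QfdSet 𝒜 𝒜L H π σ = {1} := by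
      apply Set.Subset.antisymm
      · rintro y ⟨Q, hQ, rfl⟩
        exact S7.mem_value_one hH h𝒜L h𝒜f hsub hπ hσ hcont hQ hF hK hKne hFK
      · rintro y hy
        rw [Set.mem_singleton_iff] at hy
        subst hy
        exact ⟨_, hmem ωd,
          S7.mem_value_one hH h𝒜L h𝒜f hsub hπ hσ hcont (hmem ωd) hF hK hKne hFK⟩
    rw [lowEnv, himg]
    exact csInf_singleton 1
  · intro _
    constructor
    · intro hπK
      have himg : (fun P => P F K) '' QfdSet 𝒜 𝒜L H π σ =
          {lowerSInt H 𝒜L (fun i => σ (F ∩ K) i) π / π K} := by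
        apply Set.Subset.antisymm
        · rintro y ⟨Q, hQ, rfl⟩
          exact S7.mem_value_pos hH h𝒜L h𝒜f hsub hπ hσ hcont hQ hF hK hKne hπK
        · rintro y hy
          rw [Set.mem_singleton_iff] at hy
          subst hy
          exact ⟨_, hmem ωd,
            S7.mem_value_pos hH h𝒜L h𝒜f hsub hπ hσ hcont (hmem ωd) hF hK hKne hπK⟩
      rw [lowEnv, himg]
      exact csInf_singleton _
    · intro hπK0
      refine le_antisymm ?_ ?_
      · -- upper bound: approach the infimum with suitable constructions
        apply le_of_forall_pos_le_add
        intro ε hε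
        have hsetne : {x | ∃ i, H i ⊆ K ∧ x = σ F i}.Nonempty := by
          obtain ⟨i, hi⟩ := S7.AL_exists_piece hH h𝒜L hK hKne
          exact ⟨σ F i, i, hi, rfl⟩
        obtain ⟨x, hxmem, hxlt⟩ := exists_lt_of_csInf_lt hsetne
          (lt_add_of_pos_right (sInf {x | ∃ i, H i ⊆ K ∧ x = σ F i}) hε)
        obtain ⟨i, hiK, rfl⟩ := hxmem
        obtain ⟨ω₀, hω₀⟩ := hH.1 i
        have hval : S7.QQ 𝒜L π σ hH ω₀ F K = σ F i := by
          have h := S7.QQ_null_eval_least hH h𝒜L h𝒜f hsub hπ hσ hcont hK hKne hπK0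
            (hiK hω₀) F hF
          rwa [show S7.pieceIdx hH ω₀ = i from
            S7.piece_unique hH (S7.pieceIdx_spec hH ω₀) hω₀] at h
        have hmemv : σ F i ∈ (fun P => P F K) '' QfdSet 𝒜 𝒜L H π σ :=
          ⟨_, hmem ω₀, hval⟩
        calc lowEnv (QfdSet 𝒜 𝒜L H π σ) F K ≤ σ F i := csInf_le hbdd hmemv
          _ ≤ sInf {x | ∃ i, H i ⊆ K ∧ x = σ F i} + ε := hxlt.le
      · -- lower bound
        apply le_csInf hne_img
        rintro y ⟨Q, hQ, rfl⟩
        exact S7.mem_value_null_ge hH h𝒜L h𝒜f hsub hπ hσ hcont hQ hF hK hKne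
end

section
/- For every F ∈ 𝒜 (without any integrability or continuity assumption on σ(F|·)): P^j_*(F) ≤ ∫_* σ(F|H_i) π(dH_i) and ∫^* σ(F|H_i) π(dH_i) ≤ P^{j*}(F). -/
open Set

open scoped Classical

variable {Ω : Type*}

/-! ### Auxiliary development for Statement 9 -/

section Aux9

variable {ι : Type*}

/- Basic field lemmas -/

lemma aux9_field_empty {𝒜 : Set (Set Ω)} (h : IsSetField 𝒜) : (∅ : Set Ω) ∈ 𝒜 := by
  have := h.2.1 _ h.1
  simpa using this

lemma aux9_field_inter {𝒜 : Set (Set Ω)} (h : IsSetField 𝒜) {A B : Set Ω}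
    (hA : A ∈ 𝒜) (hB : B ∈ 𝒜) : A ∩ B ∈ 𝒜 := by
  have : (Aᶜ ∪ Bᶜ)ᶜ ∈ 𝒜 := h.2.1 _ (h.2.2 _ (h.2.1 _ hA) _ (h.2.1 _ hB))
  simpa [Set.compl_union] using this

lemma aux9_fap_empty {𝒜 : Set (Set Ω)} {P : Set Ω → ℝ} (hf : IsSetField 𝒜)
    (hP : IsFAP 𝒜 P) : P ∅ = 0 := by
  have h := hP.2.2 ∅ (aux9_field_empty hf) ∅ (aux9_field_empty hf) (by simp)
  simp only [Set.union_empty] at h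
  linarith

lemma aux9_fap_compl {𝒜 : Set (Set Ω)} {P : Set Ω → ℝ} (hf : IsSetField 𝒜)
    (hP : IsFAP 𝒜 P) {A : Set Ω} (hA : A ∈ 𝒜) : P Aᶜ = 1 - P A := by
  have h := hP.2.2 A hA Aᶜ (hf.2.1 _ hA) disjoint_compl_right
  rw [Set.union_compl_self] at h
  rw [hP.2.1] at h
  linarith

lemma aux9_fap_mono {𝒜 : Set (Set Ω)} {P : Set Ω → ℝ} (hf : IsSetField 𝒜)
    (hP : IsFAP 𝒜 P) {A B : Set Ω} (hA : A ∈ 𝒜) (hB : B ∈ 𝒜) (hAB : A ⊆ B) :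
    P A ≤ P B := by
  have hBA : B ∩ Aᶜ ∈ 𝒜 := aux9_field_inter hf hB (hf.2.1 _ hA)
  have h := hP.2.2 A hA _ hBA (by simp [Set.disjoint_iff_inter_eq_empty]; ext x; simp; tauto)
  have hU : A ∪ B ∩ Aᶜ = B := by
    ext x; simp; constructor
    · rintro (h | h); exacts [hAB h, h.1]
    · intro hx; by_cases hxA : x ∈ A <;> tauto
  rw [hU] at h
  have := (hP.1 _ hBA).1
  linarith

/-- finite unions of field members -/
lemma aux9_field_sUnion {𝒜 : Set (Set Ω)} (hf : IsSetField 𝒜) (T : Finset (Set Ω))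
    (hT : ∀ A ∈ T, A ∈ 𝒜) : ⋃₀ (↑T : Set (Set Ω)) ∈ 𝒜 := by
  classical
  induction T using Finset.induction_on with
  | empty => simpa using aux9_field_empty hf
  | @insert A T _ ih =>
    rw [Finset.coe_insert, Set.sUnion_insert]
    exact hf.2.2 _ (hT A (Finset.mem_insert_self _ _)) _
      (ih fun B hB => hT B (Finset.mem_insert_of_mem hB))

/-- splitting a set over a finite disjoint family covering it -/
lemma aux9_fap_split {𝒜 : Set (Set Ω)} {P : Set Ω → ℝ} (hf : IsSetField 𝒜)
    (hP : IsFAP 𝒜 P) (T : Finset (Set Ω)) (hT : ∀ A ∈ T, A ∈ 𝒜)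
    (hdisj : ∀ A ∈ T, ∀ B ∈ T, A ≠ B → Disjoint A B) :
    ∀ A ∈ 𝒜, A ⊆ ⋃₀ (↑T : Set (Set Ω)) → P A = ∑ B ∈ T, P (A ∩ B) := by
  classical
  induction T using Finset.induction_on with
  | empty =>
    intro A _ hsub
    simp only [Finset.coe_empty, Set.sUnion_empty, Set.subset_empty_iff] at hsub
    subst hsub
    simpa using aux9_fap_empty hf hP
  | @insert B T hBT ih =>
    intro A hA hsub
    have hTmem : ∀ C ∈ T, C ∈ 𝒜 := fun C hC => hT C (Finset.mem_insert_of_mem hC)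
    have hUT : ⋃₀ (↑T : Set (Set Ω)) ∈ 𝒜 := aux9_field_sUnion hf T hTmem
    have hAB : A ∩ B ∈ 𝒜 := aux9_field_inter hf hA (hT B (Finset.mem_insert_self _ _))
    have hAT : A ∩ ⋃₀ (↑T : Set (Set Ω)) ∈ 𝒜 := aux9_field_inter hf hA hUT
    have hBdisj : ∀ C ∈ T, Disjoint B C := fun C hC =>
      hdisj B (Finset.mem_insert_self _ _) C (Finset.mem_insert_of_mem hC)
        (fun h => hBT (h ▸ hC))
    have hdisj2 : Disjoint (A ∩ B) (A ∩ ⋃₀ (↑T : Set (Set Ω))) := by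
      rw [Set.disjoint_iff_inter_eq_empty]
      ext x
      simp only [Set.mem_inter_iff, Set.mem_sUnion, Finset.mem_coe, Set.mem_empty_iff_false,
        iff_false]
      rintro ⟨⟨-, hxB⟩, -, C, hC, hxC⟩
      exact ((hBdisj C hC).le_bot ⟨hxB, hxC⟩)
    have hU : A ∩ B ∪ A ∩ ⋃₀ (↑T : Set (Set Ω)) = A := by
      rw [← Set.inter_union_distrib_left]
      refine Set.inter_eq_left.mpr ?_
      intro x hx
      rcases hsub hx with ⟨C, hC, hxC⟩
      rw [Finset.coe_insert, Set.mem_insert_iff] at hC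
      rcases hC with rfl | hC
      · exact Or.inl hxC
      · exact Or.inr ⟨C, hC, hxC⟩
    have hadd := hP.2.2 _ hAB _ hAT hdisj2
    rw [hU] at hadd
    have hih := ih hTmem (fun C hC D hD hCD =>
        hdisj C (Finset.mem_insert_of_mem hC) D (Finset.mem_insert_of_mem hD) hCD)
      (A ∩ ⋃₀ (↑T : Set (Set Ω))) hAT Set.inter_subset_right
    have hsimp : ∀ C ∈ T, A ∩ ⋃₀ (↑T : Set (Set Ω)) ∩ C = A ∩ C := by
      intro C hC
      ext x
      simp only [Set.mem_inter_iff, Set.mem_sUnion, Finset.mem_coe]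
      exact ⟨fun ⟨⟨h1, _⟩, h3⟩ => ⟨h1, h3⟩, fun ⟨h1, h3⟩ => ⟨⟨h1, ⟨C, hC, h3⟩⟩, h3⟩⟩
    rw [Finset.sum_congr rfl (fun C hC => by rw [hsimp C hC])] at hih
    rw [Finset.sum_insert hBT, ← hih, hadd]

/- Partition lemmas -/

lemma aux9_exists_subset {H : ι → Set Ω} {𝒜L : Set (Set Ω)}
    (h𝒜L : IsFieldOver H 𝒜L) {A : Set Ω} (hA : A ∈ 𝒜L) (hne : A.Nonempty) :
    ∃ i, H i ⊆ A := by
  obtain ⟨S, rfl⟩ := h𝒜L.2.2 A hA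
  obtain ⟨x, hx⟩ := hne
  simp only [Set.mem_iUnion] at hx
  obtain ⟨i, hiS, hxi⟩ := hx
  exact ⟨i, Set.subset_biUnion_of_mem hiS⟩

lemma aux9_dichotomy {H : ι → Set Ω} {𝒜L : Set (Set Ω)} (hH : IsPartition H)
    (h𝒜L : IsFieldOver H 𝒜L) {A : Set Ω} (hA : A ∈ 𝒜L) (i : ι) :
    H i ⊆ A ∨ H i ⊆ Aᶜ := by
  obtain ⟨S, rfl⟩ := h𝒜L.2.2 A hA
  by_cases hiS : i ∈ S
  · exact Or.inl (Set.subset_biUnion_of_mem hiS)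
  · right
    intro x hx
    simp only [Set.mem_compl_iff, Set.mem_iUnion, not_exists]
    rintro j hjS hxj
    rcases eq_or_ne i j with rfl | hij
    · exact hiS hjS
    · exact (hH.2.1 hij).le_bot ⟨hx, hxj⟩ |>.elim

lemma aux9_disj_compl {H : ι → Set Ω} (hH : IsPartition H) {i j : ι} (hij : i ≠ j) :
    H i ⊆ (H j)ᶜ := by
  intro x hx hxj
  exact (hH.2.1 hij).le_bot ⟨hx, hxj⟩

/- Strategy lemmas: context -/

variable {H : ι → Set Ω} {𝒜 𝒜L : Set (Set Ω)} {σ : Set Ω → ι → ℝ}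

lemma aux9_sigma_zero (hf : IsSetField 𝒜) (hσ : IsStrategy 𝒜 H σ)
    (hHmem : ∀ i, H i ∈ 𝒜) {G : Set Ω} (hG : G ∈ 𝒜) {i : ι} (hGi : G ⊆ (H i)ᶜ) :
    σ G i = 0 := by
  have h1 : σ (H i) i = 1 := (hσ i).2 _ (hHmem i) subset_rfl
  have h2 : σ (H i)ᶜ i = 1 - σ (H i) i :=
    aux9_fap_compl hf (hσ i).1 (hHmem i)
  have h3 : σ G i ≤ σ (H i)ᶜ i :=
    aux9_fap_mono hf (hσ i).1 hG (hf.2.1 _ (hHmem i)) hGi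
  have h4 : 0 ≤ σ G i := ((hσ i).1.1 _ hG).1
  rw [h2, h1] at h3
  linarith

lemma aux9_sigma_inter (hf : IsSetField 𝒜) (hσ : IsStrategy 𝒜 H σ)
    (hHmem : ∀ i, H i ∈ 𝒜) {G : Set Ω} (hG : G ∈ 𝒜) (i : ι) :
    σ (G ∩ H i) i = σ G i := by
  have hGH : G ∩ H i ∈ 𝒜 := aux9_field_inter hf hG (hHmem i)
  have hGHc : G ∩ (H i)ᶜ ∈ 𝒜 := aux9_field_inter hf hG (hf.2.1 _ (hHmem i))
  have hadd := (hσ i).1.2.2 _ hGH _ hGHc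
    (by
      rw [Set.disjoint_iff_inter_eq_empty]
      ext x; simp only [Set.mem_inter_iff, Set.mem_compl_iff, Set.mem_empty_iff_false, iff_false]
      tauto)
  have hU : G ∩ H i ∪ G ∩ (H i)ᶜ = G := by
    rw [← Set.inter_union_distrib_left, Set.union_compl_self, Set.inter_univ]
  rw [hU] at hadd
  simp only at hadd
  have hz : σ (G ∩ (H i)ᶜ) i = 0 :=
    aux9_sigma_zero hf hσ hHmem hGHc Set.inter_subset_right
  rw [hadd, hz, add_zero]

end Aux9

/-! ### The upper Stieltjes functional -/

/-- supremum of `g` over the indices whose cell is inside `A` -/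
noncomputable def aux9cSup {ι : Type*} (H : ι → Set Ω) (g : ι → ℝ) (A : Set Ω) : ℝ :=
  sSup {y | ∃ i, H i ⊆ A ∧ y = g i}

/-- the upper Stieltjes integral functional -/
noncomputable def aux9upInt {ι : Type*} (H : ι → Set Ω) (𝒜L : Set (Set Ω))
    (g : ι → ℝ) (π : Set Ω → ℝ) : ℝ :=
  sInf {x | ∃ T : Finset (Set Ω), IsFinPart 𝒜L T ∧
    x = ∑ A ∈ T, aux9cSup H g A * π A}

section Aux9Int

variable {ι : Type*} {H : ι → Set Ω} {𝒜L : Set (Set Ω)} {π : Set Ω → ℝ}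
  {g h : ι → ℝ} {M M' : ℝ}

lemma aux9_upperSInt_eq (X : ι → ℝ) : upperSInt H 𝒜L X π = aux9upInt H 𝒜L X π := rfl

lemma aux9_lowerSInt_eq (X : ι → ℝ) :
    lowerSInt H 𝒜L X π = -aux9upInt H 𝒜L (fun i => -X i) π := by
  have hterm : ∀ A : Set Ω,
      sSup {y | ∃ i, H i ⊆ A ∧ y = -X i} = -sInf {y | ∃ i, H i ⊆ A ∧ y = X i} := by
    intro A
    have hset : {y : ℝ | ∃ i, H i ⊆ A ∧ y = -X i} = -{y : ℝ | ∃ i, H i ⊆ A ∧ y = X i} := by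
      ext z
      simp only [Set.mem_neg, Set.mem_setOf_eq]
      constructor
      · rintro ⟨i, hi, rfl⟩; exact ⟨i, hi, by ring⟩
      · rintro ⟨i, hi, hz⟩; exact ⟨i, hi, by linarith⟩
    rw [hset, Real.sInf_def, neg_neg]
  have key : ∀ T : Finset (Set Ω),
      ∑ A ∈ T, sSup {y | ∃ i, H i ⊆ A ∧ y = -X i} * π A
        = -∑ A ∈ T, sInf {y | ∃ i, H i ⊆ A ∧ y = X i} * π A := by
    intro T
    rw [← Finset.sum_neg_distrib]
    refine Finset.sum_congr rfl fun A _ => ?_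
    rw [hterm A]; ring
  unfold lowerSInt aux9upInt aux9cSup
  rw [Real.sInf_def, neg_neg]
  congr 1
  ext x
  simp only [Set.mem_neg, Set.mem_setOf_eq]
  constructor
  · rintro ⟨T, hT, rfl⟩
    exact ⟨T, hT, by rw [key]⟩
  · rintro ⟨T, hT, hx⟩
    exact ⟨T, hT, by rw [key] at hx; linarith⟩

variable [Nonempty Ω]

lemma aux9_trivPart (h𝒜L : IsSetField 𝒜L) : IsFinPart 𝒜L ({Set.univ} : Finset (Set Ω)) := by
  refine ⟨?_, ?_, ?_, ?_⟩
  · intro A hA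
    simp only [Finset.coe_singleton, Set.mem_singleton_iff] at hA
    subst hA; exact h𝒜L.1
  · intro A hA
    simp only [Finset.mem_singleton] at hA
    subst hA; exact Set.univ_nonempty
  · intro A hA B hB hAB
    simp only [Finset.mem_singleton] at hA hB
    exact absurd (hA.trans hB.symm) hAB
  · simp

lemma aux9_part_mem {T : Finset (Set Ω)} (hT : IsFinPart 𝒜L T) {A : Set Ω} (hA : A ∈ T) :
    A ∈ 𝒜L := hT.1 hA

lemma aux9_part_wit (h𝒜L : IsFieldOver H 𝒜L) {T : Finset (Set Ω)} (hT : IsFinPart 𝒜L T)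
    {A : Set Ω} (hA : A ∈ T) : ∃ i, H i ⊆ A :=
  aux9_exists_subset h𝒜L (hT.1 hA) (hT.2.1 A hA)

lemma aux9_part_sum_one (h𝒜L : IsFieldOver H 𝒜L) (hπ : IsFAP 𝒜L π)
    {T : Finset (Set Ω)} (hT : IsFinPart 𝒜L T) : ∑ A ∈ T, π A = 1 := by
  have hsplit := aux9_fap_split h𝒜L.1 hπ T (fun A hA => hT.1 hA) hT.2.2.1
    Set.univ h𝒜L.1.1 (by rw [hT.2.2.2])
  simp only [Set.univ_inter] at hsplit
  rw [← hsplit, hπ.2.1]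

/- cell sup basic lemmas -/

lemma aux9_cSup_ne {A : Set Ω} (hwit : ∃ i, H i ⊆ A) :
    {y | ∃ i, H i ⊆ A ∧ y = g i}.Nonempty := by
  obtain ⟨i, hi⟩ := hwit; exact ⟨g i, i, hi, rfl⟩

lemma aux9_cSup_bdd (hg : ∀ i, |g i| ≤ M) (A : Set Ω) :
    BddAbove {y | ∃ i, H i ⊆ A ∧ y = g i} := by
  refine ⟨M, ?_⟩
  rintro y ⟨i, hi, rfl⟩
  exact (abs_le.mp (hg i)).2

lemma aux9_cSup_le {A : Set Ω} (hwit : ∃ i, H i ⊆ A) {c : ℝ}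
    (hub : ∀ i, H i ⊆ A → g i ≤ c) : aux9cSup H g A ≤ c :=
  csSup_le (aux9_cSup_ne hwit) (by rintro y ⟨i, hi, rfl⟩; exact hub i hi)

lemma aux9_le_cSup (hg : ∀ i, |g i| ≤ M) {A : Set Ω} {i : ι} (hi : H i ⊆ A) :
    g i ≤ aux9cSup H g A :=
  le_csSup (aux9_cSup_bdd hg A) ⟨i, hi, rfl⟩

lemma aux9_cSup_abs_le (hg : ∀ i, |g i| ≤ M) {A : Set Ω} (hwit : ∃ i, H i ⊆ A) :
    -M ≤ aux9cSup H g A ∧ aux9cSup H g A ≤ M := by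
  obtain ⟨i, hi⟩ := hwit
  constructor
  · exact le_trans (abs_le.mp (hg i)).1 (aux9_le_cSup hg hi)
  · exact aux9_cSup_le ⟨i, hi⟩ fun j hj => (abs_le.mp (hg j)).2

lemma aux9_cSup_mono (hg : ∀ i, |g i| ≤ M) {A B : Set Ω} (hwit : ∃ i, H i ⊆ A)
    (hAB : A ⊆ B) : aux9cSup H g A ≤ aux9cSup H g B :=
  aux9_cSup_le hwit fun i hi => aux9_le_cSup hg (hi.trans hAB)

lemma aux9_cSup_add_le (hg : ∀ i, |g i| ≤ M) (hh : ∀ i, |h i| ≤ M') {A : Set Ω}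
    (hwit : ∃ i, H i ⊆ A) :
    aux9cSup H (fun i => g i + h i) A ≤ aux9cSup H g A + aux9cSup H h A :=
  aux9_cSup_le hwit fun i hi => add_le_add (aux9_le_cSup hg hi) (aux9_le_cSup hh hi)

lemma aux9_cSup_const {A : Set Ω} (hwit : ∃ i, H i ⊆ A) {d : ℝ}
    (hconst : ∀ i, H i ⊆ A → g i = d) : aux9cSup H g A = d := by
  have : {y | ∃ i, H i ⊆ A ∧ y = g i} = {d} := by
    ext z
    simp only [Set.mem_setOf_eq, Set.mem_singleton_iff]
    constructor
    · rintro ⟨i, hi, rfl⟩; exact hconst i hi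
    · rintro rfl; obtain ⟨i, hi⟩ := hwit; exact ⟨i, hi, (hconst i hi).symm⟩
  rw [aux9cSup, this, csSup_singleton]

lemma aux9_cSup_smul (hg : ∀ i, |g i| ≤ M) {A : Set Ω} (hwit : ∃ i, H i ⊆ A)
    {c : ℝ} (hc : 0 < c) : aux9cSup H (fun i => c * g i) A = c * aux9cSup H g A := by
  have hcg : ∀ i, |c * g i| ≤ c * M := by
    intro i
    rw [abs_mul, abs_of_pos hc]
    exact mul_le_mul_of_nonneg_left (hg i) hc.le
  refine le_antisymm ?_ ?_
  · exact aux9_cSup_le hwit fun i hi =>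
      mul_le_mul_of_nonneg_left (aux9_le_cSup hg hi) hc.le
  · rw [← le_div_iff₀' hc]
    refine aux9_cSup_le hwit fun i hi => ?_
    rw [le_div_iff₀' hc]
    exact aux9_le_cSup hcg hi

/- sums over partitions -/

lemma aux9_upSum_le (h𝒜L : IsFieldOver H 𝒜L) (hπ : IsFAP 𝒜L π) (hg : ∀ i, |g i| ≤ M)
    {T : Finset (Set Ω)} (hT : IsFinPart 𝒜L T) :
    -M ≤ ∑ A ∈ T, aux9cSup H g A * π A ∧ ∑ A ∈ T, aux9cSup H g A * π A ≤ M := by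
  have hub : ∀ A ∈ T, aux9cSup H g A * π A ≤ M * π A := fun A hA =>
    mul_le_mul_of_nonneg_right (aux9_cSup_abs_le hg (aux9_part_wit h𝒜L hT hA)).2
      (hπ.1 A (hT.1 hA)).1
  have hlb : ∀ A ∈ T, -M * π A ≤ aux9cSup H g A * π A := fun A hA =>
    mul_le_mul_of_nonneg_right (aux9_cSup_abs_le hg (aux9_part_wit h𝒜L hT hA)).1
      (hπ.1 A (hT.1 hA)).1
  constructor
  · calc -M = ∑ A ∈ T, -M * π A := by
          rw [← Finset.mul_sum, aux9_part_sum_one h𝒜L hπ hT, mul_one]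
      _ ≤ _ := Finset.sum_le_sum hlb
  · calc ∑ A ∈ T, aux9cSup H g A * π A ≤ ∑ A ∈ T, M * π A := Finset.sum_le_sum hub
      _ = M := by rw [← Finset.mul_sum, aux9_part_sum_one h𝒜L hπ hT, mul_one]

lemma aux9_upInt_setne (h𝒜L : IsFieldOver H 𝒜L) :
    {x | ∃ T : Finset (Set Ω), IsFinPart 𝒜L T ∧
      x = ∑ A ∈ T, aux9cSup H g A * π A}.Nonempty :=
  ⟨_, {Set.univ}, aux9_trivPart h𝒜L.1, rfl⟩

lemma aux9_upInt_bddBelow (h𝒜L : IsFieldOver H 𝒜L) (hπ : IsFAP 𝒜L π)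
    (hg : ∀ i, |g i| ≤ M) :
    BddBelow {x | ∃ T : Finset (Set Ω), IsFinPart 𝒜L T ∧
      x = ∑ A ∈ T, aux9cSup H g A * π A} := by
  refine ⟨-M, ?_⟩
  rintro x ⟨T, hT, rfl⟩
  exact (aux9_upSum_le h𝒜L hπ hg hT).1

lemma aux9_upInt_le (h𝒜L : IsFieldOver H 𝒜L) (hπ : IsFAP 𝒜L π) (hg : ∀ i, |g i| ≤ M)
    {T : Finset (Set Ω)} (hT : IsFinPart 𝒜L T) :
    aux9upInt H 𝒜L g π ≤ ∑ A ∈ T, aux9cSup H g A * π A :=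
  csInf_le (aux9_upInt_bddBelow h𝒜L hπ hg) ⟨T, hT, rfl⟩

lemma aux9_le_upInt (h𝒜L : IsFieldOver H 𝒜L) {c : ℝ}
    (hc : ∀ T : Finset (Set Ω), IsFinPart 𝒜L T → c ≤ ∑ A ∈ T, aux9cSup H g A * π A) :
    c ≤ aux9upInt H 𝒜L g π :=
  le_csInf (aux9_upInt_setne h𝒜L) (by rintro x ⟨T, hT, rfl⟩; exact hc T hT)

lemma aux9_upInt_bounds (h𝒜L : IsFieldOver H 𝒜L) (hπ : IsFAP 𝒜L π)
    (hg : ∀ i, |g i| ≤ M) : -M ≤ aux9upInt H 𝒜L g π ∧ aux9upInt H 𝒜L g π ≤ M := by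
  constructor
  · exact aux9_le_upInt h𝒜L fun T hT => (aux9_upSum_le h𝒜L hπ hg hT).1
  · exact le_trans (aux9_upInt_le h𝒜L hπ hg (aux9_trivPart h𝒜L.1))
      (by simpa using (aux9_upSum_le h𝒜L hπ hg (aux9_trivPart h𝒜L.1)).2)

/- refinement machinery -/

/-- the common refinement of two finite partitions -/
noncomputable def aux9refine (T T' : Finset (Set Ω)) : Finset (Set Ω) :=
  ((T ×ˢ T').filter fun p => (p.1 ∩ p.2).Nonempty).image fun p => p.1 ∩ p.2

lemma aux9_refine_part (h𝒜L : IsFieldOver H 𝒜L) {T T' : Finset (Set Ω)}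
    (hT : IsFinPart 𝒜L T) (hT' : IsFinPart 𝒜L T') : IsFinPart 𝒜L (aux9refine T T') := by
  refine ⟨?_, ?_, ?_, ?_⟩
  · intro C hC
    simp only [aux9refine, Finset.coe_image, Set.mem_image, Finset.mem_coe,
      Finset.mem_filter, Finset.mem_product] at hC
    obtain ⟨⟨A, B⟩, ⟨⟨hA, hB⟩, -⟩, rfl⟩ := hC
    exact aux9_field_inter h𝒜L.1 (hT.1 hA) (hT'.1 hB)
  · intro C hC
    simp only [aux9refine, Finset.mem_image, Finset.mem_filter, Finset.mem_product] at hC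
    obtain ⟨⟨A, B⟩, ⟨-, hne⟩, rfl⟩ := hC
    exact hne
  · intro C hC D hD hCD
    simp only [aux9refine, Finset.mem_image, Finset.mem_filter, Finset.mem_product] at hC hD
    obtain ⟨⟨A, B⟩, ⟨⟨hA, hB⟩, hne⟩, rfl⟩ := hC
    obtain ⟨⟨A', B'⟩, ⟨⟨hA', hB'⟩, hne'⟩, rfl⟩ := hD
    rw [Set.disjoint_iff_inter_eq_empty]
    by_contra hcon
    obtain ⟨x, hx⟩ := Set.nonempty_iff_ne_empty.mpr hcon
    simp only [Set.mem_inter_iff] at hx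
    have hAA : A = A' := by
      by_contra hne2
      exact (hT.2.2.1 A hA A' hA' hne2).le_bot ⟨hx.1.1, hx.2.1⟩
    have hBB : B = B' := by
      by_contra hne2
      exact (hT'.2.2.1 B hB B' hB' hne2).le_bot ⟨hx.1.2, hx.2.2⟩
    exact hCD (by rw [hAA, hBB])
  · apply Set.eq_univ_of_univ_subset
    intro x _
    have hx1 : x ∈ ⋃₀ (↑T : Set (Set Ω)) := by rw [hT.2.2.2]; trivial
    have hx2 : x ∈ ⋃₀ (↑T' : Set (Set Ω)) := by rw [hT'.2.2.2]; trivial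
    obtain ⟨A, hA, hxA⟩ := hx1
    obtain ⟨B, hB, hxB⟩ := hx2
    exact ⟨A ∩ B, by
      simp only [aux9refine, Finset.coe_image, Set.mem_image, Finset.mem_coe,
        Finset.mem_filter, Finset.mem_product]
      exact ⟨(A, B), ⟨⟨hA, hB⟩, ⟨x, hxA, hxB⟩⟩, rfl⟩, hxA, hxB⟩

lemma aux9_refine_sum (hπ : IsFAP 𝒜L π) (h𝒜L : IsFieldOver H 𝒜L)
    {T T' : Finset (Set Ω)} (hT : IsFinPart 𝒜L T) (hT' : IsFinPart 𝒜L T')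
    (f : Set Ω → ℝ) (hf0 : f ∅ * π (∅ : Set Ω) = 0) :
    ∑ C ∈ aux9refine T T', f C * π C
      = ∑ A ∈ T, ∑ B ∈ T', f (A ∩ B) * π (A ∩ B) := by
  classical
  rw [aux9refine, Finset.sum_image]
  · calc ∑ p ∈ (T ×ˢ T').filter (fun p => (p.1 ∩ p.2).Nonempty),
        f (p.1 ∩ p.2) * π (p.1 ∩ p.2)
        = ∑ p ∈ T ×ˢ T', f (p.1 ∩ p.2) * π (p.1 ∩ p.2) := by
          refine Finset.sum_subset (Finset.filter_subset _ _) fun p hp hnp => ?_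
          have : p.1 ∩ p.2 = ∅ := by
            by_contra hcon
            exact hnp (Finset.mem_filter.mpr ⟨hp, Set.nonempty_iff_ne_empty.mpr hcon⟩)
          rw [this]
          exact hf0
      _ = ∑ A ∈ T, ∑ B ∈ T', f (A ∩ B) * π (A ∩ B) := by rw [Finset.sum_product]
  · intro p hp q hq hpq
    simp only [Finset.mem_coe, Finset.mem_filter, Finset.mem_product] at hp hq
    obtain ⟨⟨hpA, hpB⟩, hpne⟩ := hp
    obtain ⟨⟨hqA, hqB⟩, hqne⟩ := hq
    obtain ⟨x, hx1, hx2⟩ := hpne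
    have hx' : x ∈ q.1 ∩ q.2 := (show p.1 ∩ p.2 = q.1 ∩ q.2 from hpq) ▸ ⟨hx1, hx2⟩
    have h1 : p.1 = q.1 := by
      by_contra hne2
      exact (hT.2.2.1 _ hpA _ hqA hne2).le_bot ⟨hx1, hx'.1⟩
    have h2 : p.2 = q.2 := by
      by_contra hne2
      exact (hT'.2.2.1 _ hpB _ hqB hne2).le_bot ⟨hx2, hx'.2⟩
    exact Prod.ext h1 h2

lemma aux9_pi_empty (h𝒜L : IsFieldOver H 𝒜L) (hπ : IsFAP 𝒜L π) : π ∅ = 0 :=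
  aux9_fap_empty h𝒜L.1 hπ

/-- refining decreases the upper sum (first marginal) -/
lemma aux9_refine_le_left (h𝒜L : IsFieldOver H 𝒜L) (hπ : IsFAP 𝒜L π)
    (hg : ∀ i, |g i| ≤ M) {T T' : Finset (Set Ω)}
    (hT : IsFinPart 𝒜L T) (hT' : IsFinPart 𝒜L T') :
    ∑ A ∈ T, ∑ B ∈ T', aux9cSup H g (A ∩ B) * π (A ∩ B)
      ≤ ∑ A ∈ T, aux9cSup H g A * π A := by
  refine Finset.sum_le_sum fun A hA => ?_
  have hsplit : π A = ∑ B ∈ T', π (A ∩ B) :=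
    aux9_fap_split h𝒜L.1 hπ T' (fun B hB => hT'.1 hB) hT'.2.2.1 A (hT.1 hA)
      (by rw [hT'.2.2.2]; exact Set.subset_univ A)
  rw [hsplit, Finset.mul_sum]
  refine Finset.sum_le_sum fun B hB => ?_
  rcases Set.eq_empty_or_nonempty (A ∩ B) with he | hne
  · rw [he, aux9_pi_empty h𝒜L hπ, mul_zero, mul_zero]
  · have hAB𝒜L : A ∩ B ∈ 𝒜L := aux9_field_inter h𝒜L.1 (hT.1 hA) (hT'.1 hB)
    refine mul_le_mul_of_nonneg_right ?_ (hπ.1 _ hAB𝒜L).1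
    exact aux9_cSup_mono hg (aux9_exists_subset h𝒜L hAB𝒜L hne) Set.inter_subset_left

/-- refining decreases the upper sum (second marginal) -/
lemma aux9_refine_le_right (h𝒜L : IsFieldOver H 𝒜L) (hπ : IsFAP 𝒜L π)
    (hg : ∀ i, |g i| ≤ M) {T T' : Finset (Set Ω)}
    (hT : IsFinPart 𝒜L T) (hT' : IsFinPart 𝒜L T') :
    ∑ A ∈ T, ∑ B ∈ T', aux9cSup H g (A ∩ B) * π (A ∩ B)
      ≤ ∑ B ∈ T', aux9cSup H g B * π B := by
  rw [Finset.sum_comm]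
  refine Finset.sum_le_sum fun B hB => ?_
  have hsplit : π B = ∑ A ∈ T, π (B ∩ A) :=
    aux9_fap_split h𝒜L.1 hπ T (fun A hA => hT.1 hA) hT.2.2.1 B (hT'.1 hB)
      (by rw [hT.2.2.2]; exact Set.subset_univ B)
  have hBA : ∀ A, B ∩ A = A ∩ B := fun A => Set.inter_comm B A
  rw [hsplit, Finset.mul_sum]
  refine Finset.sum_le_sum fun A hA => ?_
  rw [hBA A]
  rcases Set.eq_empty_or_nonempty (A ∩ B) with he | hne
  · rw [he, aux9_pi_empty h𝒜L hπ, mul_zero, mul_zero]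
  · have hAB𝒜L : A ∩ B ∈ 𝒜L := aux9_field_inter h𝒜L.1 (hT.1 hA) (hT'.1 hB)
    refine mul_le_mul_of_nonneg_right ?_ (hπ.1 _ hAB𝒜L).1
    exact aux9_cSup_mono hg (aux9_exists_subset h𝒜L hAB𝒜L hne) Set.inter_subset_right

/-- subadditivity of the upper Stieltjes functional -/
lemma aux9_upInt_add (h𝒜L : IsFieldOver H 𝒜L) (hπ : IsFAP 𝒜L π)
    (hg : ∀ i, |g i| ≤ M) (hh : ∀ i, |h i| ≤ M') :
    aux9upInt H 𝒜L (fun i => g i + h i) π ≤ aux9upInt H 𝒜L g π + aux9upInt H 𝒜L h π := by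
  refine le_of_forall_pos_le_add fun ε hε => ?_
  obtain ⟨x, ⟨T, hT, rfl⟩, hx⟩ :=
    Real.lt_sInf_add_pos (aux9_upInt_setne (g := g) (π := π) h𝒜L) (half_pos hε)
  obtain ⟨y, ⟨T', hT', rfl⟩, hy⟩ :=
    Real.lt_sInf_add_pos (aux9_upInt_setne (g := h) (π := π) h𝒜L) (half_pos hε)
  have hgh : ∀ i, |g i + h i| ≤ M + M' := fun i =>
    (abs_add_le _ _).trans (add_le_add (hg i) (hh i))
  have hR := aux9_refine_part h𝒜L hT hT'
  have step1 : aux9upInt H 𝒜L (fun i => g i + h i) π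
      ≤ ∑ C ∈ aux9refine T T', aux9cSup H (fun i => g i + h i) C * π C :=
    aux9_upInt_le h𝒜L hπ hgh hR
  have step2 : ∑ C ∈ aux9refine T T', aux9cSup H (fun i => g i + h i) C * π C
      ≤ ∑ C ∈ aux9refine T T', aux9cSup H g C * π C
        + ∑ C ∈ aux9refine T T', aux9cSup H h C * π C := by
    rw [← Finset.sum_add_distrib]
    refine Finset.sum_le_sum fun C hC => ?_
    rw [← add_mul]
    exact mul_le_mul_of_nonneg_right
      (aux9_cSup_add_le hg hh (aux9_part_wit h𝒜L hR hC))
      (hπ.1 _ (hR.1 hC)).1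
  have hzg : aux9cSup H g ∅ * π (∅ : Set Ω) = 0 := by
    rw [aux9_pi_empty h𝒜L hπ, mul_zero]
  have hzh : aux9cSup H h ∅ * π (∅ : Set Ω) = 0 := by
    rw [aux9_pi_empty h𝒜L hπ, mul_zero]
  have step3 : ∑ C ∈ aux9refine T T', aux9cSup H g C * π C
      ≤ ∑ A ∈ T, aux9cSup H g A * π A := by
    rw [aux9_refine_sum hπ h𝒜L hT hT' _ hzg]
    exact aux9_refine_le_left h𝒜L hπ hg hT hT'
  have step4 : ∑ C ∈ aux9refine T T', aux9cSup H h C * π C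
      ≤ ∑ B ∈ T', aux9cSup H h B * π B := by
    rw [aux9_refine_sum hπ h𝒜L hT hT' _ hzh]
    exact aux9_refine_le_right h𝒜L hπ hh hT hT'
  have := step1.trans (step2.trans (add_le_add step3 step4))
  unfold aux9upInt at *
  linarith

/-- positive homogeneity (≤ direction) -/
lemma aux9_upInt_smul_le (h𝒜L : IsFieldOver H 𝒜L) (hπ : IsFAP 𝒜L π)
    (hg : ∀ i, |g i| ≤ M) {c : ℝ} (hc : 0 < c) :
    aux9upInt H 𝒜L (fun i => c * g i) π ≤ c * aux9upInt H 𝒜L g π := by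
  have hcg : ∀ i, |c * g i| ≤ c * M := fun i => by
    rw [abs_mul, abs_of_pos hc]
    exact mul_le_mul_of_nonneg_left (hg i) hc.le
  rw [mul_comm, ← div_le_iff₀ hc]
  refine aux9_le_upInt h𝒜L fun T hT => ?_
  rw [div_le_iff₀ hc, mul_comm]
  calc aux9upInt H 𝒜L (fun i => c * g i) π
      ≤ ∑ A ∈ T, aux9cSup H (fun i => c * g i) A * π A := aux9_upInt_le h𝒜L hπ hcg hT
    _ = c * ∑ A ∈ T, aux9cSup H g A * π A := by
        rw [Finset.mul_sum]
        refine Finset.sum_congr rfl fun A hA => ?_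
        rw [aux9_cSup_smul hg (aux9_part_wit h𝒜L hT hA) hc]; ring

/-- positive homogeneity -/
lemma aux9_upInt_smul (h𝒜L : IsFieldOver H 𝒜L) (hπ : IsFAP 𝒜L π)
    (hg : ∀ i, |g i| ≤ M) {c : ℝ} (hc : 0 < c) :
    aux9upInt H 𝒜L (fun i => c * g i) π = c * aux9upInt H 𝒜L g π := by
  refine le_antisymm (aux9_upInt_smul_le h𝒜L hπ hg hc) ?_
  have hcg : ∀ i, |c * g i| ≤ c * M := fun i => by
    rw [abs_mul, abs_of_pos hc]
    exact mul_le_mul_of_nonneg_left (hg i) hc.le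
  have h2 := aux9_upInt_smul_le (g := fun i => c * g i) (M := c * M) h𝒜L hπ hcg
    (c := c⁻¹) (inv_pos.mpr hc)
  have heq : (fun i => c⁻¹ * (c * g i)) = g := by
    funext i; field_simp
  rw [heq] at h2
  calc c * aux9upInt H 𝒜L g π ≤ c * (c⁻¹ * aux9upInt H 𝒜L (fun i => c * g i) π) :=
        mul_le_mul_of_nonneg_left h2 hc.le
    _ = aux9upInt H 𝒜L (fun i => c * g i) π := by field_simp

/-- value on a function vanishing on all cells -/
lemma aux9_upInt_zero (h𝒜L : IsFieldOver H 𝒜L) (hπ : IsFAP 𝒜L π)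
    (hg0 : ∀ i, g i = 0) : aux9upInt H 𝒜L g π = 0 := by
  have hg : ∀ i, |g i| ≤ 0 := fun i => by rw [hg0 i]; simp
  refine le_antisymm ?_ ?_
  · exact (aux9_upInt_bounds h𝒜L hπ hg).2
  · simpa using (aux9_upInt_bounds h𝒜L hπ hg).1

/-- the lower integral is below the upper integral -/
lemma aux9_low_le_up (h𝒜L : IsFieldOver H 𝒜L) (hπ : IsFAP 𝒜L π)
    (hg : ∀ i, |g i| ≤ M) :
    -aux9upInt H 𝒜L (fun i => -g i) π ≤ aux9upInt H 𝒜L g π := by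
  have hng : ∀ i, |(-g i)| ≤ M := fun i => by rw [abs_neg]; exact hg i
  have h0 : aux9upInt H 𝒜L (fun i => g i + -g i) π = 0 :=
    aux9_upInt_zero h𝒜L hπ fun i => by ring
  have := aux9_upInt_add h𝒜L hπ hg hng
  rw [h0] at this
  linarith

end Aux9Int

/-! ### Hahn–Banach extension producing the joint probability -/

/-- the submodule of bounded real functions on `ι` -/
def aux9Bdd (ι : Type*) : Submodule ℝ (ι → ℝ) where
  carrier := {g | ∃ M, ∀ i, |g i| ≤ M}
  add_mem' := by
    rintro a b ⟨M, hM⟩ ⟨M', hM'⟩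
    exact ⟨M + M', fun i => (abs_add_le _ _).trans (add_le_add (hM i) (hM' i))⟩
  zero_mem' := ⟨0, fun i => by simp⟩
  smul_mem' := by
    rintro t a ⟨M, hM⟩
    refine ⟨|t| * M, fun i => ?_⟩
    rw [Pi.smul_apply, smul_eq_mul, abs_mul]
    exact mul_le_mul_of_nonneg_left (hM i) (abs_nonneg t)

section Aux9HB

variable {ι : Type*} {H : ι → Set Ω} {𝒜L : Set (Set Ω)} {π : Set Ω → ℝ}

set_option linter.unusedSectionVars false

lemma aux9_exists_L [Nonempty Ω] (h𝒜L : IsFieldOver H 𝒜L) (hπ : IsFAP 𝒜L π)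
    (X : ι → ℝ) (hX : ∀ i, |X i| ≤ 1) (c : ℝ)
    (hc1 : -aux9upInt H 𝒜L (fun i => -X i) π ≤ c) (hc2 : c ≤ aux9upInt H 𝒜L X π) :
    ∃ L : aux9Bdd ι →ₗ[ℝ] ℝ,
      (∀ u : aux9Bdd ι, L u ≤ aux9upInt H 𝒜L (u : ι → ℝ) π) ∧
      L ⟨X, 1, hX⟩ = c := by
  set x₀ : aux9Bdd ι := ⟨X, 1, hX⟩ with hx₀
  set N : aux9Bdd ι → ℝ := fun u => aux9upInt H 𝒜L (u : ι → ℝ) π with hN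
  have hnX : ∀ i, |(-X i)| ≤ 1 := fun i => by rw [abs_neg]; exact hX i
  have N_hom : ∀ t : ℝ, 0 < t → ∀ u : aux9Bdd ι, N (t • u) = t * N u := by
    intro t ht u
    obtain ⟨M, hM⟩ := u.2
    have hval : ((t • u : aux9Bdd ι) : ι → ℝ) = fun i => t * (u : ι → ℝ) i := rfl
    rw [hN]
    simp only [hval]
    exact aux9_upInt_smul h𝒜L hπ hM ht
  have N_add : ∀ u v : aux9Bdd ι, N (u + v) ≤ N u + N v := by
    intro u v
    obtain ⟨M, hM⟩ := u.2
    obtain ⟨M', hM'⟩ := v.2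
    have hval : ((u + v : aux9Bdd ι) : ι → ℝ) = fun i => (u : ι → ℝ) i + (v : ι → ℝ) i := rfl
    rw [hN]
    simp only [hval]
    exact aux9_upInt_add h𝒜L hπ hM hM'
  have hzero : ∀ t : ℝ, t • x₀ = 0 → t • c = 0 := by
    intro t ht
    rcases eq_or_ne t 0 with rfl | htne
    · simp
    · have hx0 : x₀ = 0 := (smul_eq_zero.mp ht).resolve_left htne
      have hX0 : ∀ i, X i = 0 := by
        intro i
        have := congrArg (fun u : aux9Bdd ι => (u : ι → ℝ) i) hx0
        simpa [hx₀] using this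
      have h1 : aux9upInt H 𝒜L X π = 0 := aux9_upInt_zero h𝒜L hπ hX0
      have h2 : aux9upInt H 𝒜L (fun i => -X i) π = 0 :=
        aux9_upInt_zero h𝒜L hπ fun i => by rw [hX0 i]; ring
      have : c = 0 := le_antisymm (h1 ▸ hc2) (by rw [h2] at hc1; linarith)
      rw [this, smul_zero]
  set f : aux9Bdd ι →ₗ.[ℝ] ℝ := LinearPMap.mkSpanSingleton' x₀ c hzero with hf
  have hdomsub : ∀ z : f.domain, ∃ t : ℝ, t • x₀ = (z : aux9Bdd ι) := fun z =>
    Submodule.mem_span_singleton.mp z.2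
  have hdom : ∀ z : f.domain, f z ≤ N z := by
    intro z
    obtain ⟨t, ht⟩ := hdomsub z
    have hz : z = ⟨(t • x₀ : aux9Bdd ι), by rw [ht]; exact z.2⟩ := Subtype.ext ht.symm
    rw [hz, LinearPMap.mkSpanSingleton'_apply]
    have hval : ((t • x₀ : aux9Bdd ι) : ι → ℝ) = fun i => t * X i := rfl
    have hNz : N (t • x₀) = aux9upInt H 𝒜L (fun i => t * X i) π := by
      rw [hN]; simp only [hval]
    show (t • c : ℝ) ≤ N (t • x₀)
    rw [hNz, smul_eq_mul]
    rcases lt_trichotomy t 0 with htneg | rfl | htpos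
    · have heq : (fun i => t * X i) = fun i => (-t) * (-X i) := by funext i; ring
      rw [heq, aux9_upInt_smul h𝒜L hπ hnX (by linarith)]
      calc t * c ≤ t * -aux9upInt H 𝒜L (fun i => -X i) π := by
            exact mul_le_mul_of_nonpos_left hc1 htneg.le
        _ = -t * aux9upInt H 𝒜L (fun i => -X i) π := by ring
    · rw [aux9_upInt_zero h𝒜L hπ (fun i => by ring)]
      simp
    · rw [aux9_upInt_smul h𝒜L hπ hX htpos]
      exact mul_le_mul_of_nonneg_left hc2 htpos.le
  obtain ⟨L, hL1, hL2⟩ := exists_extension_of_le_sublinear f N N_hom N_add hdom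
  refine ⟨L, fun u => hL2 u, ?_⟩
  have hmem : x₀ ∈ f.domain := Submodule.mem_span_singleton_self x₀
  exact (hL1 ⟨x₀, hmem⟩).trans (LinearPMap.mkSpanSingleton'_apply_self x₀ c hzero hmem)

end Aux9HB

section Aux9Mu

variable {ι : Type*} {H : ι → Set Ω} {𝒜L 𝒜 : Set (Set Ω)} {π : Set Ω → ℝ}
  {σ : Set Ω → ι → ℝ}

set_option linter.unusedSectionVars false

/-- Existence of a finitely additive joint probability with prescribed value on `F`. -/
lemma aux9_exists_mu [Nonempty Ω] (hH : IsPartition H) (h𝒜L : IsFieldOver H 𝒜L)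
    (h𝒜f : IsSetField 𝒜) (h𝒜LA : 𝒜L ⊆ 𝒜)
    (hπ : IsFAP 𝒜L π) (hσ : IsStrategy 𝒜 H σ)
    (F : Set Ω) (hF : F ∈ 𝒜) (c : ℝ)
    (hc1 : -aux9upInt H 𝒜L (fun i => -σ F i) π ≤ c)
    (hc2 : c ≤ aux9upInt H 𝒜L (fun i => σ F i) π) :
    ∃ μ : Set Ω → ℝ, IsFAP 𝒜 μ ∧ (∀ B ∈ 𝒜L, μ B = π B) ∧
      (∀ G ∈ 𝒜, ∀ i, μ (G ∩ H i) = σ G i * π (H i)) ∧ μ F = c := by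
  classical
  have hHmem : ∀ i, H i ∈ 𝒜 := fun i => h𝒜LA (h𝒜L.2.1 i)
  have hσbd : ∀ G ∈ 𝒜, ∀ i, |σ G i| ≤ 1 := by
    intro G hG i
    have := (hσ i).1.1 G hG
    rw [abs_le]; constructor <;> [linarith [this.1]; exact this.2]
  have hX : ∀ i, |σ F i| ≤ 1 := hσbd F hF
  obtain ⟨L, hL, hLX⟩ := aux9_exists_L h𝒜L hπ (fun i => σ F i) hX c hc1 hc2
  set fE : Set Ω → (ι → ℝ) := fun G => if G ∈ 𝒜 then (fun i => σ G i) else 0 with hfE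
  have hfE_mem : ∀ G, fE G ∈ aux9Bdd ι := by
    intro G
    by_cases hG : G ∈ 𝒜
    · exact ⟨1, by rw [hfE]; simp only [if_pos hG]; exact hσbd G hG⟩
    · exact ⟨0, by rw [hfE]; simp only [if_neg hG]; simp⟩
  set μ : Set Ω → ℝ := fun G => L ⟨fE G, hfE_mem G⟩ with hμ
  have hfEeq : ∀ G ∈ 𝒜, fE G = fun i => σ G i := fun G hG => by
    rw [hfE]; simp only [if_pos hG]
  -- a helper: the upper integral of a `[−1,1]`-bounded function with values `≤ b` is `≤ b`
  have hwituniv : ∃ i, H i ⊆ Set.univ := by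
    obtain ⟨x⟩ := (inferInstance : Nonempty Ω)
    have : x ∈ ⋃ i, H i := hH.2.2 ▸ Set.mem_univ x
    obtain ⟨i, hi⟩ := Set.mem_iUnion.mp this
    exact ⟨i, Set.subset_univ _⟩
  have upint_le : ∀ (g : ι → ℝ), (∀ i, |g i| ≤ 1) → ∀ b : ℝ, (∀ i, g i ≤ b) →
      aux9upInt H 𝒜L g π ≤ b := by
    intro g hg b hb
    have h1 := aux9_upInt_le h𝒜L hπ hg (aux9_trivPart h𝒜L.1)
    rw [Finset.sum_singleton] at h1
    have h2 : aux9cSup H g Set.univ ≤ b := aux9_cSup_le hwituniv fun i _ => hb i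
    have h3 : π Set.univ = 1 := hπ.2.1
    calc aux9upInt H 𝒜L g π ≤ aux9cSup H g Set.univ * π Set.univ := h1
      _ ≤ b := by rw [h3, mul_one]; exact h2
  -- upper bounds on μ
  have hμub : ∀ G ∈ 𝒜, ∀ b : ℝ, (∀ i, σ G i ≤ b) → μ G ≤ b := by
    intro G hG b hb
    refine le_trans (hL ⟨fE G, hfE_mem G⟩) ?_
    show aux9upInt H 𝒜L (fE G) π ≤ b
    rw [hfEeq G hG]
    exact upint_le _ (hσbd G hG) b hb
  have hμlb : ∀ G ∈ 𝒜, ∀ b : ℝ, (∀ i, b ≤ σ G i) → b ≤ μ G := by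
    intro G hG b hb
    have h2 : L (-(⟨fE G, hfE_mem G⟩ : aux9Bdd ι))
        ≤ aux9upInt H 𝒜L ((-(⟨fE G, hfE_mem G⟩ : aux9Bdd ι) : aux9Bdd ι) : ι → ℝ) π := hL _
    have h3 : ((-(⟨fE G, hfE_mem G⟩ : aux9Bdd ι) : aux9Bdd ι) : ι → ℝ)
        = fun i => -(σ G i) := by
      funext i
      show -(fE G i) = -(σ G i)
      rw [hfEeq G hG]
    rw [map_neg, h3] at h2
    have h4 : aux9upInt H 𝒜L (fun i => -(σ G i)) π ≤ -b :=
      upint_le _ (fun i => by rw [abs_neg]; exact hσbd G hG i) (-b)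
        (fun i => by linarith [hb i])
    have h5 : -μ G ≤ -b := le_trans h2 h4
    linarith
  have hμ01 : ∀ G ∈ 𝒜, 0 ≤ μ G ∧ μ G ≤ 1 := fun G hG =>
    ⟨hμlb G hG 0 fun i => ((hσ i).1.1 G hG).1, hμub G hG 1 fun i => ((hσ i).1.1 G hG).2⟩
  have hμuniv : μ Set.univ = 1 := by
    have h1 : ∀ i, σ Set.univ i = 1 := fun i => (hσ i).1.2.1
    exact le_antisymm (hμub _ h𝒜f.1 1 fun i => (h1 i).le)
      (hμlb _ h𝒜f.1 1 fun i => (h1 i).ge)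
  have hμadd : ∀ A ∈ 𝒜, ∀ B ∈ 𝒜, Disjoint A B → μ (A ∪ B) = μ A + μ B := by
    intro A hA B hB hd
    have hAB : A ∪ B ∈ 𝒜 := h𝒜f.2.2 A hA B hB
    have hfadd : (⟨fE (A ∪ B), hfE_mem _⟩ : aux9Bdd ι)
        = ⟨fE A, hfE_mem A⟩ + ⟨fE B, hfE_mem B⟩ := by
      apply Subtype.ext
      show fE (A ∪ B) = fE A + fE B
      funext i
      have e1 := congrFun (hfEeq _ hAB) i
      have e2 := congrFun (hfEeq _ hA) i
      have e3 := congrFun (hfEeq _ hB) i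
      show fE (A ∪ B) i = fE A i + fE B i
      rw [e1, e2, e3]
      exact (hσ i).1.2.2 A hA B hB hd
    rw [hμ]
    show L ⟨fE (A ∪ B), hfE_mem _⟩ = L ⟨fE A, hfE_mem A⟩ + L ⟨fE B, hfE_mem B⟩
    rw [hfadd, map_add]
  have hμFAP : IsFAP 𝒜 μ := ⟨hμ01, hμuniv, hμadd⟩
  -- agreement with π on 𝒜L
  have hμle𝒜L : ∀ B ∈ 𝒜L, μ B ≤ π B := by
    intro B hB
    rcases Set.eq_empty_or_nonempty B with rfl | hBne
    · rw [aux9_pi_empty h𝒜L hπ]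
      exact hμub ∅ (aux9_field_empty h𝒜f) 0
        fun i => le_of_eq (aux9_fap_empty h𝒜f (hσ i).1)
    rcases Set.eq_empty_or_nonempty Bᶜ with hBc | hBcne
    · have : B = Set.univ := by
        rw [← Set.compl_empty, ← hBc, compl_compl]
      rw [this, hπ.2.1, hμuniv]
    have hBA : B ∈ 𝒜 := h𝒜LA hB
    have hBc𝒜L : Bᶜ ∈ 𝒜L := h𝒜L.1.2.1 B hB
    have hne : B ≠ Bᶜ := by
      intro h
      obtain ⟨x, hx⟩ := hBne
      exact (h ▸ hx : x ∈ Bᶜ) hx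
    have hT : IsFinPart 𝒜L ({B, Bᶜ} : Finset (Set Ω)) := by
      refine ⟨?_, ?_, ?_, ?_⟩
      · intro A hA
        simp only [Finset.coe_insert, Finset.coe_singleton, Set.mem_insert_iff,
          Set.mem_singleton_iff] at hA
        rcases hA with rfl | rfl
        exacts [hB, hBc𝒜L]
      · intro A hA
        simp only [Finset.mem_insert, Finset.mem_singleton] at hA
        rcases hA with rfl | rfl
        exacts [hBne, hBcne]
      · intro A hA C hC hAC
        simp only [Finset.mem_insert, Finset.mem_singleton] at hA hC
        rcases hA with rfl | rfl <;> rcases hC with rfl | rfl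
        · exact absurd rfl hAC
        · exact disjoint_compl_right
        · exact disjoint_compl_left
        · exact absurd rfl hAC
      · simp only [Finset.coe_insert, Finset.coe_singleton, Set.sUnion_insert,
          Set.sUnion_singleton]
        exact Set.union_compl_self B
    have hupB := aux9_upInt_le h𝒜L hπ (hσbd B hBA) hT
    rw [Finset.sum_pair hne] at hupB
    have hcB : aux9cSup H (fun i => σ B i) B = 1 :=
      aux9_cSup_const (aux9_exists_subset h𝒜L hB hBne)
        fun i hi => (hσ i).2 B hBA hi
    have hcBc : aux9cSup H (fun i => σ B i) Bᶜ = 0 :=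
      aux9_cSup_const (aux9_exists_subset h𝒜L hBc𝒜L hBcne)
        fun i hi => aux9_sigma_zero h𝒜f hσ hHmem hBA (Set.subset_compl_comm.mp hi)
    rw [hcB, hcBc, one_mul, zero_mul, add_zero] at hupB
    refine le_trans ?_ hupB
    refine le_trans (hL ⟨fE B, hfE_mem B⟩) (le_of_eq ?_)
    show aux9upInt H 𝒜L (fE B) π = _
    rw [hfEeq B hBA]
  have hμ𝒜L : ∀ B ∈ 𝒜L, μ B = π B := by
    intro B hB
    have hBc𝒜L : Bᶜ ∈ 𝒜L := h𝒜L.1.2.1 B hB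
    have h1 : μ B + μ Bᶜ = 1 := by
      rw [← hμadd B (h𝒜LA hB) Bᶜ (h𝒜LA hBc𝒜L) disjoint_compl_right,
        Set.union_compl_self, hμuniv]
    have h2 : π Bᶜ = 1 - π B := aux9_fap_compl h𝒜L.1 hπ hB
    have h3 := hμle𝒜L B hB
    have h4 := hμle𝒜L Bᶜ hBc𝒜L
    linarith
  -- disintegration over the cells
  have hμH : ∀ G ∈ 𝒜, ∀ i, μ (G ∩ H i) = σ G i * π (H i) := by
    intro G hG i
    have hGH : G ∩ H i ∈ 𝒜 := aux9_field_inter h𝒜f hG (hHmem i)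
    have hkey : (⟨fE (G ∩ H i), hfE_mem _⟩ : aux9Bdd ι)
        = σ G i • ⟨fE (H i), hfE_mem _⟩ := by
      apply Subtype.ext
      show fE (G ∩ H i) = σ G i • fE (H i)
      funext j
      have e1 := congrFun (hfEeq _ hGH) j
      have e2 := congrFun (hfEeq _ (hHmem i)) j
      show fE (G ∩ H i) j = σ G i * fE (H i) j
      rw [e1, e2]
      rcases eq_or_ne j i with rfl | hji
      · have h1 : σ (G ∩ H j) j = σ G j := aux9_sigma_inter h𝒜f hσ hHmem hG j
        have h2 : σ (H j) j = 1 := (hσ j).2 _ (hHmem j) subset_rfl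
        rw [h1, h2, mul_one]
      · have h1 : σ (G ∩ H i) j = 0 :=
          aux9_sigma_zero h𝒜f hσ hHmem hGH
            (Set.inter_subset_right.trans (aux9_disj_compl hH (Ne.symm hji)))
        have h2 : σ (H i) j = 0 :=
          aux9_sigma_zero h𝒜f hσ hHmem (hHmem i) (aux9_disj_compl hH (Ne.symm hji))
        rw [h1, h2, mul_zero]
    have : μ (G ∩ H i) = σ G i * μ (H i) := by
      rw [hμ]
      show L ⟨fE (G ∩ H i), hfE_mem _⟩ = σ G i * L ⟨fE (H i), hfE_mem _⟩
      rw [hkey, map_smul, smul_eq_mul]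
    rw [this, hμ𝒜L (H i) (h𝒜L.2.1 i)]
  -- value at F
  have hμF : μ F = c := by
    have heq : (⟨fE F, hfE_mem F⟩ : aux9Bdd ι) = ⟨fun i => σ F i, 1, hX⟩ :=
      Subtype.ext (hfEeq F hF)
    show L ⟨fE F, hfE_mem F⟩ = c
    rw [heq]
    exact hLX
  exact ⟨μ, hμFAP, hμ𝒜L, hμH, hμF⟩

end Aux9Mu

/-! ### Building a full conditional probability from a chain of measures -/

/-- minimum of a nonempty set with respect to a fixed well-ordering -/
noncomputable def aux9wmin {α : Type*} (S : Set α) (h : S.Nonempty) : α :=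
  (IsWellFounded.wf (r := (WellOrderingRel : α → α → Prop))).min S h

lemma aux9wmin_mem {α : Type*} (S : Set α) (h : S.Nonempty) : aux9wmin S h ∈ S :=
  WellFounded.min_mem _ S h

lemma aux9wmin_unique {α : Type*} {S S' : Set α} (hS : S.Nonempty) (hS' : S'.Nonempty)
    (h1 : aux9wmin S hS ∈ S') (h2 : aux9wmin S' hS' ∈ S) :
    aux9wmin S hS = aux9wmin S' hS' := by
  rcases trichotomous_of (WellOrderingRel : α → α → Prop)
      (aux9wmin S hS) (aux9wmin S' hS') with h | h | h
  · exact absurd h (WellFounded.not_lt_min _ S' h1)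
  · exact h
  · exact absurd h (WellFounded.not_lt_min _ S h2)

/-- the full conditional probability built from the joint `μ`, the strategy `σ` and
point masses -/
noncomputable def aux9P {ι : Type*} (H : ι → Set Ω) (σ : Set Ω → ι → ℝ)
    (μ : Set Ω → ℝ) : Set Ω → Set Ω → ℝ := fun E K =>
  if 0 < μ K then μ (E ∩ K) / μ K
  else if hB : ∃ i, 0 < σ K i then
    σ (E ∩ K) (aux9wmin {i | 0 < σ K i} hB) / σ K (aux9wmin {i | 0 < σ K i} hB)
  else if hK : K.Nonempty then (if aux9wmin K hK ∈ E ∩ K then 1 else 0)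
  else 0

section Aux9P

variable {ι : Type*} {H : ι → Set Ω} {𝒜L 𝒜 : Set (Set Ω)} {π : Set Ω → ℝ}
  {σ : Set Ω → ι → ℝ} {μ : Set Ω → ℝ}

set_option linter.unusedSectionVars false

lemma aux9P_def1 (E K : Set Ω) (h : 0 < μ K) :
    aux9P H σ μ E K = μ (E ∩ K) / μ K := by
  rw [aux9P, if_pos h]

lemma aux9P_def2 (E K : Set Ω) (h1 : ¬ 0 < μ K) (hB : ∃ i, 0 < σ K i) :
    aux9P H σ μ E K
      = σ (E ∩ K) (aux9wmin {i | 0 < σ K i} hB) / σ K (aux9wmin {i | 0 < σ K i} hB) := by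
  rw [aux9P, if_neg h1, dif_pos hB]

lemma aux9P_def3 (E K : Set Ω) (h1 : ¬ 0 < μ K) (h2 : ¬ ∃ i, 0 < σ K i)
    (hK : K.Nonempty) :
    aux9P H σ μ E K = if aux9wmin K hK ∈ E ∩ K then 1 else 0 := by
  rw [aux9P, if_neg h1, dif_neg h2, dif_pos hK]

/-- ratio of a finitely additive probability is a finitely additive probability -/
lemma aux9_ratio_FAP (hf : IsSetField 𝒜) {ν : Set Ω → ℝ} (hν : IsFAP 𝒜 ν)
    {K : Set Ω} (hK : K ∈ 𝒜) (hpos : 0 < ν K) :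
    IsFAP 𝒜 (fun E => ν (E ∩ K) / ν K) := by
  refine ⟨?_, ?_, ?_⟩
  · intro A hA
    have hAK : A ∩ K ∈ 𝒜 := aux9_field_inter hf hA hK
    constructor
    · exact div_nonneg (hν.1 _ hAK).1 hpos.le
    · rw [div_le_one hpos]
      exact aux9_fap_mono hf hν hAK hK Set.inter_subset_right
  · show ν (Set.univ ∩ K) / ν K = 1
    rw [Set.univ_inter, div_self hpos.ne']
  · intro A hA B hB hd
    have h1 : (A ∪ B) ∩ K = (A ∩ K) ∪ (B ∩ K) := Set.union_inter_distrib_right _ _ _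
    have h2 : ν ((A ∩ K) ∪ (B ∩ K)) = ν (A ∩ K) + ν (B ∩ K) :=
      hν.2.2 _ (aux9_field_inter hf hA hK) _ (aux9_field_inter hf hB hK)
        (hd.mono Set.inter_subset_left Set.inter_subset_left)
    show ν ((A ∪ B) ∩ K) / ν K = ν (A ∩ K) / ν K + ν (B ∩ K) / ν K
    rw [h1, h2, add_div]

/-- The Dirac conditional measure is a finitely additive probability. -/
lemma aux9_dirac_FAP (hf : IsSetField 𝒜) {K : Set Ω} {ω : Ω} (hω : ω ∈ K) :
    IsFAP 𝒜 (fun E => if ω ∈ E ∩ K then (1 : ℝ) else 0) := by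
  refine ⟨?_, ?_, ?_⟩
  · intro A _
    by_cases h : ω ∈ A ∩ K <;> simp [h]
  · simp [hω]
  · intro A _ B _ hd
    by_cases hA : ω ∈ A <;> by_cases hB : ω ∈ B
    · exact absurd (hd.le_bot (⟨hA, hB⟩ : ω ∈ A ⊓ B)) (by simp)
    · simp [Set.mem_inter_iff, hA, hB, hω]
    · simp [Set.mem_inter_iff, hA, hB, hω]
    · simp [Set.mem_inter_iff, hA, hB, hω]

/-- The constructed kernel is a full conditional probability extending `{π, σ}`. -/
lemma aux9P_spec [Nonempty Ω] (hH : IsPartition H) (h𝒜L : IsFieldOver H 𝒜L)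
    (h𝒜f : IsSetField 𝒜) (h𝒜LA : 𝒜L ⊆ 𝒜)
    (hπ : IsFAP 𝒜L π) (hσ : IsStrategy 𝒜 H σ)
    (hμFAP : IsFAP 𝒜 μ) (hμ𝒜L : ∀ B ∈ 𝒜L, μ B = π B)
    (hμH : ∀ G ∈ 𝒜, ∀ i, μ (G ∩ H i) = σ G i * π (H i)) :
    aux9P H σ μ ∈ FCPSet 𝒜 𝒜L H π σ ∧
      ∀ G, aux9P H σ μ G Set.univ = μ (G ∩ Set.univ) := by
  classical
  have hHmem : ∀ i, H i ∈ 𝒜 := fun i => h𝒜LA (h𝒜L.2.1 i)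
  have hμuniv1 : 0 < μ Set.univ := by rw [hμFAP.2.1]; norm_num
  have hPuniv : ∀ G, aux9P H σ μ G Set.univ = μ (G ∩ Set.univ) := by
    intro G
    rw [aux9P_def1 G Set.univ hμuniv1, hμFAP.2.1, div_one]
  have hμ0 : ∀ G ∈ 𝒜, 0 ≤ μ G := fun G hG => (hμFAP.1 G hG).1
  have hσ0 : ∀ G ∈ 𝒜, ∀ i, 0 ≤ σ G i := fun G hG i => ((hσ i).1.1 G hG).1
  -- C1
  have hC1 : ∀ E ∈ 𝒜, ∀ K ∈ 𝒜, K.Nonempty →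
      aux9P H σ μ E K = aux9P H σ μ (E ∩ K) K := by
    intro E _ K _ hKne
    have hset : E ∩ K ∩ K = E ∩ K := by rw [Set.inter_assoc, Set.inter_self]
    by_cases h1 : 0 < μ K
    · rw [aux9P_def1 E K h1, aux9P_def1 (E ∩ K) K h1, hset]
    by_cases hB : ∃ i, 0 < σ K i
    · rw [aux9P_def2 E K h1 hB, aux9P_def2 (E ∩ K) K h1 hB, hset]
    · rw [aux9P_def3 E K h1 hB hKne, aux9P_def3 (E ∩ K) K h1 hB hKne]
      simp only [hset]
  -- C2
  have hC2 : ∀ K ∈ 𝒜, K.Nonempty → IsFAP 𝒜 fun E => aux9P H σ μ E K := by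
    intro K hK hKne
    by_cases h1 : 0 < μ K
    · have : (fun E => aux9P H σ μ E K) = fun E => μ (E ∩ K) / μ K :=
        funext fun E => aux9P_def1 E K h1
      rw [this]
      exact aux9_ratio_FAP h𝒜f hμFAP hK h1
    by_cases hB : ∃ i, 0 < σ K i
    · have : (fun E => aux9P H σ μ E K)
          = fun E => σ (E ∩ K) (aux9wmin {i | 0 < σ K i} hB)
              / σ K (aux9wmin {i | 0 < σ K i} hB) :=
        funext fun E => aux9P_def2 E K h1 hB
      rw [this]
      exact aux9_ratio_FAP h𝒜f (hσ _).1 hK (aux9wmin_mem {i | 0 < σ K i} hB)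
    · have : (fun E => aux9P H σ μ E K)
          = fun E => if aux9wmin K hKne ∈ E ∩ K then (1 : ℝ) else 0 :=
        funext fun E => aux9P_def3 E K h1 hB hKne
      rw [this]
      exact aux9_dirac_FAP h𝒜f (aux9wmin_mem K hKne)
  -- C3
  have hC3 : ∀ E ∈ 𝒜, ∀ G ∈ 𝒜, ∀ K ∈ 𝒜, K.Nonempty → (E ∩ K).Nonempty →
      aux9P H σ μ (E ∩ G) K = aux9P H σ μ E K * aux9P H σ μ G (E ∩ K) := by
    intro E hE G hG K hK hKne hEKne
    have hEK𝒜 : E ∩ K ∈ 𝒜 := aux9_field_inter h𝒜f hE hK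
    have hEG𝒜 : E ∩ G ∈ 𝒜 := aux9_field_inter h𝒜f hE hG
    have hEGK𝒜 : E ∩ G ∩ K ∈ 𝒜 := aux9_field_inter h𝒜f hEG𝒜 hK
    have hs2 : G ∩ (E ∩ K) = E ∩ G ∩ K := by
      ext x; simp only [Set.mem_inter_iff]; tauto
    have hsub : E ∩ G ∩ K ⊆ E ∩ K := fun x hx => ⟨hx.1.1, hx.2⟩
    by_cases h1 : 0 < μ K
    · rw [aux9P_def1 (E ∩ G) K h1, aux9P_def1 E K h1]
      by_cases h2 : 0 < μ (E ∩ K)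
      · rw [aux9P_def1 G (E ∩ K) h2, hs2]
        field_simp
      · have hz : μ (E ∩ K) = 0 := le_antisymm (not_lt.mp h2) (hμ0 _ hEK𝒜)
        have hz2 : μ (E ∩ G ∩ K) = 0 :=
          le_antisymm (le_trans (aux9_fap_mono h𝒜f hμFAP hEGK𝒜 hEK𝒜 hsub) hz.le)
            (hμ0 _ hEGK𝒜)
        rw [hz, hz2]
        simp
    · have hμK : μ K = 0 := le_antisymm (not_lt.mp h1) (hμ0 _ hK)
      have hμEK : ¬ 0 < μ (E ∩ K) := by
        intro hcon
        have := aux9_fap_mono h𝒜f hμFAP hEK𝒜 hK Set.inter_subset_right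
        linarith
      by_cases hB : ∃ i, 0 < σ K i
      · rw [aux9P_def2 (E ∩ G) K h1 hB, aux9P_def2 E K h1 hB]
        set i₀ := aux9wmin {i | 0 < σ K i} hB with hi₀def
        by_cases h3 : 0 < σ (E ∩ K) i₀
        · have hB' : ∃ i, 0 < σ (E ∩ K) i := ⟨i₀, h3⟩
          rw [aux9P_def2 G (E ∩ K) hμEK hB']
          set i₁ := aux9wmin {i | 0 < σ (E ∩ K) i} hB' with hi₁def
          have hmem1 : i₁ ∈ {i | 0 < σ (E ∩ K) i} := aux9wmin_mem _ hB'
          have hmem1' : i₁ ∈ {i | 0 < σ K i} :=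
            lt_of_lt_of_le hmem1
              (aux9_fap_mono h𝒜f (hσ i₁).1 hEK𝒜 hK Set.inter_subset_right)
          have huniq : i₀ = i₁ := aux9wmin_unique hB hB' h3 hmem1'
          rw [← huniq, hs2]
          have hkpos : 0 < σ K i₀ := aux9wmin_mem {i | 0 < σ K i} hB
          field_simp
        · have hz : σ (E ∩ K) i₀ = 0 := le_antisymm (not_lt.mp h3) (hσ0 _ hEK𝒜 i₀)
          have hz2 : σ (E ∩ G ∩ K) i₀ = 0 :=
            le_antisymm
              (le_trans (aux9_fap_mono h𝒜f (hσ i₀).1 hEGK𝒜 hEK𝒜 hsub) hz.le)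
              (hσ0 _ hEGK𝒜 i₀)
          rw [hz, hz2]
          simp
      · have hBEK : ¬ ∃ i, 0 < σ (E ∩ K) i := by
          rintro ⟨i, hi⟩
          exact hB ⟨i, lt_of_lt_of_le hi
            (aux9_fap_mono h𝒜f (hσ i).1 hEK𝒜 hK Set.inter_subset_right)⟩
        rw [aux9P_def3 (E ∩ G) K h1 hB hKne, aux9P_def3 E K h1 hB hKne,
          aux9P_def3 G (E ∩ K) hμEK hBEK hEKne]
        set ω₀ := aux9wmin K hKne with hω₀def
        set ω₁ := aux9wmin (E ∩ K) hEKne with hω₁def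
        by_cases hωE : ω₀ ∈ E
        · have hmem0 : ω₀ ∈ E ∩ K := ⟨hωE, aux9wmin_mem K hKne⟩
          have huniq : ω₀ = ω₁ :=
            aux9wmin_unique hKne hEKne hmem0 (aux9wmin_mem (E ∩ K) hEKne).2
          rw [← huniq]
          rw [if_pos hmem0, one_mul]
          by_cases hg : ω₀ ∈ G ∩ (E ∩ K)
          · rw [if_pos hg, if_pos (by
              have : ω₀ ∈ E ∩ G ∩ K := hs2 ▸ hg
              exact this)]
          · rw [if_neg hg, if_neg (by
              intro hc
              exact hg (hs2.symm ▸ (hc : ω₀ ∈ E ∩ G ∩ K)))]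
        · have hnm : ω₀ ∉ E ∩ K := fun hc => hωE hc.1
          rw [if_neg hnm, zero_mul, if_neg (fun hc : ω₀ ∈ E ∩ G ∩ K => hωE hc.1.1)]
  -- extension of π
  have hExt1 : ∀ B ∈ 𝒜L, aux9P H σ μ B Set.univ = π B := by
    intro B hB
    rw [hPuniv, Set.inter_univ]
    exact hμ𝒜L B hB
  -- extension of σ
  have hExt2 : ∀ G ∈ 𝒜, ∀ i, aux9P H σ μ G (H i) = σ G i := by
    intro G hG i
    by_cases hpos : 0 < μ (H i)
    · rw [aux9P_def1 G (H i) hpos, hμH G hG i]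
      have hπH : μ (H i) = π (H i) := hμ𝒜L _ (h𝒜L.2.1 i)
      rw [hπH] at hpos ⊢
      rw [mul_div_assoc, div_self hpos.ne', mul_one]
    · have hB : ∃ j, 0 < σ (H i) j :=
        ⟨i, by rw [(hσ i).2 _ (hHmem i) subset_rfl]; norm_num⟩
      rw [aux9P_def2 G (H i) hpos hB]
      set j₀ := aux9wmin {j | 0 < σ (H i) j} hB with hj₀def
      have hj₀ : j₀ ∈ {j | 0 < σ (H i) j} := aux9wmin_mem _ hB
      have hji : j₀ = i := by
        by_contra hne
        have hz : σ (H i) j₀ = 0 :=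
          aux9_sigma_zero h𝒜f hσ hHmem (hHmem i) (aux9_disj_compl hH (Ne.symm hne))
        rw [Set.mem_setOf_eq, hz] at hj₀
        exact lt_irrefl 0 hj₀
      rw [hji, aux9_sigma_inter h𝒜f hσ hHmem hG i,
        (hσ i).2 _ (hHmem i) subset_rfl, div_one]
  -- extension of σ at all events
  have hExt2' : ∀ G ∈ 𝒜, ∀ i, aux9P H σ μ G (H i) = σ G i := hExt2
  refine ⟨⟨⟨hC1, hC2, hC3⟩, hExt1, ?_⟩, hPuniv⟩
  intro G hG i
  exact hExt2 G hG i

end Aux9P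

/-- the lower and upper Stieltjes integrals of `σ(F|·)` with respect to `π`
bound the lower and upper joint probabilities. -/
theorem statement9 {Ω ι κ : Type*} [Nonempty Ω] (H : ι → Set Ω) (E : κ → Set Ω)
    (𝒜L 𝒜E 𝒜 : Set (Set Ω))
    (hH : IsPartition H) (hE : IsPartition E)
    (h𝒜L : IsFieldOver H 𝒜L) (h𝒜E : IsFieldOver E 𝒜E)
    (h𝒜 : IsJointField H E 𝒜L 𝒜E 𝒜)
    (π : Set Ω → ℝ) (hπ : IsFAP 𝒜L π)
    (σ : Set Ω → ι → ℝ) (hσ : IsStrategy 𝒜 H σ)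
    (F : Set Ω) (hF : F ∈ 𝒜) :
    lowEnv (FCPSet 𝒜 𝒜L H π σ) F Set.univ ≤ lowerSInt H 𝒜L (fun i => σ F i) π ∧
    upperSInt H 𝒜L (fun i => σ F i) π ≤ upEnv (FCPSet 𝒜 𝒜L H π σ) F Set.univ := by
  classical
  have h𝒜f : IsSetField 𝒜 := h𝒜.1
  have h𝒜LA : 𝒜L ⊆ 𝒜 := h𝒜.2.1
  have hX : ∀ i, |σ F i| ≤ 1 := fun i =>
    abs_le.mpr ⟨by linarith [((hσ i).1.1 F hF).1], ((hσ i).1.1 F hF).2⟩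
  have hlowup : -aux9upInt H 𝒜L (fun i => -σ F i) π
      ≤ aux9upInt H 𝒜L (fun i => σ F i) π :=
    aux9_low_le_up (g := fun i => σ F i) h𝒜L hπ hX
  -- the conditional probability attaining the lower integral
  obtain ⟨μ1, hμ1FAP, hμ1L, hμ1H, hμ1F⟩ :=
    aux9_exists_mu hH h𝒜L h𝒜f h𝒜LA hπ hσ F hF
      (-aux9upInt H 𝒜L (fun i => -σ F i) π) le_rfl hlowup
  obtain ⟨hP1mem, hP1u⟩ := aux9P_spec hH h𝒜L h𝒜f h𝒜LA hπ hσ hμ1FAP hμ1L hμ1H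
  have hP1F : aux9P H σ μ1 F Set.univ = -aux9upInt H 𝒜L (fun i => -σ F i) π := by
    rw [hP1u F, Set.inter_univ, hμ1F]
  -- the conditional probability attaining the upper integral
  obtain ⟨μ2, hμ2FAP, hμ2L, hμ2H, hμ2F⟩ :=
    aux9_exists_mu hH h𝒜L h𝒜f h𝒜LA hπ hσ F hF
      (aux9upInt H 𝒜L (fun i => σ F i) π) hlowup le_rfl
  obtain ⟨hP2mem, hP2u⟩ := aux9P_spec hH h𝒜L h𝒜f h𝒜LA hπ hσ hμ2FAP hμ2L hμ2H
  have hP2F : aux9P H σ μ2 F Set.univ = aux9upInt H 𝒜L (fun i => σ F i) π := by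
    rw [hP2u F, Set.inter_univ, hμ2F]
  -- bounds on elements of the envelope image
  have hbdd : ∀ P' ∈ FCPSet 𝒜 𝒜L H π σ, 0 ≤ P' F Set.univ ∧ P' F Set.univ ≤ 1 := by
    intro P' hP'
    exact (hP'.1.2.1 Set.univ h𝒜f.1 Set.univ_nonempty).1 F hF
  have hBB : BddBelow ((fun P => P F Set.univ) '' FCPSet 𝒜 𝒜L H π σ) := by
    refine ⟨0, ?_⟩
    rintro y ⟨P', hP', rfl⟩
    exact (hbdd P' hP').1
  have hBA : BddAbove ((fun P => P F Set.univ) '' FCPSet 𝒜 𝒜L H π σ) := by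
    refine ⟨1, ?_⟩
    rintro y ⟨P', hP', rfl⟩
    exact (hbdd P' hP').2
  have e1 : lowerSInt H 𝒜L (fun i => σ F i) π
      = -aux9upInt H 𝒜L (fun i => -σ F i) π := by
    have := aux9_lowerSInt_eq (H := H) (𝒜L := 𝒜L) (π := π) (fun i => σ F i)
    simpa using this
  have e2 : upperSInt H 𝒜L (fun i => σ F i) π
      = aux9upInt H 𝒜L (fun i => σ F i) π := rfl
  constructor
  · rw [e1, ← hP1F]
    exact csInf_le hBB ⟨aux9P H σ μ1, hP1mem, rfl⟩
  · rw [e2, ← hP2F]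
    exact le_csSup hBA ⟨aux9P H σ μ2, hP2mem, rfl⟩
end
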